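/- arXiv:2510.19711 — 8 statements merged into one kernel-verified Lean document; each statement's English description precedes it below -/
import Mathlib

section
/- Let (X,T) be a topological dynamical system, μ a T-invariant Borel probability measure, ξ on the unit circle, and x ∈ X a generic point for μ. Suppose there exists a continuous f₀: X → ℂ and a strictly increasing sequence (n_k) such that (1/n_k) ∑_{j=0}^{n_k-1} ξ^{-j} f₀(T^j x) converges to some γ ≠ 0. Then ξ is an eigenvalue of the Koopman operator U_T on L²(X,μ), i.e., there exists a nonzero e ∈ L²(X,μ) with e∘T = ξ·e μ-almost everywhere. -/
set_option maxHeartbeats 1000000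


open Filter Finset MeasureTheory

local notation "⟪" x ", " y "⟫" => @inner ℂ _ _ x y

private lemma sum_shift_aux (ξ : ℂ) (hξ0 : ξ ≠ 0) (g : ℕ → ℂ) (n : ℕ) :
    ∑ j ∈ Finset.range n, ξ ^ (-(j:ℤ)) * g (j+1)
      = ξ * ((∑ j ∈ Finset.range n, ξ ^ (-(j:ℤ)) * g j) - g 0 + ξ ^ (-(n:ℤ)) * g n) := by
  have h1 : ∀ j : ℕ, ξ ^ (-(j:ℤ)) * g (j+1) = ξ * (ξ ^ (-((j+1:ℕ):ℤ)) * g (j+1)) := by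
    intro j
    have h : ξ ^ (-(j:ℤ)) = ξ * ξ ^ (-((j+1:ℕ):ℤ)) := by
      rw [← zpow_one_add₀ hξ0]
      congr 1
      push_cast
      ring
    rw [h]
    ring
  calc ∑ j ∈ Finset.range n, ξ ^ (-(j:ℤ)) * g (j+1)
      = ∑ j ∈ Finset.range n, ξ * (ξ ^ (-((j+1:ℕ):ℤ)) * g (j+1)) :=
        Finset.sum_congr rfl fun j _ => h1 j
    _ = ξ * ∑ j ∈ Finset.range n, ξ ^ (-((j+1:ℕ):ℤ)) * g (j+1) := by
        rw [Finset.mul_sum]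
    _ = _ := by
        congr 1
        have h2 := Finset.sum_range_succ' (fun i : ℕ => ξ ^ (-(i:ℤ)) * g i) n
        have h3 := Finset.sum_range_succ (fun i : ℕ => ξ ^ (-(i:ℤ)) * g i) n
        simp only [Nat.cast_zero, neg_zero, zpow_zero, one_mul] at h2 h3
        linear_combination h3 - h2

private lemma avg_sq_le_aux (n : ℕ) (hn : 1 ≤ n) (a : ℕ → ℝ) :
    ((n:ℝ)⁻¹ * ∑ j ∈ Finset.range n, a j)^2
      ≤ (n:ℝ)⁻¹ * ∑ j ∈ Finset.range n, (a j)^2 := by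
  have hn0 : (0:ℝ) < n := by exact_mod_cast hn
  have h := sq_sum_le_card_mul_sum_sq (s := Finset.range n) (f := a)
  rw [Finset.card_range] at h
  rw [mul_pow]
  have h2 : ((n:ℝ)⁻¹)^2 * (∑ j ∈ Finset.range n, a j)^2
      ≤ ((n:ℝ)⁻¹)^2 * ((n:ℝ) * ∑ j ∈ Finset.range n, (a j)^2) := by
    apply mul_le_mul_of_nonneg_left h (sq_nonneg _)
  refine h2.trans_eq ?_
  field_simp

/-- if some twisted Birkhoff average of a generic point has a nonzero
subsequential limit, then `ξ` is an eigenvalue of the Koopman operator. -/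
theorem stmt3 {X : Type*} [MetricSpace X] [CompactSpace X]
    [MeasurableSpace X] [BorelSpace X]
    (T : X ≃ₜ X)
    (μ : Measure X) [IsProbabilityMeasure μ] (hμ : Measure.map (⇑T) μ = μ)
    (ξ : ℂ) (hξ : ‖ξ‖ = 1) (x : X)
    (hgen : ∀ f : C(X, ℂ),
      Tendsto (fun n : ℕ => (n : ℂ)⁻¹ * ∑ j ∈ Finset.range n, f ((⇑T)^[j] x)) atTop
        (nhds (∫ y, f y ∂μ)))
    (f₀ : C(X, ℂ)) (nk : ℕ → ℕ) (hnk : StrictMono nk) (γ : ℂ) (hγ : γ ≠ 0)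
    (hconv : Tendsto
      (fun k : ℕ => ((nk k : ℂ))⁻¹ * ∑ j ∈ Finset.range (nk k), ξ ^ (-(j : ℤ)) * f₀ ((⇑T)^[j] x))
      atTop (nhds γ)) :
    ∃ e : X → ℂ, MemLp e 2 μ ∧ ¬ (e =ᵐ[μ] 0) ∧
      (fun y => e (T y)) =ᵐ[μ] (fun y => ξ * e y) := by
  classical
  have hξ0 : ξ ≠ 0 := by
    intro h
    rw [h] at hξ
    simp at hξ
  -- the twisted averages
  set A : ℕ → C(X,ℂ) → ℂ := fun n f =>
    (n : ℂ)⁻¹ * ∑ j ∈ Finset.range n, ξ ^ (-(j : ℤ)) * f ((⇑T)^[j] x) with hA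
  set U : Ultrafilter ℕ := Ultrafilter.of atTop with hU
  have hUle : (U : Filter ℕ) ≤ atTop := Ultrafilter.of_le _
  -- boundedness of the averages by the sup norm
  have habs : ∀ (n : ℕ) (f : C(X,ℂ)), ‖A n f‖ ≤ ‖f‖ := by
    intro n f
    rcases Nat.eq_zero_or_pos n with h0 | h1
    · simp [hA, h0, norm_nonneg]
    · have hn0 : (0:ℝ) < n := by exact_mod_cast h1
      have : ‖∑ j ∈ Finset.range n, ξ ^ (-(j : ℤ)) * f ((⇑T)^[j] x)‖ ≤ n * ‖f‖ := by
        calc ‖∑ j ∈ Finset.range n, ξ ^ (-(j : ℤ)) * f ((⇑T)^[j] x)‖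
            ≤ ∑ j ∈ Finset.range n, ‖ξ ^ (-(j : ℤ)) * f ((⇑T)^[j] x)‖ := norm_sum_le _ _
          _ ≤ ∑ j ∈ Finset.range n, ‖f‖ := by
              apply Finset.sum_le_sum
              intro j _
              rw [norm_mul, norm_zpow]
              have : ‖ξ‖ = 1 := hξ
              rw [this, one_zpow, one_mul]
              exact ContinuousMap.norm_coe_le_norm f _
          _ = n * ‖f‖ := by rw [Finset.sum_const, Finset.card_range, nsmul_eq_mul]
      calc ‖A n f‖ = (n:ℝ)⁻¹ * ‖∑ j ∈ Finset.range n, ξ ^ (-(j : ℤ)) * f ((⇑T)^[j] x)‖ := by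
            rw [hA]
            simp [norm_mul, abs_of_nonneg]
        _ ≤ (n:ℝ)⁻¹ * (n * ‖f‖) := by
            apply mul_le_mul_of_nonneg_left this (by positivity)
        _ = ‖f‖ := by field_simp
  -- existence of ultrafilter limits
  have key : ∀ f : C(X,ℂ), ∃ c : ℂ,
      Tendsto (fun k => A (nk k) f) (U : Filter ℕ) (nhds c) := by
    intro f
    have hc : IsCompact (Metric.closedBall (0:ℂ) ‖f‖) := isCompact_closedBall _ _
    have hle : (Ultrafilter.map (fun k => A (nk k) f) U : Filter ℂ)
        ≤ Filter.principal (Metric.closedBall (0:ℂ) ‖f‖) := by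
      rw [Filter.le_principal_iff]
      refine Filter.mem_map.2 ?_
      have : ∀ k, A (nk k) f ∈ Metric.closedBall (0:ℂ) ‖f‖ := by
        intro k
        rw [Metric.mem_closedBall, dist_zero_right]
        exact habs _ f
      exact Filter.univ_mem' this
    obtain ⟨c, _, hc2⟩ := hc.ultrafilter_le_nhds _ hle
    exact ⟨c, hc2⟩
  set Φ : C(X,ℂ) → ℂ := fun f => (key f).choose with hΦdef
  have hΦ : ∀ f : C(X,ℂ), Tendsto (fun k => A (nk k) f) (U : Filter ℕ) (nhds (Φ f)) :=
    fun f => (key f).choose_spec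
  -- linearity
  have hadd : ∀ f g : C(X,ℂ), Φ (f + g) = Φ f + Φ g := by
    intro f g
    refine tendsto_nhds_unique (hΦ (f+g)) ?_
    have h := (hΦ f).add (hΦ g)
    refine Tendsto.congr (fun k => ?_) h
    rw [hA]
    simp only [ContinuousMap.add_apply, mul_add, Finset.sum_add_distrib]
    try ring
  have hsmul : ∀ (c : ℂ) (f : C(X,ℂ)), Φ (c • f) = c * Φ f := by
    intro c f
    refine tendsto_nhds_unique (hΦ (c • f)) ?_
    have h := (hΦ f).const_mul c
    refine Tendsto.congr (fun k => ?_) h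
    rw [hA]
    simp only [ContinuousMap.smul_apply, smul_eq_mul]
    rw [show (∑ j ∈ Finset.range (nk k), ξ ^ (-(j:ℤ)) * (c * f ((⇑T)^[j] x)))
        = c * ∑ j ∈ Finset.range (nk k), ξ ^ (-(j:ℤ)) * f ((⇑T)^[j] x) by
      rw [Finset.mul_sum]
      exact Finset.sum_congr rfl fun j _ => by ring]
    ring
  -- value at f₀
  have hΦf₀ : Φ f₀ = γ := tendsto_nhds_unique (hΦ f₀) (hconv.mono_left hUle)
  -- the L² map
  have hTmeas : Measurable (⇑T) := T.continuous.measurable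
  haveI : (μ : Measure X).WeaklyRegular := by infer_instance
  set Tmap : C(X,ℂ) →L[ℂ] Lp ℂ 2 μ := ContinuousMap.toLp 2 μ ℂ with hTmap
  -- the L² bound on Φ
  have hbound : ∀ f : C(X,ℂ), ‖Φ f‖ ≤ ‖Tmap f‖ := by
    intro f
    set g : C(X,ℂ) := ⟨fun y => (((‖f y‖)^2 : ℝ) : ℂ),
      Complex.continuous_ofReal.comp ((continuous_norm.comp f.continuous).pow 2)⟩ with hg
    have hgen2 := hgen g
    set r : ℕ → ℝ := fun n =>
      (n:ℝ)⁻¹ * ∑ j ∈ Finset.range n, (‖f ((⇑T)^[j] x)‖)^2 with hr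
    have hcast : ∀ n : ℕ, (n:ℂ)⁻¹ * ∑ j ∈ Finset.range n, g ((⇑T)^[j] x) = ((r n : ℝ) : ℂ) := by
      intro n
      simp only [hg, ContinuousMap.coe_mk, hr]
      push_cast
      ring
    set I : ℝ := ∫ y, (‖f y‖)^2 ∂μ with hI
    have hint : ∫ y, g y ∂μ = (I : ℂ) := by
      simp only [hg, ContinuousMap.coe_mk, hI]
      exact integral_ofReal
    have hrI : Tendsto r atTop (nhds I) := by
      have h1 : Tendsto (fun n => ((r n : ℝ) : ℂ)) atTop (nhds (I : ℂ)) := by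
        rw [← hint]
        exact Tendsto.congr hcast hgen2
      have h2 := (Complex.continuous_re.tendsto _).comp h1
      simpa [Function.comp_def] using h2
    have hrU : Tendsto (fun k => r (nk k)) (U : Filter ℕ) (nhds I) :=
      (hrI.comp hnk.tendsto_atTop).mono_left hUle
    have hnormU : Tendsto (fun k => ‖A (nk k) f‖^2) (U : Filter ℕ) (nhds (‖Φ f‖^2)) :=
      ((continuous_norm.tendsto _).comp (hΦ f)).pow 2
    have hptwise : ∀ n : ℕ, 1 ≤ n → ‖A n f‖^2 ≤ r n := by
      intro n hn
      have h1 : ‖A n f‖ ≤ (n:ℝ)⁻¹ * ∑ j ∈ Finset.range n, ‖f ((⇑T)^[j] x)‖ := by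
        calc ‖A n f‖ = (n:ℝ)⁻¹ * ‖∑ j ∈ Finset.range n, ξ ^ (-(j:ℤ)) * f ((⇑T)^[j] x)‖ := by
              rw [hA]; simp [norm_mul]
          _ ≤ (n:ℝ)⁻¹ * ∑ j ∈ Finset.range n, ‖f ((⇑T)^[j] x)‖ := by
              refine mul_le_mul_of_nonneg_left ?_ (by positivity)
              refine (norm_sum_le _ _).trans ?_
              refine Finset.sum_le_sum fun j _ => ?_
              rw [norm_mul, norm_zpow, show ‖ξ‖ = 1 from hξ, one_zpow, one_mul]
      have h2 := avg_sq_le_aux n hn (fun j => ‖f ((⇑T)^[j] x)‖)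
      have h3 := pow_le_pow_left₀ (norm_nonneg (A n f)) h1 2
      exact h3.trans h2
    have hev : ∀ᶠ k in (U : Filter ℕ), ‖A (nk k) f‖^2 ≤ r (nk k) := by
      refine Filter.Eventually.filter_mono hUle ?_
      refine eventually_atTop.2 ⟨1, fun k hk => ?_⟩
      exact hptwise _ (le_trans hk hnk.le_apply)
    have hle2 : ‖Φ f‖^2 ≤ I := le_of_tendsto_of_tendsto hnormU hrU hev
    have hTnorm : ‖Tmap f‖^2 = I := by
      have h1 : (⟪Tmap f, Tmap f⟫ : ℂ) = (I:ℂ) := by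
        rw [MeasureTheory.L2.inner_def]
        have hcoe := ContinuousMap.coeFn_toLp (p := 2) μ (𝕜 := ℂ) f
        have hae : ∀ᵐ y ∂μ, (⟪(Tmap f : X → ℂ) y, (Tmap f : X → ℂ) y⟫ : ℂ)
            = ((‖f y‖ ^ 2 : ℝ) : ℂ) := by
          filter_upwards [hcoe] with y hy
          rw [hy, RCLike.inner_apply, Complex.mul_conj, Complex.normSq_eq_norm_sq]
        rw [integral_congr_ae hae, hI]
        exact integral_ofReal
      have h2 : RCLike.re (⟪Tmap f, Tmap f⟫ : ℂ) = ‖Tmap f‖^2 := inner_self_eq_norm_sq _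
      rw [h1] at h2
      simpa using h2.symm
    nlinarith [norm_nonneg (Φ f), norm_nonneg (Tmap f), hle2, hTnorm]
  -- descend and extend to a functional on L²
  let Φₗ : C(X,ℂ) →ₗ[ℂ] ℂ :=
    { toFun := Φ, map_add' := hadd,
      map_smul' := by intro c f; simpa using hsmul c f }
  have hΦₗ : ∀ f, Φₗ f = Φ f := fun f => rfl
  have hker : LinearMap.ker (Tmap : C(X,ℂ) →ₗ[ℂ] Lp ℂ 2 μ) ≤ LinearMap.ker Φₗ := by
    intro f hf
    have h0 : Tmap f = 0 := hf
    have h1 := hbound f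
    rw [h0, norm_zero] at h1
    have h2 : ‖Φ f‖ = 0 := le_antisymm h1 (norm_nonneg _)
    simpa [LinearMap.mem_ker, hΦₗ, norm_eq_zero] using h2
  -- descend to the range of Tmap
  set S : Submodule ℂ (Lp ℂ 2 μ) := LinearMap.range (Tmap : C(X,ℂ) →ₗ[ℂ] Lp ℂ 2 μ) with hS
  set ψq : C(X,ℂ) ⧸ LinearMap.ker (Tmap : C(X,ℂ) →ₗ[ℂ] Lp ℂ 2 μ) →ₗ[ℂ] ℂ :=
    (LinearMap.ker (Tmap : C(X,ℂ) →ₗ[ℂ] Lp ℂ 2 μ)).liftQ Φₗ hker with hψq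
  set eqv := LinearMap.quotKerEquivRange (Tmap : C(X,ℂ) →ₗ[ℂ] Lp ℂ 2 μ) with heqv
  set ψ₁ₗ : S →ₗ[ℂ] ℂ := ψq.comp eqv.symm.toLinearMap with hψ₁ₗ
  have hmemS : ∀ f : C(X,ℂ), Tmap f ∈ S := by
    intro f
    exact ⟨f, rfl⟩
  have hψ₁val : ∀ f : C(X,ℂ), ψ₁ₗ ⟨Tmap f, hmemS f⟩ = Φ f := by
    intro f
    have h := LinearMap.quotKerEquivRange_symm_apply_image
      (f := (Tmap : C(X,ℂ) →ₗ[ℂ] Lp ℂ 2 μ)) f (hmemS f)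
    have h2 : eqv.symm ⟨Tmap f, hmemS f⟩
        = (LinearMap.ker ((Tmap : C(X,ℂ) →ₗ[ℂ] Lp ℂ 2 μ))).mkQ f := h
    rw [hψ₁ₗ, LinearMap.comp_apply, LinearEquiv.coe_toLinearMap, h2, Submodule.mkQ_apply, hψq,
      Submodule.liftQ_apply]
    rfl
  have hψ₁b : ∀ z : S, ‖ψ₁ₗ z‖ ≤ 1 * ‖z‖ := by
    rintro ⟨z, hz⟩
    obtain ⟨f, rfl⟩ := hz
    rw [one_mul]
    have h1 : ψ₁ₗ ⟨Tmap f, hmemS f⟩ = Φ f := hψ₁val f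
    have h2 : ‖(⟨Tmap f, hmemS f⟩ : S)‖ = ‖Tmap f‖ := rfl
    calc ‖ψ₁ₗ ⟨Tmap f, hmemS f⟩‖ = ‖Φ f‖ := by rw [h1]
      _ ≤ ‖Tmap f‖ := hbound f
      _ = ‖(⟨Tmap f, hmemS f⟩ : S)‖ := h2.symm
  set ψ₁ : S →L[ℂ] ℂ := LinearMap.mkContinuous ψ₁ₗ 1 hψ₁b with hψ₁
  obtain ⟨ψ, hψext, -⟩ := exists_extension_norm_eq (𝕜 := ℂ) S ψ₁
  have hψ : ∀ f : C(X,ℂ), ψ (Tmap f) = Φ f := by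
    intro f
    have h := hψext ⟨Tmap f, hmemS f⟩
    rw [show ((⟨Tmap f, hmemS f⟩ : S) : Lp ℂ 2 μ) = Tmap f from rfl] at h
    rw [h, hψ₁, LinearMap.mkContinuous_apply, hψ₁val f]
  -- Riesz representation
  set e₀ : Lp ℂ 2 μ := (InnerProductSpace.toDual ℂ (Lp ℂ 2 μ)).symm ψ with he₀
  have hinner : ∀ u : Lp ℂ 2 μ, ⟪e₀, u⟫ = ψ u := fun u =>
    InnerProductSpace.toDual_symm_apply
  -- the shift identity for twisted averages
  have hAshift : ∀ (f : C(X,ℂ)) (n : ℕ),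
      A n (f.comp (T : C(X, X))) = ξ * A n f
        + (n:ℂ)⁻¹ * (ξ * (ξ ^ (-(n:ℤ)) * f ((⇑T)^[n] x) - f ((⇑T)^[0] x))) := by
    intro f n
    rw [hA]
    simp only []
    have hsum : ∑ j ∈ Finset.range n, ξ ^ (-(j:ℤ)) * (f.comp (T : C(X, X))) ((⇑T)^[j] x)
        = ∑ j ∈ Finset.range n, ξ ^ (-(j:ℤ)) * f ((⇑T)^[j+1] x) := by
      refine Finset.sum_congr rfl fun j _ => ?_
      congr 1
      simp [Function.iterate_succ_apply']
    rw [hsum, sum_shift_aux ξ hξ0 (fun i => f ((⇑T)^[i] x)) n]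
    ring
  -- eigen-relation for Φ
  have hshift : ∀ f : C(X,ℂ), Φ (f.comp (T : C(X, X))) = ξ * Φ f := by
    intro f
    refine tendsto_nhds_unique (hΦ _) ?_
    have herr : Tendsto
        (fun k => ((nk k : ℕ):ℂ)⁻¹ * (ξ * (ξ ^ (-(nk k:ℤ)) * f ((⇑T)^[nk k] x) - f ((⇑T)^[0] x))))
        (U : Filter ℕ) (nhds 0) := by
      have hb : ∀ k : ℕ, ‖((nk k : ℕ):ℂ)⁻¹
          * (ξ * (ξ ^ (-(nk k:ℤ)) * f ((⇑T)^[nk k] x) - f ((⇑T)^[0] x)))‖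
          ≤ ((nk k : ℕ):ℝ)⁻¹ * (2 * ‖f‖) := by
        intro k
        rw [norm_mul]
        have h1 : ‖((nk k : ℕ):ℂ)⁻¹‖ = ((nk k : ℕ):ℝ)⁻¹ := by
          rw [norm_inv, Complex.norm_natCast]
        rw [h1]
        refine mul_le_mul_of_nonneg_left ?_ (by positivity)
        rw [norm_mul, show ‖ξ‖ = 1 from hξ, one_mul]
        refine (norm_sub_le _ _).trans ?_
        have h2 : ‖ξ ^ (-(nk k:ℤ)) * f ((⇑T)^[nk k] x)‖ ≤ ‖f‖ := by
          rw [norm_mul, norm_zpow, show ‖ξ‖ = 1 from hξ, one_zpow, one_mul]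
          exact ContinuousMap.norm_coe_le_norm f _
        have h3 : ‖f ((⇑T)^[0] x)‖ ≤ ‖f‖ := ContinuousMap.norm_coe_le_norm f _
        linarith
      refine squeeze_zero_norm hb ?_
      have h4 : Tendsto (fun k => ((nk k : ℕ):ℝ)⁻¹) atTop (nhds 0) :=
        tendsto_inv_atTop_nhds_zero_nat.comp hnk.tendsto_atTop
      have h5 := h4.mul_const (2 * ‖f‖)
      rw [zero_mul] at h5
      exact h5.mono_left hUle
    have h2 := ((hΦ f).const_mul ξ).add herr
    rw [add_zero] at h2
    exact h2.congr (fun k => (hAshift f (nk k)).symm)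
  -- measure-theoretic change of variables
  have mpT : MeasurePreserving (⇑T) μ μ := ⟨hTmeas, hμ⟩
  have hμsymm : Measure.map (⇑T.symm) μ = μ := by
    have h1 : Measure.map (⇑T.symm) (Measure.map (⇑T) μ) = μ := by
      rw [Measure.map_map T.symm.continuous.measurable hTmeas]
      rw [show (⇑T.symm ∘ ⇑T) = id from funext fun y => T.symm_apply_apply y, Measure.map_id]
    rw [hμ] at h1
    exact h1
  have mpTsymm : MeasurePreserving (⇑T.symm) μ μ := ⟨T.symm.continuous.measurable, hμsymm⟩
  have hv : MemLp ((e₀ : X → ℂ) ∘ (⇑T.symm)) 2 μ :=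
    (Lp.memLp e₀).comp_measurePreserving mpTsymm
  set V : Lp ℂ 2 μ := hv.toLp _ with hV
  have hVcoe : (V : X → ℂ) =ᵐ[μ] (e₀ : X → ℂ) ∘ (⇑T.symm) := MemLp.coeFn_toLp hv
  have hVinner : ∀ f : C(X,ℂ), ⟪V, Tmap f⟫ = ⟪e₀, Tmap (f.comp (T : C(X, X)))⟫ := by
    intro f
    rw [MeasureTheory.L2.inner_def, MeasureTheory.L2.inner_def]
    have hc1 := ContinuousMap.coeFn_toLp (p := 2) μ (𝕜 := ℂ) f
    have hc2 := ContinuousMap.coeFn_toLp (p := 2) μ (𝕜 := ℂ) (f.comp (T : C(X, X)))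
    have hL : ∫ y, (⟪(V : X → ℂ) y, (Tmap f : X → ℂ) y⟫ : ℂ) ∂μ
        = ∫ y, (⟪(e₀ : X → ℂ) (T.symm y), f y⟫ : ℂ) ∂μ := by
      refine integral_congr_ae ?_
      filter_upwards [hVcoe, hc1] with y h1 h2
      rw [h1, h2]
      rfl
    have hR : ∫ y, (⟪(e₀ : X → ℂ) y, (Tmap (f.comp (T : C(X, X))) : X → ℂ) y⟫ : ℂ) ∂μ
        = ∫ y, (⟪(e₀ : X → ℂ) y, f (T y)⟫ : ℂ) ∂μ := by
      refine integral_congr_ae ?_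
      filter_upwards [hc2] with y h2
      rw [h2]
      simp
    rw [hL, hR]
    have hcv := mpT.integral_comp T.measurableEmbedding
      (fun y => (⟪(e₀ : X → ℂ) (T.symm y), f y⟫ : ℂ))
    rw [← hcv]
    refine integral_congr_ae (Filter.Eventually.of_forall fun z => ?_)
    simp
  -- the eigen-equation in L²
  set Z : Lp ℂ 2 μ := V - (starRingEnd ℂ ξ) • e₀ with hZ
  have hZinner : ∀ f : C(X,ℂ), ⟪Z, Tmap f⟫ = 0 := by
    intro f
    rw [hZ, inner_sub_left, inner_smul_left, starRingEnd_self_apply,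
      hVinner f, hinner, hinner, hψ, hψ, hshift f]
    ring
  have hdense : DenseRange (Tmap : C(X,ℂ) → Lp ℂ 2 μ) := by
    exact ContinuousMap.toLp_denseRange (𝕜 := ℂ) (E := ℂ) (μ := μ) (p := 2)
      (by norm_num)
  have hZzero : Z = 0 := by
    have hall : ∀ u : Lp ℂ 2 μ, ⟪Z, u⟫ = 0 := by
      intro u
      have hclosed : IsClosed {u : Lp ℂ 2 μ | (⟪Z, u⟫ : ℂ) = 0} :=
        isClosed_eq (innerSL ℂ Z).continuous continuous_const
      have hsub : Set.range (Tmap : C(X,ℂ) → Lp ℂ 2 μ) ⊆ {u | (⟪Z, u⟫ : ℂ) = 0} := by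
        rintro _ ⟨f, rfl⟩
        exact hZinner f
      have hcl := hclosed.closure_subset_iff.2 hsub
      rw [hdense.closure_eq] at hcl
      exact hcl (Set.mem_univ u)
    exact inner_self_eq_zero.1 (hall Z)
  -- translate back to a.e. statements
  have h1 : (V : X → ℂ) =ᵐ[μ] (((starRingEnd ℂ ξ) • e₀ : Lp ℂ 2 μ) : X → ℂ) := by
    have : V = (starRingEnd ℂ ξ) • e₀ := by
      have := sub_eq_zero.1 hZzero
      exact this
    rw [this]
  have h2 : (((starRingEnd ℂ ξ) • e₀ : Lp ℂ 2 μ) : X → ℂ)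
      =ᵐ[μ] fun y => (starRingEnd ℂ ξ) * (e₀ : X → ℂ) y := by
    filter_upwards [Lp.coeFn_smul (starRingEnd ℂ ξ) e₀] with y hy
    rw [hy]
    rfl
  have hae1 : ((e₀ : X → ℂ) ∘ (⇑T.symm))
      =ᵐ[μ] fun y => (starRingEnd ℂ ξ) * (e₀ : X → ℂ) y :=
    hVcoe.symm.trans (h1.trans h2)
  have hae1' : ((e₀ : X → ℂ) ∘ (⇑T.symm))
      =ᵐ[Measure.map (⇑T) μ] fun y => (starRingEnd ℂ ξ) * (e₀ : X → ℂ) y := by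
    rw [hμ]
    exact hae1
  have hae2 := ae_eq_comp hTmeas.aemeasurable hae1'
  have hae3 : (fun z => (e₀ : X → ℂ) z)
      =ᵐ[μ] fun z => (starRingEnd ℂ ξ) * (e₀ : X → ℂ) (T z) := by
    have hl : ((e₀ : X → ℂ) ∘ (⇑T.symm)) ∘ (⇑T) = fun z => (e₀ : X → ℂ) z := by
      funext z
      simp
    rw [hl] at hae2
    exact hae2
  -- conclusion
  refine ⟨(e₀ : X → ℂ), Lp.memLp e₀, ?_, ?_⟩
  · intro hcon
    have hz : ⟪e₀, Tmap f₀⟫ = (0:ℂ) := by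
      rw [MeasureTheory.L2.inner_def]
      have hae : ∀ᵐ y ∂μ, (⟪(e₀ : X → ℂ) y, (Tmap f₀ : X → ℂ) y⟫ : ℂ) = (0:ℂ) := by
        filter_upwards [hcon] with y hy
        have : (e₀ : X → ℂ) y = 0 := hy
        rw [this]
        simp
      rw [integral_congr_ae hae, integral_zero]
    rw [hinner, hψ, hΦf₀] at hz
    exact hγ hz
  · have hmc : ξ * (starRingEnd ℂ ξ) = 1 := by
      rw [Complex.mul_conj, Complex.normSq_eq_norm_sq, hξ]
      norm_num
    filter_upwards [hae3] with y hy
    calc (e₀ : X → ℂ) (T y) = (ξ * starRingEnd ℂ ξ) * (e₀ : X → ℂ) (T y) := by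
          rw [hmc, one_mul]
      _ = ξ * ((starRingEnd ℂ ξ) * (e₀ : X → ℂ) (T y)) := by ring
      _ = ξ * (e₀ : X → ℂ) y := by rw [← hy]
end

section
/- Let (X,T,μ) be an ergodic measure-preserving system. If x ∈ X is a μ-generic point and ξ ∈ 𝕊¹ is not an eigenvalue of the Koopman operator U_T on L²(X,μ), then for every continuous f: X → ℂ the averages (1/n) ∑_{j=0}^{n-1} ξ^{-j} f(T^j x) converge to 0 as n → ∞. -/
set_option maxHeartbeats 1000000
set_option synthInstance.maxHeartbeats 400000

open Filter Finset MeasureTheory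

private lemma lp_coeFn_sum_range {X : Type*} [MeasurableSpace X] {μ : Measure X}
    (G : ℕ → Lp ℂ 2 μ) (n : ℕ) :
    ⇑(∑ k ∈ Finset.range n, G k) =ᵐ[μ] fun y => ∑ k ∈ Finset.range n, G k y := by
  induction n with
  | zero =>
    simp only [Finset.range_zero, Finset.sum_empty]
    exact Lp.coeFn_zero ℂ 2 μ
  | succ n ih =>
    filter_upwards [Lp.coeFn_add (∑ k ∈ Finset.range n, G k) (G n), ih] with y h1 h2
    simp only [Finset.sum_range_succ]
    rw [h1]
    simp only [Pi.add_apply, h2]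

/-- for an ergodic system, if `ξ` is not an eigenvalue of the
Koopman operator, then the twisted Birkhoff averages along any generic point
converge to `0` for every continuous function. -/
theorem stmt4 {X : Type*} [MetricSpace X] [CompactSpace X]
    [MeasurableSpace X] [BorelSpace X]
    (T : X ≃ₜ X)
    (μ : Measure X) [IsProbabilityMeasure μ] (herg : Ergodic (⇑T) μ)
    (x : X)
    (hgen : ∀ f : C(X, ℂ),
      Tendsto (fun n : ℕ => (n : ℂ)⁻¹ * ∑ j ∈ Finset.range n, f ((⇑T)^[j] x)) atTop
        (nhds (∫ y, f y ∂μ)))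
    (ξ : ℂ) (hξ : ‖ξ‖ = 1)
    (hnoteig : ¬ ∃ e : X → ℂ, MemLp e 2 μ ∧ ¬ (e =ᵐ[μ] 0) ∧
      (fun y => e (T y)) =ᵐ[μ] (fun y => ξ * e y)) :
    ∀ f : C(X, ℂ),
      Tendsto (fun n : ℕ => (n : ℂ)⁻¹ * ∑ j ∈ Finset.range n, ξ ^ (-(j : ℤ)) * f ((⇑T)^[j] x))
        atTop (nhds 0) := by
  intro f
  have hmp : MeasurePreserving (⇑T) μ μ := herg.toMeasurePreserving
  have hξ0 : ξ ≠ 0 := by intro h; simp [h] at hξ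
  have hξn : ‖ξ‖ = 1 := hξ
  have hf2 : MemLp (⇑f) 2 μ :=
    MemLp.of_bound f.continuous.aestronglyMeasurable ‖f‖
      (Eventually.of_forall fun y => f.norm_coe_le_norm y)
  set F₀ : Lp ℂ 2 μ := hf2.toLp ⇑f with hF₀
  set K : Lp ℂ 2 μ →L[ℂ] Lp ℂ 2 μ :=
    (Lp.compMeasurePreservingₗᵢ ℂ (⇑T) hmp).toContinuousLinearMap with hK
  set V : Lp ℂ 2 μ →L[ℂ] Lp ℂ 2 μ := ξ⁻¹ • K with hV
  have hKapp : ∀ G : Lp ℂ 2 μ, K G = Lp.compMeasurePreserving (⇑T) hmp G := fun G => rfl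
  have hVnorm : ‖V‖ ≤ 1 := by
    apply ContinuousLinearMap.opNorm_le_bound _ zero_le_one
    intro G
    rw [hV]
    simp only [ContinuousLinearMap.smul_apply, norm_smul, hKapp,
      Lp.norm_compMeasurePreserving, one_mul]
    rw [norm_inv, hξn]
    simp
  have hVcoe : ∀ G : Lp ℂ 2 μ, ⇑(V G) =ᵐ[μ] fun y => ξ⁻¹ * G (T y) := by
    intro G
    have h1 : ⇑(V G) =ᵐ[μ] ξ⁻¹ • ⇑(K G) := by
      rw [hV]; exact Lp.coeFn_smul ξ⁻¹ (K G)
    have h2 : ⇑(K G) =ᵐ[μ] fun y => G (T y) := by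
      rw [hKapp]; exact Lp.coeFn_compMeasurePreserving G hmp
    filter_upwards [h1, h2] with y hy1 hy2
    simp [hy1, hy2]
  -- iterates of V
  have hIter : ∀ h : ℕ, ⇑((⇑V)^[h] F₀) =ᵐ[μ] fun y => ξ ^ (-(h : ℤ)) * f ((⇑T)^[h] y) := by
    intro h
    induction h with
    | zero => simpa using hf2.coeFn_toLp
    | succ h ih =>
      rw [Function.iterate_succ_apply']
      have hcomp : (fun y => ((⇑V)^[h] F₀ : Lp ℂ 2 μ) (T y)) =ᵐ[μ]
          fun y => ξ ^ (-(h : ℤ)) * f ((⇑T)^[h] (T y)) := by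
        have := hmp.quasiMeasurePreserving.ae_eq_comp ih
        exact this
      filter_upwards [hVcoe ((⇑V)^[h] F₀), hcomp] with y hy1 hy2
      rw [hy1, hy2, ← Function.iterate_succ_apply]
      have hz : (-(↑(h + 1) : ℤ)) = (-1) + (-(h : ℤ)) := by push_cast; ring
      rw [hz, zpow_add₀ hξ0, zpow_neg_one, mul_assoc]
  -- the mean ergodic limit
  have hMET : Tendsto (fun H => birkhoffAverage ℂ (⇑V) _root_.id H F₀) atTop (nhds 0) := by
    have heq : V.eqLocus (1 : Lp ℂ 2 μ →L[ℂ] Lp ℂ 2 μ) = ⊥ := by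
      rw [Submodule.eq_bot_iff]
      intro G hG
      have hVG : V G = G := hG
      by_contra hne
      apply hnoteig
      refine ⟨⇑G, Lp.memLp G, ?_, ?_⟩
      · intro h0
        exact hne ((Lp.eq_zero_iff_ae_eq_zero (f := G)).mpr h0)
      · have h1 : ⇑(V G) =ᵐ[μ] ⇑G := by rw [hVG]
        filter_upwards [(hVcoe G).symm.trans h1] with y hy
        have : ξ * (ξ⁻¹ * G (T y)) = ξ * G y := by rw [hy]
        rwa [← mul_assoc, mul_inv_cancel₀ hξ0, one_mul] at this
    have hmet := V.tendsto_birkhoffAverage_orthogonalProjection hVnorm F₀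
    convert hmet using 2
    exact ((Submodule.eq_bot_iff _).mp heq _
      ((V.eqLocus (1 : Lp ℂ 2 μ →L[ℂ] Lp ℂ 2 μ)).orthogonalProjectionOnto F₀).2).symm
  set B : ℕ → Lp ℂ 2 μ := fun H => birkhoffAverage ℂ (⇑V) _root_.id H F₀ with hBdef
  -- coe of the Birkhoff average
  have hBcoe : ∀ H : ℕ, ⇑(B H) =ᵐ[μ]
      fun y => (H : ℂ)⁻¹ * ∑ h ∈ Finset.range H, ξ ^ (-(h : ℤ)) * f ((⇑T)^[h] y) := by
    intro H
    have h1 : ⇑(B H) =ᵐ[μ] (H : ℂ)⁻¹ • ⇑(∑ h ∈ Finset.range H, (⇑V)^[h] F₀) := by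
      rw [hBdef]
      simp only [birkhoffAverage, birkhoffSum, _root_.id]
      exact Lp.coeFn_smul _ _
    have h2 := lp_coeFn_sum_range (fun h => (⇑V)^[h] F₀) H
    have h3 : ∀ᵐ y ∂μ, ∀ h ∈ Finset.range H,
        ((⇑V)^[h] F₀ : Lp ℂ 2 μ) y = ξ ^ (-(h : ℤ)) * f ((⇑T)^[h] y) := by
      rw [Filter.eventually_all_finset]
      intro h _
      exact hIter h
    filter_upwards [h1, h2, h3] with y hy1 hy2 hy3
    rw [hy1]
    simp only [Pi.smul_apply, smul_eq_mul, hy2]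
    congr 1
    exact Finset.sum_congr rfl fun h hh => hy3 h hh
  -- setup for the main estimate
  set M : ℝ := ‖f‖ with hM
  have hM0 : 0 ≤ M := norm_nonneg f
  set u : ℕ → ℂ := fun j => ξ ^ (-(j : ℤ)) * f ((⇑T)^[j] x) with hu
  have hub : ∀ j, ‖u j‖ ≤ M := by
    intro j
    simp only [hu]
    rw [norm_mul, norm_zpow, hξn, one_zpow, one_mul]
    exact f.norm_coe_le_norm _
  rw [NormedAddCommGroup.tendsto_nhds_zero]
  intro ε hε
  have hε4 : (0:ℝ) < ε/4 := by linarith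
  have hMETn : Tendsto (fun H => ‖B H‖) atTop (nhds 0) := by simpa using hMET.norm
  obtain ⟨H, hHB, hH1⟩ :=
    ((hMETn.eventually_lt_const hε4).and (eventually_ge_atTop 1)).exists
  have hHne : (H:ℝ) ≠ 0 := Nat.cast_ne_zero.mpr (by omega)
  have hHCne : (H:ℂ) ≠ 0 := Nat.cast_ne_zero.mpr (by omega)
  have hgB := hBcoe H
  set g : X → ℂ := fun y => (H : ℂ)⁻¹ * ∑ h ∈ Finset.range H, ξ ^ (-(h : ℤ)) * f ((⇑T)^[h] y)
    with hgdef
  have hgc : Continuous g := by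
    apply continuous_const.mul
    exact continuous_finset_sum _ fun h _ =>
      continuous_const.mul (f.continuous.comp (T.continuous.iterate h))
  set Gm : C(X, ℂ) := ⟨fun y => (starRingEnd ℂ) (g y) * g y,
    (Complex.continuous_conj.comp hgc).mul hgc⟩ with hGmdef
  have hGmval : ∀ y, Gm y = ((‖g y‖ ^ 2 : ℝ) : ℂ) := by
    intro y
    show (starRingEnd ℂ) (g y) * g y = _
    rw [mul_comm, Complex.mul_conj]
    exact congrArg _ (by rw [Complex.normSq_eq_norm_sq])
  have h3 : (inner ℂ (B H) (B H) : ℂ) = ((‖B H‖ : ℝ) : ℂ) ^ 2 :=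
    inner_self_eq_norm_sq_to_K (B H)
  have hint : ∫ y, Gm y ∂μ = (inner ℂ (B H) (B H) : ℂ) := by
    rw [MeasureTheory.L2.inner_def (B H) (B H)]
    apply integral_congr_ae
    filter_upwards [hgB] with y hy
    rw [RCLike.inner_apply', hy]
    rfl
  have hgen2 := hgen Gm
  rw [hint] at hgen2
  set a : ℕ → ℝ := fun n => ‖g ((⇑T)^[n] x)‖ with ha
  have hreavg : ∀ N : ℕ, ((N:ℂ)⁻¹ * ∑ n ∈ Finset.range N, Gm ((⇑T)^[n] x)).re
      = (N:ℝ)⁻¹ * ∑ n ∈ Finset.range N, (a n)^2 := by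
    intro N
    have hs : ∑ n ∈ Finset.range N, Gm ((⇑T)^[n] x)
        = ((∑ n ∈ Finset.range N, (a n)^2 : ℝ) : ℂ) := by
      rw [Complex.ofReal_sum]
      refine Finset.sum_congr rfl fun n _ => ?_
      rw [hGmval]
    rw [hs, show ((N:ℂ))⁻¹ = (((N:ℝ)⁻¹ : ℝ) : ℂ) by push_cast; ring,
      ← Complex.ofReal_mul, Complex.ofReal_re]
  have hRtend : Tendsto (fun N : ℕ => (N:ℝ)⁻¹ * ∑ n ∈ Finset.range N, (a n)^2)
      atTop (nhds (‖B H‖^2)) := by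
    have hcomp := (Complex.continuous_re.tendsto _).comp hgen2
    have hlim : ((inner ℂ (B H) (B H) : ℂ)).re = ‖B H‖^2 := by
      rw [h3, ← Complex.ofReal_pow, Complex.ofReal_re]
    rw [← hlim]
    exact hcomp.congr hreavg
  have hRev : ∀ᶠ N : ℕ in atTop,
      (N:ℝ)⁻¹ * ∑ n ∈ Finset.range N, (a n)^2 < (ε/2)^2 := by
    apply hRtend.eventually_lt_const
    nlinarith [norm_nonneg (B H)]
  set W : ℕ → ℂ := fun N => (N:ℂ)⁻¹ * ∑ n ∈ Finset.range N, ξ ^ (-(n:ℤ)) * g ((⇑T)^[n] x)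
    with hWdef
  have hgW : ∀ n : ℕ, ξ ^ (-(n:ℤ)) * g ((⇑T)^[n] x)
      = (H:ℂ)⁻¹ * ∑ h ∈ Finset.range H, u (h + n) := by
    intro n
    simp only [hgdef]
    rw [mul_left_comm]
    congr 1
    rw [Finset.mul_sum]
    refine Finset.sum_congr rfl fun h _ => ?_
    simp only [hu]
    rw [Function.iterate_add_apply]
    have hz : (-(↑(h+n) : ℤ)) = (-(h:ℤ)) + (-(n:ℤ)) := by push_cast; ring
    rw [hz, zpow_add₀ hξ0]
    ring
  have hDh : ∀ N : ℕ, ∀ h ∈ Finset.range H,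
      ‖(∑ j ∈ Finset.range N, u j) - ∑ n ∈ Finset.range N, u (h + n)‖ ≤ 2*H*M := by
    intro N h hh
    have hsum : ∑ n ∈ Finset.range N, u (h + n) = ∑ m ∈ Finset.Ico h (h + N), u m := by
      rw [Finset.sum_Ico_eq_sum_range]
      simp
    have h1 : ∑ m ∈ Finset.Ico h (h + N), u m
        = ∑ m ∈ Finset.range (h + N), u m - ∑ m ∈ Finset.range h, u m :=
      Finset.sum_Ico_eq_sub _ (Nat.le_add_right h N)
    have h2 : ∑ m ∈ Finset.Ico N (h + N), u m
        = ∑ m ∈ Finset.range (h + N), u m - ∑ m ∈ Finset.range N, u m :=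
      Finset.sum_Ico_eq_sub _ (Nat.le_add_left N h)
    have key : (∑ j ∈ Finset.range N, u j) - ∑ n ∈ Finset.range N, u (h + n)
        = (∑ m ∈ Finset.range h, u m) - ∑ m ∈ Finset.Ico N (h + N), u m := by
      rw [hsum, h1, h2]; ring
    rw [key]
    have b1 : ‖∑ m ∈ Finset.range h, u m‖ ≤ h * M := by
      refine (norm_sum_le _ _).trans ?_
      calc ∑ m ∈ Finset.range h, ‖u m‖ ≤ ∑ _m ∈ Finset.range h, M :=
            Finset.sum_le_sum fun m _ => hub m
        _ = h * M := by rw [Finset.sum_const, Finset.card_range, nsmul_eq_mul]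
    have b2 : ‖∑ m ∈ Finset.Ico N (h + N), u m‖ ≤ h * M := by
      refine (norm_sum_le _ _).trans ?_
      calc ∑ m ∈ Finset.Ico N (h + N), ‖u m‖ ≤ ∑ _m ∈ Finset.Ico N (h + N), M :=
            Finset.sum_le_sum fun m _ => hub m
        _ = h * M := by
            rw [Finset.sum_const, Nat.card_Ico, nsmul_eq_mul]
            congr 2
            omega
    have hh' : (h:ℝ) ≤ H := by exact_mod_cast (Finset.mem_range.mp hh).le
    calc ‖(∑ m ∈ Finset.range h, u m) - ∑ m ∈ Finset.Ico N (h + N), u m‖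
        ≤ ‖∑ m ∈ Finset.range h, u m‖ + ‖∑ m ∈ Finset.Ico N (h + N), u m‖ := norm_sub_le _ _
      _ ≤ h*M + h*M := add_le_add b1 b2
      _ ≤ 2*H*M := by nlinarith
  have hclose : ∀ N : ℕ,
      ‖((N:ℂ)⁻¹ * ∑ j ∈ Finset.range N, u j) - W N‖ ≤ (N:ℝ)⁻¹ * (2*H*M) := by
    intro N
    have e1 : ∑ n ∈ Finset.range N, ξ ^ (-(n:ℤ)) * g ((⇑T)^[n] x)
        = (H:ℂ)⁻¹ * ∑ h ∈ Finset.range H, ∑ n ∈ Finset.range N, u (h + n) := by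
      calc ∑ n ∈ Finset.range N, ξ ^ (-(n:ℤ)) * g ((⇑T)^[n] x)
          = ∑ n ∈ Finset.range N, ((H:ℂ)⁻¹ * ∑ h ∈ Finset.range H, u (h + n)) :=
            Finset.sum_congr rfl fun n _ => hgW n
        _ = (H:ℂ)⁻¹ * ∑ n ∈ Finset.range N, ∑ h ∈ Finset.range H, u (h + n) :=
            (Finset.mul_sum _ _ _).symm
        _ = (H:ℂ)⁻¹ * ∑ h ∈ Finset.range H, ∑ n ∈ Finset.range N, u (h + n) := by
            rw [Finset.sum_comm]
    have e2 : ∑ j ∈ Finset.range N, u j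
        = (H:ℂ)⁻¹ * ∑ _h ∈ Finset.range H, ∑ j ∈ Finset.range N, u j := by
      rw [Finset.sum_const, Finset.card_range, nsmul_eq_mul, ← mul_assoc,
        inv_mul_cancel₀ hHCne, one_mul]
    have key : ((N:ℂ)⁻¹ * ∑ j ∈ Finset.range N, u j) - W N
        = (N:ℂ)⁻¹ * ((H:ℂ)⁻¹ * ∑ h ∈ Finset.range H,
            ((∑ j ∈ Finset.range N, u j) - ∑ n ∈ Finset.range N, u (h + n))) := by
      have hWn : W N = (N:ℂ)⁻¹ * ((H:ℂ)⁻¹ * ∑ h ∈ Finset.range H,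
          ∑ n ∈ Finset.range N, u (h + n)) := by
        simp only [hWdef]
        rw [e1]
      rw [hWn, ← mul_sub]
      congr 1
      rw [Finset.sum_sub_distrib, mul_sub, ← e2]
    rw [key, norm_mul, norm_mul, norm_inv, norm_inv, Complex.norm_natCast, Complex.norm_natCast]
    have hb : ‖∑ h ∈ Finset.range H,
        ((∑ j ∈ Finset.range N, u j) - ∑ n ∈ Finset.range N, u (h + n))‖ ≤ H * (2*H*M) := by
      refine (norm_sum_le _ _).trans ?_
      calc ∑ h ∈ Finset.range H, ‖(∑ j ∈ Finset.range N, u j) - ∑ n ∈ Finset.range N, u (h + n)‖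
          ≤ ∑ _h ∈ Finset.range H, (2*H*M) := Finset.sum_le_sum (hDh N)
        _ = H * (2*H*M) := by rw [Finset.sum_const, Finset.card_range, nsmul_eq_mul]
    have : (H:ℝ)⁻¹ * ‖∑ h ∈ Finset.range H,
        ((∑ j ∈ Finset.range N, u j) - ∑ n ∈ Finset.range N, u (h + n))‖ ≤ 2*H*M := by
      calc (H:ℝ)⁻¹ * ‖∑ h ∈ Finset.range H,
            ((∑ j ∈ Finset.range N, u j) - ∑ n ∈ Finset.range N, u (h + n))‖
          ≤ (H:ℝ)⁻¹ * (H * (2*H*M)) := by gcongr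
        _ = 2*H*M := by field_simp
    exact mul_le_mul_of_nonneg_left this (by positivity)
  have hWle : ∀ N : ℕ, ‖W N‖^2 ≤ (N:ℝ)⁻¹ * ∑ n ∈ Finset.range N, (a n)^2 := by
    intro N
    have h1 : ‖W N‖ ≤ (N:ℝ)⁻¹ * ∑ n ∈ Finset.range N, a n := by
      simp only [hWdef]
      rw [norm_mul, norm_inv, Complex.norm_natCast]
      gcongr
      refine (norm_sum_le _ _).trans (le_of_eq (Finset.sum_congr rfl fun n _ => ?_))
      rw [norm_mul, norm_zpow, hξn, one_zpow, one_mul]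
    have h2 : (∑ n ∈ Finset.range N, a n)^2 ≤ N * ∑ n ∈ Finset.range N, (a n)^2 := by
      have := sq_sum_le_card_mul_sum_sq (s := Finset.range N) (f := a)
      simpa using this
    calc ‖W N‖^2 ≤ ((N:ℝ)⁻¹ * ∑ n ∈ Finset.range N, a n)^2 :=
          pow_le_pow_left₀ (norm_nonneg _) h1 2
      _ = ((N:ℝ)⁻¹)^2 * (∑ n ∈ Finset.range N, a n)^2 := by ring
      _ ≤ ((N:ℝ)⁻¹)^2 * (N * ∑ n ∈ Finset.range N, (a n)^2) := by
          gcongr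
      _ ≤ (N:ℝ)⁻¹ * ∑ n ∈ Finset.range N, (a n)^2 := by
          rcases Nat.eq_zero_or_pos N with hN0 | hN0
          · simp [hN0]
          · have hN' : (N:ℝ) ≠ 0 := Nat.cast_ne_zero.mpr (by omega)
            apply le_of_eq
            field_simp
  have hinv : Tendsto (fun N : ℕ => (N:ℝ)⁻¹ * (2*H*M)) atTop (nhds 0) := by
    have := tendsto_inv_atTop_nhds_zero_nat.mul_const (2*(H:ℝ)*M)
    simpa using this
  have hev2 : ∀ᶠ N : ℕ in atTop, (N:ℝ)⁻¹ * (2*H*M) < ε/2 :=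
    hinv.eventually_lt_const (by linarith)
  filter_upwards [hRev, hev2] with N hN1 hN2
  have hWn : ‖W N‖ < ε/2 :=
    lt_of_pow_lt_pow_left₀ 2 (by linarith) (lt_of_le_of_lt (hWle N) hN1)
  have htri : ‖(N:ℂ)⁻¹ * ∑ j ∈ Finset.range N, u j‖
      ≤ ‖((N:ℂ)⁻¹ * ∑ j ∈ Finset.range N, u j) - W N‖ + ‖W N‖ := by
    calc ‖(N:ℂ)⁻¹ * ∑ j ∈ Finset.range N, u j‖
        = ‖(((N:ℂ)⁻¹ * ∑ j ∈ Finset.range N, u j) - W N) + W N‖ := by rw [sub_add_cancel]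
      _ ≤ _ := norm_add_le _ _
  calc ‖(N:ℂ)⁻¹ * ∑ j ∈ Finset.range N, u j‖
      ≤ ‖((N:ℂ)⁻¹ * ∑ j ∈ Finset.range N, u j) - W N‖ + ‖W N‖ := htri
    _ < ε/2 + ε/2 := add_lt_add_of_le_of_lt (le_trans (hclose N) hN2.le) hWn
    _ = ε := by ring
end

section
/- Let (X,ρ) be a compact metric space, T: X → X continuous, and f: X → ℂ continuous. For every ε > 0 there is δ > 0 such that: if x, x' ∈ X satisfy D_B(x,x') < δ (Besicovitch pseudometric), then there exists N ≥ 1 such that for every n ≥ N and every ξ ∈ ℂ with |ξ| = 1, |(1/n) ∑_{j=0}^{n−1} ξ^{-j} f(T^j x) − (1/n) ∑_{j=0}^{n−1} ξ^{-j} f(T^j x')| ≤ ε. -/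
open Filter

/-- if two points are close in the Besicovitch pseudometric, then
their twisted Birkhoff averages are eventually uniformly close, uniformly in
`ξ` on the unit circle. -/
theorem stmt10 {X : Type*} [MetricSpace X] [CompactSpace X]
    (T : X → X) (hT : Continuous T) (f : C(X, ℂ)) :
    ∀ ε > (0 : ℝ), ∃ δ > (0 : ℝ), ∀ x x' : X,
      limsup (fun N : ℕ => (N : ℝ)⁻¹ * ∑ n ∈ Finset.range N, dist (T^[n] x) (T^[n] x')) atTop < δ →
      ∃ N : ℕ, 1 ≤ N ∧ ∀ n ≥ N, ∀ ξ : ℂ, ‖ξ‖ = 1 →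
        ‖((n : ℂ)⁻¹ * ∑ j ∈ Finset.range n, ξ ^ (-(j : ℤ)) * f (T^[j] x)
            - (n : ℂ)⁻¹ * ∑ j ∈ Finset.range n, ξ ^ (-(j : ℤ)) * f (T^[j] x'))‖ ≤ ε := by
  intro ε hε
  obtain ⟨η, hη, hηf⟩ := Metric.uniformContinuous_iff.mp
    (CompactSpace.uniformContinuous_of_continuous f.continuous) (ε/2) (by positivity)
  set M : ℝ := ‖f‖ + 1 with hM
  have hM0 : (0:ℝ) < M := by
    have := norm_nonneg f; simp [hM]; linarith
  refine ⟨ε * η / (4 * M), by positivity, ?_⟩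
  intro x x' hlim
  have hbdd : IsBoundedUnder (· ≤ ·) atTop
      (fun N : ℕ => (N : ℝ)⁻¹ * ∑ n ∈ Finset.range N, dist (T^[n] x) (T^[n] x')) := by
    refine isBoundedUnder_of ⟨Metric.diam (Set.univ : Set X), fun N => ?_⟩
    rcases Nat.eq_zero_or_pos N with h | h
    · simp [h, Metric.diam_nonneg]
    · have hNpos : (0:ℝ) < N := by exact_mod_cast h
      have hsum : ∑ n ∈ Finset.range N, dist (T^[n] x) (T^[n] x')
          ≤ N * Metric.diam (Set.univ : Set X) := by
        calc ∑ n ∈ Finset.range N, dist (T^[n] x) (T^[n] x')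
            ≤ ∑ _n ∈ Finset.range N, Metric.diam (Set.univ : Set X) :=
              Finset.sum_le_sum fun i _ =>
                Metric.dist_le_diam_of_mem
                  (Metric.isBounded_of_compactSpace) (Set.mem_univ _) (Set.mem_univ _)
          _ = N * Metric.diam (Set.univ : Set X) := by simp
      rw [inv_mul_le_iff₀ hNpos]
      linarith
  have hev := eventually_lt_of_limsup_lt hlim hbdd
  obtain ⟨N₀, hN₀⟩ := eventually_atTop.mp hev
  refine ⟨max N₀ 1, le_max_right _ _, ?_⟩
  intro n hn ξ hξ
  have hn1 : 1 ≤ n := le_trans (le_max_right N₀ 1) hn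
  have hnpos : (0:ℝ) < n := by exact_mod_cast hn1
  have havg : (n : ℝ)⁻¹ * ∑ j ∈ Finset.range n, dist (T^[j] x) (T^[j] x') < ε * η / (4*M) :=
    hN₀ n (le_trans (le_max_left _ _) hn)
  set c : ℝ := 2*M/η with hc
  have hc0 : 0 ≤ c := by positivity
  have key : ∀ a b : X, ‖f a - f b‖ ≤ ε/2 + c * dist a b := by
    intro a b
    by_cases h : dist a b < η
    · have h1 : ‖f a - f b‖ < ε/2 := by
        have := hηf h
        rwa [Complex.dist_eq] at this
      have := @dist_nonneg X _ a b
      nlinarith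
    · push_neg at h
      have h1 : ‖f a - f b‖ ≤ 2*M := by
        calc ‖f a - f b‖ ≤ ‖f a‖ + ‖f b‖ :=
              norm_sub_le _ _
          _ ≤ ‖f‖ + ‖f‖ :=
              add_le_add (f.norm_coe_le_norm a) (f.norm_coe_le_norm b)
          _ ≤ 2*M := by simp [hM]; linarith
      have h2 : 2*M ≤ c * dist a b := by
        rw [hc, div_mul_eq_mul_div, le_div_iff₀ hη]
        nlinarith
      linarith
  have hsum : (n : ℂ)⁻¹ * ∑ j ∈ Finset.range n, ξ ^ (-(j : ℤ)) * f (T^[j] x)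
      - (n : ℂ)⁻¹ * ∑ j ∈ Finset.range n, ξ ^ (-(j : ℤ)) * f (T^[j] x')
      = (n : ℂ)⁻¹ * ∑ j ∈ Finset.range n, ξ ^ (-(j : ℤ)) * (f (T^[j] x) - f (T^[j] x')) := by
    rw [← mul_sub, ← Finset.sum_sub_distrib]
    simp [mul_sub]
  rw [hsum, norm_mul, norm_inv, Complex.norm_natCast]
  have habs : ‖(∑ j ∈ Finset.range n, ξ ^ (-(j : ℤ)) * (f (T^[j] x) - f (T^[j] x')))‖
      ≤ ∑ j ∈ Finset.range n, (ε/2 + c * dist (T^[j] x) (T^[j] x')) := by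
    calc ‖(∑ j ∈ Finset.range n, ξ ^ (-(j : ℤ)) * (f (T^[j] x) - f (T^[j] x')))‖
        ≤ ∑ j ∈ Finset.range n, ‖(ξ ^ (-(j : ℤ)) * (f (T^[j] x) - f (T^[j] x')))‖ :=
          norm_sum_le _ _
      _ ≤ ∑ j ∈ Finset.range n, (ε/2 + c * dist (T^[j] x) (T^[j] x')) := by
          refine Finset.sum_le_sum fun j _ => ?_
          rw [norm_mul, norm_zpow, hξ, one_zpow, one_mul]
          exact key _ _
  have hS : ∑ j ∈ Finset.range n, (ε/2 + c * dist (T^[j] x) (T^[j] x'))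
      = n * (ε/2) + c * ∑ j ∈ Finset.range n, dist (T^[j] x) (T^[j] x') := by
    rw [Finset.sum_add_distrib, Finset.sum_const, Finset.card_range, ← Finset.mul_sum]
    ring
  have hfin : (n : ℝ)⁻¹ * ∑ j ∈ Finset.range n, (ε/2 + c * dist (T^[j] x) (T^[j] x')) ≤ ε := by
    rw [hS, mul_add]
    have e1 : (n:ℝ)⁻¹ * (n * (ε/2)) = ε/2 := by field_simp
    have e2 : (n:ℝ)⁻¹ * (c * ∑ j ∈ Finset.range n, dist (T^[j] x) (T^[j] x'))
        = c * ((n:ℝ)⁻¹ * ∑ j ∈ Finset.range n, dist (T^[j] x) (T^[j] x')) := by ring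
    rw [e1, e2]
    have h3 : c * ((n:ℝ)⁻¹ * ∑ j ∈ Finset.range n, dist (T^[j] x) (T^[j] x'))
        ≤ c * (ε * η / (4*M)) := mul_le_mul_of_nonneg_left havg.le hc0
    have h4 : c * (ε * η / (4*M)) = ε/2 := by
      rw [hc]; field_simp; ring
    linarith
  calc (n:ℝ)⁻¹ * ‖(∑ j ∈ Finset.range n, ξ ^ (-(j : ℤ)) * (f (T^[j] x) - f (T^[j] x')))‖
      ≤ (n:ℝ)⁻¹ * ∑ j ∈ Finset.range n, (ε/2 + c * dist (T^[j] x) (T^[j] x')) :=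
        mul_le_mul_of_nonneg_left habs (by positivity)
    _ ≤ ε := hfin
end

section
/- Let (X,ρ) be a compact metric space and T: X → X a homeomorphism. The metric ρ̄(μ,ν) = inf_{λ ∈ J(μ,ν)} ∫ ρ dλ on the space M_T(X) of T-invariant Borel probability measures is complete: every ρ̄-Cauchy sequence converges in ρ̄ to some μ ∈ M_T(X). -/
open MeasureTheory Filter

/-- A joining of two `T`-invariant measures. -/
def IsJoining {X : Type*} [MeasurableSpace X] (T : X → X) (μ ν : Measure X)
    (lam : Measure (X × X)) : Prop :=
  IsProbabilityMeasure lam ∧ Measure.map (Prod.map T T) lam = lam ∧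
    Measure.map Prod.fst lam = μ ∧ Measure.map Prod.snd lam = ν

/-- The `ρ̄` distance: infimum of `∫ ρ` over joinings. -/
noncomputable def rhoBar {X : Type*} [MetricSpace X] [MeasurableSpace X] (T : X → X)
    (μ ν : Measure X) : ℝ :=
  sInf {r : ℝ | ∃ lam : Measure (X × X), IsJoining T μ ν lam ∧ r = ∫ p, dist p.1 p.2 ∂lam}

section Aux

open Topology BoundedContinuousFunction Set TopologicalSpace
open scoped NNReal ENNReal


section Compactness

variable {Y : Type*} [MetricSpace Y] [CompactSpace Y] [MeasurableSpace Y] [BorelSpace Y]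

lemma exists_subseq_weak_limit (μ : ℕ → ProbabilityMeasure Y) :
    ∃ φ : ℕ → ℕ, StrictMono φ ∧ ∃ ν : ProbabilityMeasure Y,
      Tendsto (fun k => μ (φ k)) atTop (𝓝 ν) := by
  have hsepC : SeparableSpace C(Y, ℝ) := inferInstance
  have hsep : SeparableSpace (Y →ᵇ ℝ) :=
    (ContinuousMap.isometryEquivBoundedOfCompact Y ℝ).toHomeomorph.symm.isEmbedding.separableSpace
  set u : ℕ → (Y →ᵇ ℝ) := denseSeq (Y →ᵇ ℝ) with hu_def
  have hu : DenseRange u := denseRange_denseSeq (Y →ᵇ ℝ)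
  set x : ℕ → ℕ → ℝ := fun k i => ∫ y, u i y ∂(μ k : Measure Y) with hx_def
  have hxmem : ∀ k, x k ∈ Set.pi Set.univ (fun i => Set.Icc (-‖u i‖) ‖u i‖) := by
    intro k i _
    have := (u i).norm_integral_le_norm (μ k : Measure Y)
    rw [Real.norm_eq_abs, abs_le] at this
    exact ⟨this.1, this.2⟩
  have hcpt : IsCompact (Set.pi Set.univ (fun i : ℕ => Set.Icc (-‖u i‖) ‖u i‖)) :=
    isCompact_univ_pi (fun i => isCompact_Icc)
  obtain ⟨c, -, φ, hφ, hc⟩ := hcpt.tendsto_subseq hxmem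
  have hci : ∀ i, Tendsto (fun k => x (φ k) i) atTop (𝓝 (c i)) := fun i =>
    tendsto_pi_nhds.mp hc i
  -- convergence of ∫ f for every bounded continuous f
  have hcauchy : ∀ f : Y →ᵇ ℝ, ∃ r : ℝ,
      Tendsto (fun k => ∫ y, f y ∂(μ (φ k) : Measure Y)) atTop (𝓝 r) := by
    intro f
    apply cauchySeq_tendsto_of_complete
    rw [Metric.cauchySeq_iff]
    intro ε hε
    obtain ⟨i, hi⟩ : ∃ i, dist (u i) f < ε / 4 := by
      obtain ⟨i, hz⟩ := Metric.denseRange_iff.mp hu f (ε / 4) (by positivity)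
      exact ⟨i, by simpa [dist_comm] using hz⟩
    have hconv : CauchySeq (fun k => x (φ k) i) := (hci i).cauchySeq
    rw [Metric.cauchySeq_iff] at hconv
    obtain ⟨N, hN⟩ := hconv (ε / 2) (by positivity)
    refine ⟨N, fun a ha b hb => ?_⟩
    have key : ∀ k : ℕ, dist (∫ y, f y ∂(μ (φ k) : Measure Y)) (x (φ k) i) < ε / 4 := by
      intro k
      have hsub : (∫ y, (f - u i) y ∂(μ (φ k) : Measure Y))
          = (∫ y, f y ∂(μ (φ k) : Measure Y)) - x (φ k) i := by
        simp only [BoundedContinuousFunction.coe_sub, Pi.sub_apply]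
        exact integral_sub (f.integrable _) ((u i).integrable _)
      rw [dist_eq_norm, ← hsub]
      calc ‖∫ y, (f - u i) y ∂(μ (φ k) : Measure Y)‖ ≤ ‖f - u i‖ :=
            (f - u i).norm_integral_le_norm _
        _ = dist (u i) f := by rw [dist_comm, dist_eq_norm]
        _ < ε / 4 := hi
    have h2 := hN a ha b hb
    calc dist (∫ y, f y ∂(μ (φ a) : Measure Y)) (∫ y, f y ∂(μ (φ b) : Measure Y))
        ≤ dist (∫ y, f y ∂(μ (φ a) : Measure Y)) (x (φ a) i)
          + dist (x (φ a) i) (x (φ b) i)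
          + dist (x (φ b) i) (∫ y, f y ∂(μ (φ b) : Measure Y)) := dist_triangle4 _ _ _ _
      _ < ε / 4 + ε / 2 + ε / 4 := by
          have := key a; have := key b
          rw [dist_comm (x (φ b) i)]
          gcongr <;> assumption
      _ = ε := by ring
  choose L hL using hcauchy
  -- properties of L
  have hLmono : ∀ f g : Y →ᵇ ℝ, (∀ y, f y ≤ g y) → L f ≤ L g := by
    intro f g h
    refine le_of_tendsto_of_tendsto' (hL f) (hL g) (fun k => ?_)
    exact integral_mono (f.integrable _) (g.integrable _) h
  have hLadd : ∀ f g : Y →ᵇ ℝ, L (f + g) = L f + L g := by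
    intro f g
    refine tendsto_nhds_unique (hL (f + g)) ?_
    have := (hL f).add (hL g)
    convert this using 2 with k
    rw [← integral_add (f.integrable _) (g.integrable _)]
    simp
  have hLone : L 1 = 1 := by
    refine tendsto_nhds_unique (hL 1) ?_
    have : ∀ k : ℕ, ∫ y, (1 : Y →ᵇ ℝ) y ∂(μ (φ k) : Measure Y) = 1 := by
      intro k; simp
    simpa [this] using tendsto_const_nhds
  have hLnonneg : ∀ f : Y →ᵇ ℝ, (∀ y, 0 ≤ f y) → 0 ≤ L f := by
    intro f h
    exact ge_of_tendsto (hL f) (Eventually.of_forall fun k => integral_nonneg h)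
  -- the content
  set A : Compacts Y → Set (Y →ᵇ ℝ) :=
    fun K => {f | (∀ y, 0 ≤ f y) ∧ ∀ y ∈ (K : Set Y), 1 ≤ f y} with hA_def
  set S : Compacts Y → Set ℝ := fun K => L '' A K with hS_def
  have h1A : ∀ K, (1 : Y →ᵇ ℝ) ∈ A K := fun K => ⟨fun y => by simp, fun y _ => by simp⟩
  have hSne : ∀ K, (S K).Nonempty := fun K => ⟨L 1, 1, h1A K, rfl⟩
  have hSnonneg : ∀ K, ∀ r ∈ S K, (0:ℝ) ≤ r := by
    rintro K r ⟨f, hf, rfl⟩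
    exact hLnonneg f hf.1
  have hbdd : ∀ K, BddBelow (S K) := fun K => ⟨0, fun r hr => hSnonneg K r hr⟩
  have hSInf_nonneg : ∀ K, 0 ≤ sInf (S K) := fun K => le_csInf (hSne K) (hSnonneg K)
  have hmono : ∀ K₁ K₂ : Compacts Y, (K₁ : Set Y) ⊆ (K₂ : Set Y) →
      sInf (S K₁) ≤ sInf (S K₂) := by
    intro K₁ K₂ h
    refine csInf_le_csInf (hbdd _) (hSne _) (Set.image_mono ?_)
    rintro f ⟨hf0, hf1⟩
    exact ⟨hf0, fun y hy => hf1 y (h hy)⟩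
  have hsuple : ∀ K₁ K₂ : Compacts Y, sInf (S (K₁ ⊔ K₂)) ≤ sInf (S K₁) + sInf (S K₂) := by
    intro K₁ K₂
    apply le_of_forall_pos_le_add
    intro ε hε
    obtain ⟨r₁, ⟨f₁, hf₁, rfl⟩, hr₁⟩ := exists_lt_of_csInf_lt (hSne K₁)
      (lt_add_of_pos_right (sInf (S K₁)) (half_pos hε))
    obtain ⟨r₂, ⟨f₂, hf₂, rfl⟩, hr₂⟩ := exists_lt_of_csInf_lt (hSne K₂)
      (lt_add_of_pos_right (sInf (S K₂)) (half_pos hε))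
    have hmem : L (f₁ + f₂) ∈ S (K₁ ⊔ K₂) := by
      refine ⟨f₁ + f₂, ⟨fun y => by simpa using add_nonneg (hf₁.1 y) (hf₂.1 y), ?_⟩, rfl⟩
      intro y hy
      rcases hy with hy | hy
      · have := hf₁.2 y hy
        have := hf₂.1 y
        simp only [BoundedContinuousFunction.coe_add, Pi.add_apply]
        linarith
      · have := hf₂.2 y hy
        have := hf₁.1 y
        simp only [BoundedContinuousFunction.coe_add, Pi.add_apply]
        linarith
    have := csInf_le (hbdd _) hmem
    rw [hLadd] at this
    linarith
  have hsupdisj : ∀ K₁ K₂ : Compacts Y, Disjoint (K₁ : Set Y) (K₂ : Set Y) →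
      sInf (S K₁) + sInf (S K₂) ≤ sInf (S (K₁ ⊔ K₂)) := by
    intro K₁ K₂ hd
    obtain ⟨g, hg0, hg1, hg01⟩ := exists_continuous_zero_one_of_isClosed
      K₂.isCompact.isClosed K₁.isCompact.isClosed hd.symm
    set gb : Y →ᵇ ℝ := BoundedContinuousFunction.mkOfCompact g with hgb_def
    refine le_csInf (hSne _) ?_
    rintro r ⟨f, ⟨hf0, hf1⟩, rfl⟩
    have hg01' : ∀ y, 0 ≤ gb y ∧ gb y ≤ 1 := by
      intro y
      have := hg01 y
      simpa [hgb_def] using this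
    have hm1 : sInf (S K₁) ≤ L (f * gb) := by
      refine csInf_le (hbdd _) ⟨f * gb, ⟨?_, ?_⟩, rfl⟩
      · intro y
        simpa using mul_nonneg (hf0 y) (hg01' y).1
      · intro y hy
        have h1 : gb y = 1 := by simpa [hgb_def] using hg1 hy
        have h2 := hf1 y (Or.inl hy)
        simp only [BoundedContinuousFunction.coe_mul, Pi.mul_apply, h1, mul_one]
        exact h2
    have hm2 : sInf (S K₂) ≤ L (f * (1 - gb)) := by
      refine csInf_le (hbdd _) ⟨f * (1 - gb), ⟨?_, ?_⟩, rfl⟩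
      · intro y
        have := (hg01' y).2
        simp only [BoundedContinuousFunction.coe_mul, BoundedContinuousFunction.coe_sub,
          BoundedContinuousFunction.coe_one, Pi.mul_apply, Pi.sub_apply, Pi.one_apply]
        have := hf0 y
        nlinarith [(hg01' y).2]
      · intro y hy
        have h1 : gb y = 0 := by simpa [hgb_def] using hg0 hy
        have h2 := hf1 y (Or.inr hy)
        simp only [BoundedContinuousFunction.coe_mul, BoundedContinuousFunction.coe_sub,
          BoundedContinuousFunction.coe_one, Pi.mul_apply, Pi.sub_apply, Pi.one_apply, h1]
        simpa using h2
    have hsplit : L (f * gb) + L (f * (1 - gb)) = L f := by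
      rw [← hLadd]
      congr 1
      ring
    linarith
  set cont : Content Y :=
    { toFun := fun K => Real.toNNReal (sInf (S K))
      mono' := fun K₁ K₂ h => Real.toNNReal_mono (hmono K₁ K₂ h)
      sup_disjoint' := by
        intro K₁ K₂ hd _ _
        apply le_antisymm
        · calc Real.toNNReal (sInf (S (K₁ ⊔ K₂))) ≤ Real.toNNReal (sInf (S K₁) + sInf (S K₂)) :=
                Real.toNNReal_mono (hsuple K₁ K₂)
            _ = Real.toNNReal (sInf (S K₁)) + Real.toNNReal (sInf (S K₂)) :=
                Real.toNNReal_add (hSInf_nonneg _) (hSInf_nonneg _)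
        · calc Real.toNNReal (sInf (S K₁)) + Real.toNNReal (sInf (S K₂))
              = Real.toNNReal (sInf (S K₁) + sInf (S K₂)) :=
                (Real.toNNReal_add (hSInf_nonneg _) (hSInf_nonneg _)).symm
            _ ≤ Real.toNNReal (sInf (S (K₁ ⊔ K₂))) := Real.toNNReal_mono (hsupdisj K₁ K₂ hd)
      sup_le' := by
        intro K₁ K₂
        calc Real.toNNReal (sInf (S (K₁ ⊔ K₂))) ≤ Real.toNNReal (sInf (S K₁) + sInf (S K₂)) :=
              Real.toNNReal_mono (hsuple K₁ K₂)
          _ = Real.toNNReal (sInf (S K₁)) + Real.toNNReal (sInf (S K₂)) :=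
              Real.toNNReal_add (hSInf_nonneg _) (hSInf_nonneg _) } with hcont_def
  have hcont_apply : ∀ K : Compacts Y, (cont K : ℝ≥0∞) = (Real.toNNReal (sInf (S K)) : ℝ≥0∞) :=
    fun K => rfl
  have hcont_le_one : ∀ K : Compacts Y, cont.toFun K ≤ 1 := by
    intro K
    have : sInf (S K) ≤ 1 := by
      have := csInf_le (hbdd K) ⟨1, h1A K, rfl⟩
      rwa [hLone] at this
    calc cont.toFun K = Real.toNNReal (sInf (S K)) := rfl
      _ ≤ Real.toNNReal 1 := Real.toNNReal_mono this
      _ = 1 := by simp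
  -- the measure
  set νm : Measure Y := cont.measure with hνm_def
  have hν_univ : νm Set.univ = 1 := by
    rw [hνm_def, cont.measure_apply MeasurableSet.univ,
      cont.outerMeasure_of_isOpen Set.univ isOpen_univ]
    apply le_antisymm
    · refine iSup₂_le fun K _ => ?_
      rw [hcont_apply]
      exact_mod_cast ENNReal.coe_le_coe.mpr (hcont_le_one K)
    · have hK : ((⟨Set.univ, isCompact_univ⟩ : Compacts Y) : Set Y) ⊆ (Set.univ : Set Y) :=
        subset_rfl
      refine le_trans ?_ (cont.le_innerContent ⟨Set.univ, isCompact_univ⟩ ⟨Set.univ, isOpen_univ⟩ hK)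
      rw [hcont_apply]
      have h1le : (1:ℝ) ≤ sInf (S ⟨Set.univ, isCompact_univ⟩) := by
        refine le_csInf (hSne _) ?_
        rintro r ⟨f, ⟨hf0, hf1⟩, rfl⟩
        have : L 1 ≤ L f := hLmono 1 f (fun y => by simpa using hf1 y (Set.mem_univ y))
        rwa [hLone] at this
      have : (1:ℝ≥0) ≤ Real.toNNReal (sInf (S ⟨Set.univ, isCompact_univ⟩)) := by
        rw [show (1:ℝ≥0) = Real.toNNReal 1 by simp]
        exact Real.toNNReal_mono h1le
      exact_mod_cast ENNReal.coe_le_coe.mpr this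
  have hνprob : IsProbabilityMeasure νm := ⟨hν_univ⟩
  set νP : ProbabilityMeasure Y := ⟨νm, hνprob⟩ with hνP_def
  refine ⟨φ, hφ, νP, ?_⟩
  apply tendsto_of_forall_isOpen_le_liminf
  intro G hG
  set a : ℕ → ℝ≥0 := fun k => (μ (φ k)) G with ha_def
  have ha_le_one : ∀ k, a k ≤ 1 := fun k => (μ (φ k)).apply_le_one G
  have ha_bdd : IsBoundedUnder (· ≤ ·) atTop a := isBoundedUnder_of ⟨1, ha_le_one⟩
  have ha_cobdd : IsCoboundedUnder (· ≥ ·) atTop a := ha_bdd.isCoboundedUnder_ge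
  have ha_bddge : IsBoundedUnder (· ≥ ·) atTop a := isBoundedUnder_of ⟨0, fun k => (zero_le : (0:ℝ≥0) ≤ a k)⟩
  have hcoe_liminf : ((liminf a atTop : ℝ≥0) : ℝ) = liminf (fun k => ((a k : ℝ≥0) : ℝ)) atTop := by
    have := NNReal.coe_mono.map_liminf_of_continuousAt (F := atTop) a
      (NNReal.continuous_coe.continuousAt) ha_cobdd ha_bddge
    exact this
  have hkey : ∀ K : Compacts Y, (K : Set Y) ⊆ G → cont.toFun K ≤ liminf a atTop := by
    intro K hKG
    obtain ⟨g, hg0, hg1, hg01⟩ := exists_continuous_zero_one_of_isClosed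
      (isClosed_compl_iff.mpr hG) K.isCompact.isClosed
      (disjoint_compl_left_iff_subset.mpr hKG)
    set f : Y →ᵇ ℝ := BoundedContinuousFunction.mkOfCompact g with hf_def
    have hf01 : ∀ y, 0 ≤ f y ∧ f y ≤ 1 := by
      intro y; have := hg01 y; simpa [hf_def] using this
    have hfA : f ∈ A K := ⟨fun y => (hf01 y).1, fun y hy => by
      have : f y = 1 := by simpa [hf_def] using hg1 hy
      rw [this]⟩
    have h1 : sInf (S K) ≤ L f := csInf_le (hbdd _) ⟨f, hfA, rfl⟩
    have h2 : ∀ k, ∫ y, f y ∂(μ (φ k) : Measure Y) ≤ ((a k : ℝ≥0) : ℝ) := by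
      intro k
      have hle : ∀ y, f y ≤ G.indicator (fun _ => (1:ℝ)) y := by
        intro y
        by_cases hy : y ∈ G
        · simp only [Set.indicator_of_mem hy]
          exact (hf01 y).2
        · simp only [Set.indicator_of_notMem hy]
          have : f y = 0 := by simpa [hf_def] using hg0 hy
          rw [this]
      have hint : Integrable (G.indicator (fun _ => (1:ℝ))) (μ (φ k) : Measure Y) := by
        refine (integrable_indicator_iff hG.measurableSet).mpr ?_
        exact (integrable_const _).integrableOn
      calc ∫ y, f y ∂(μ (φ k) : Measure Y)
          ≤ ∫ y, G.indicator (fun _ => (1:ℝ)) y ∂(μ (φ k) : Measure Y) :=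
            integral_mono (f.integrable _) hint hle
        _ = ((μ (φ k) : Measure Y) G).toReal := by
            rw [integral_indicator hG.measurableSet]
            simp
            rfl
        _ = ((a k : ℝ≥0) : ℝ) := rfl
    have h3 : L f ≤ liminf (fun k => ((a k : ℝ≥0) : ℝ)) atTop := by
      rw [← (hL f).liminf_eq]
      refine liminf_le_liminf (Eventually.of_forall h2) ?_ ?_
      · exact isBoundedUnder_of ⟨0, fun k => integral_nonneg fun y => (hf01 y).1⟩
      · exact (isBoundedUnder_of ⟨(1:ℝ), fun k => by
          exact_mod_cast ha_le_one k⟩ : IsBoundedUnder (· ≤ ·) atTop _).isCoboundedUnder_ge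
    have h4 : sInf (S K) ≤ ((liminf a atTop : ℝ≥0) : ℝ) := by
      rw [hcoe_liminf]; exact h1.trans h3
    calc cont.toFun K = Real.toNNReal (sInf (S K)) := rfl
      _ ≤ liminf a atTop := Real.toNNReal_le_iff_le_coe.mpr h4
  -- conclude
  have hmeas : νm G ≤ ((liminf a atTop : ℝ≥0) : ℝ≥0∞) := by
    rw [hνm_def, cont.measure_apply hG.measurableSet, cont.outerMeasure_of_isOpen G hG]
    refine iSup₂_le fun K hK => ?_
    rw [hcont_apply]
    exact_mod_cast ENNReal.coe_le_coe.mpr (hkey K hK)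
  have : νP G = (νm G).toNNReal := rfl
  rw [this]
  have hfin : νm G ≠ ⊤ := (measure_lt_top νm G).ne
  calc (νm G).toNNReal ≤ (((liminf a atTop : ℝ≥0) : ℝ≥0∞)).toNNReal :=
        ENNReal.toNNReal_mono ENNReal.coe_ne_top hmeas
    _ = liminf a atTop := ENNReal.toNNReal_coe _

end Compactness


section RhoBarAux

open Topology Set

variable {X : Type*} [MetricSpace X] [MeasurableSpace X] [BorelSpace X]

lemma rhoBar_def {T : X → X} (μ ν : Measure X) :
    rhoBar T μ ν =
      sInf {r : ℝ | ∃ lam : Measure (X × X), IsJoining T μ ν lam ∧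
        r = ∫ p, dist p.1 p.2 ∂lam} := rfl

lemma isJoining_prod {T : X → X} (hT : Measurable T) {μ ν : Measure X}
    [IsProbabilityMeasure μ] [IsProbabilityMeasure ν]
    (hμ : Measure.map T μ = μ) (hν : Measure.map T ν = ν) :
    IsJoining T μ ν (μ.prod ν) := by
  refine ⟨inferInstance, ?_, ?_, ?_⟩
  · rw [← Measure.map_prod_map μ ν hT hT, hμ, hν]
  · simp
  · simp

lemma rhoBar_set_nonempty {T : X → X} (hT : Measurable T) (μ ν : Measure X)
    [IsProbabilityMeasure μ] [IsProbabilityMeasure ν]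
    (hμ : Measure.map T μ = μ) (hν : Measure.map T ν = ν) :
    {r : ℝ | ∃ lam : Measure (X × X), IsJoining T μ ν lam ∧
      r = ∫ p, dist p.1 p.2 ∂lam}.Nonempty :=
  ⟨_, μ.prod ν, isJoining_prod hT hμ hν, rfl⟩

lemma rhoBar_set_bddBelow {T : X → X} (μ ν : Measure X) :
    BddBelow {r : ℝ | ∃ lam : Measure (X × X), IsJoining T μ ν lam ∧
      r = ∫ p, dist p.1 p.2 ∂lam} := by
  refine ⟨0, ?_⟩
  rintro r ⟨lam, hlam, rfl⟩
  exact integral_nonneg fun p => dist_nonneg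

end RhoBarAux

/-- the metric `ρ̄` is complete on the space of `T`-invariant
Borel probability measures. -/
theorem stmt13 {X : Type*} [MetricSpace X] [CompactSpace X]
    [MeasurableSpace X] [BorelSpace X] (T : X ≃ₜ X)
    (μ : ℕ → Measure X) (hprob : ∀ m, IsProbabilityMeasure (μ m))
    (hinv : ∀ m, Measure.map (⇑T) (μ m) = μ m)
    (hcauchy : ∀ ε > (0 : ℝ), ∃ N : ℕ, ∀ i ≥ N, ∀ j ≥ N, rhoBar (⇑T) (μ i) (μ j) < ε) :
    ∃ ν : Measure X, IsProbabilityMeasure ν ∧ Measure.map (⇑T) ν = ν ∧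
      Tendsto (fun m => rhoBar (⇑T) (μ m) ν) atTop (nhds 0) := by
  classical
  haveI : ∀ m, IsProbabilityMeasure (μ m) := hprob
  have hTm : Measurable (⇑T) := T.continuous.measurable
  set Pm : ℕ → ProbabilityMeasure X := fun m => ⟨μ m, hprob m⟩ with hPm_def
  obtain ⟨φ, hφ, νP, hν⟩ := exists_subseq_weak_limit Pm
  have hνmeas : IsProbabilityMeasure (νP : Measure X) := νP.2
  have hinvν : Measure.map (⇑T) (νP : Measure X) = (νP : Measure X) := by
    have hcont := (MeasureTheory.ProbabilityMeasure.continuous_map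
      (f := (⇑T : X → X)) T.continuous).tendsto νP
    have hc := hcont.comp hν
    simp only [Function.comp_def] at hc
    have heq : (fun k => (Pm (φ k)).map T.continuous.measurable.aemeasurable)
        = fun k => Pm (φ k) := by
      funext k
      apply MeasureTheory.ProbabilityMeasure.toMeasure_injective
      rw [MeasureTheory.ProbabilityMeasure.toMeasure_map]
      exact hinv (φ k)
    rw [heq] at hc
    have h2 : νP.map T.continuous.measurable.aemeasurable = νP :=
      tendsto_nhds_unique hc hν
    calc Measure.map (⇑T) (νP : Measure X)
        = ((νP.map T.continuous.measurable.aemeasurable : ProbabilityMeasure X) : Measure X) :=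
          (MeasureTheory.ProbabilityMeasure.toMeasure_map νP _).symm
      _ = (νP : Measure X) := by rw [h2]
  refine ⟨(νP : Measure X), hνmeas, hinvν, ?_⟩
  refine Metric.tendsto_atTop.mpr ?_
  intro ε hε
  obtain ⟨N, hN⟩ := hcauchy (ε/2) (by positivity)
  refine ⟨N, fun m hm => ?_⟩
  have hrb_le : rhoBar (⇑T) (μ m) (νP : Measure X) ≤ ε/2 := by
    have hjoin : ∀ ℓ : ℕ, ∃ lam : Measure (X × X),
        IsJoining (⇑T) (μ m) (μ (φ (N + ℓ))) lam ∧ ∫ p, dist p.1 p.2 ∂lam < ε/2 := by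
      intro ℓ
      have hge : φ (N + ℓ) ≥ N := le_trans (Nat.le_add_right N ℓ) hφ.le_apply
      have h1 : rhoBar (⇑T) (μ m) (μ (φ (N + ℓ))) < ε/2 := hN m hm (φ (N + ℓ)) hge
      rw [rhoBar_def] at h1
      obtain ⟨r, hrmem, hrlt⟩ := exists_lt_of_csInf_lt
        (rhoBar_set_nonempty hTm (μ m) (μ (φ (N + ℓ))) (hinv m) (hinv _)) h1
      obtain ⟨lam, hlam, rfl⟩ := hrmem
      exact ⟨lam, hlam, hrlt⟩
    choose lam hlamJ hlamlt using hjoin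
    haveI : ∀ ℓ, IsProbabilityMeasure (lam ℓ) := fun ℓ => (hlamJ ℓ).1
    set lamP : ℕ → ProbabilityMeasure (X × X) := fun ℓ => ⟨lam ℓ, (hlamJ ℓ).1⟩ with hlamP_def
    obtain ⟨ψ, hψ, ΛP, hΛ⟩ := exists_subseq_weak_limit lamP
    have hfst : Measure.map Prod.fst (ΛP : Measure (X × X)) = μ m := by
      have hcont := (MeasureTheory.ProbabilityMeasure.continuous_map
        (f := (Prod.fst : X × X → X)) continuous_fst).tendsto ΛP
      have hc := hcont.comp hΛ
      simp only [Function.comp_def] at hc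
      have heq : (fun j => (lamP (ψ j)).map continuous_fst.measurable.aemeasurable)
          = fun _ => Pm m := by
        funext j
        apply MeasureTheory.ProbabilityMeasure.toMeasure_injective
        rw [MeasureTheory.ProbabilityMeasure.toMeasure_map]
        exact (hlamJ (ψ j)).2.2.1
      rw [heq] at hc
      have h2 : ΛP.map continuous_fst.measurable.aemeasurable = Pm m :=
        tendsto_nhds_unique hc tendsto_const_nhds
      calc Measure.map Prod.fst (ΛP : Measure (X × X))
          = ((ΛP.map continuous_fst.measurable.aemeasurable : ProbabilityMeasure X) :
              Measure X) := (MeasureTheory.ProbabilityMeasure.toMeasure_map ΛP _).symm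
        _ = μ m := by rw [h2]; rfl
    have hsnd : Measure.map Prod.snd (ΛP : Measure (X × X)) = (νP : Measure X) := by
      have hsub : Tendsto (fun j => Pm (φ (N + ψ j))) atTop (𝓝 νP) := by
        have hmono2 : Tendsto (fun j => N + ψ j) atTop atTop :=
          tendsto_atTop_mono (fun j => Nat.le_add_left (ψ j) N) hψ.tendsto_atTop
        have := hν.comp hmono2
        simpa [Function.comp_def] using this
      have hcont := (MeasureTheory.ProbabilityMeasure.continuous_map
        (f := (Prod.snd : X × X → X)) continuous_snd).tendsto ΛP
      have hc := hcont.comp hΛ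
      simp only [Function.comp_def] at hc
      have heq : (fun j => (lamP (ψ j)).map continuous_snd.measurable.aemeasurable)
          = fun j => Pm (φ (N + ψ j)) := by
        funext j
        apply MeasureTheory.ProbabilityMeasure.toMeasure_injective
        rw [MeasureTheory.ProbabilityMeasure.toMeasure_map]
        exact (hlamJ (ψ j)).2.2.2
      rw [heq] at hc
      have h2 : ΛP.map continuous_snd.measurable.aemeasurable = νP :=
        tendsto_nhds_unique hc hsub
      calc Measure.map Prod.snd (ΛP : Measure (X × X))
          = ((ΛP.map continuous_snd.measurable.aemeasurable : ProbabilityMeasure X) :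
              Measure X) := (MeasureTheory.ProbabilityMeasure.toMeasure_map ΛP _).symm
        _ = (νP : Measure X) := by rw [h2]
    have hTT : Continuous (Prod.map (⇑T) (⇑T)) := T.continuous.prodMap T.continuous
    have hinvΛ : Measure.map (Prod.map (⇑T) (⇑T)) (ΛP : Measure (X × X))
        = (ΛP : Measure (X × X)) := by
      have hcont := (MeasureTheory.ProbabilityMeasure.continuous_map
        (f := Prod.map (⇑T) (⇑T)) hTT).tendsto ΛP
      have hc := hcont.comp hΛ
      simp only [Function.comp_def] at hc
      have heq : (fun j => (lamP (ψ j)).map hTT.measurable.aemeasurable)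
          = fun j => lamP (ψ j) := by
        funext j
        apply MeasureTheory.ProbabilityMeasure.toMeasure_injective
        rw [MeasureTheory.ProbabilityMeasure.toMeasure_map]
        exact (hlamJ (ψ j)).2.1
      rw [heq] at hc
      have h2 : ΛP.map hTT.measurable.aemeasurable = ΛP :=
        tendsto_nhds_unique hc hΛ
      calc Measure.map (Prod.map (⇑T) (⇑T)) (ΛP : Measure (X × X))
          = ((ΛP.map hTT.measurable.aemeasurable : ProbabilityMeasure (X × X)) :
              Measure (X × X)) := (MeasureTheory.ProbabilityMeasure.toMeasure_map ΛP _).symm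
        _ = (ΛP : Measure (X × X)) := by rw [h2]
    set dB : BoundedContinuousFunction (X × X) ℝ :=
      BoundedContinuousFunction.mkOfCompact
        ⟨fun p => dist p.1 p.2, continuous_fst.dist continuous_snd⟩ with hdB_def
    have hint := MeasureTheory.ProbabilityMeasure.tendsto_iff_forall_integral_tendsto.mp hΛ dB
    have hcost : ∫ p, dB p ∂(ΛP : Measure (X × X)) ≤ ε/2 := by
      refine le_of_tendsto hint (Eventually.of_forall fun j => ?_)
      exact le_of_lt (hlamlt (ψ j))
    have hcost' : ∫ p, dist p.1 p.2 ∂(ΛP : Measure (X × X)) ≤ ε/2 := hcost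
    have hmem : (∫ p, dist p.1 p.2 ∂(ΛP : Measure (X × X))) ∈
        {r : ℝ | ∃ lam : Measure (X × X), IsJoining (⇑T) (μ m) (νP : Measure X) lam ∧
          r = ∫ p, dist p.1 p.2 ∂lam} :=
      ⟨(ΛP : Measure (X × X)), ⟨ΛP.2, hinvΛ, hfst, hsnd⟩, rfl⟩
    rw [rhoBar_def]
    exact le_trans (csInf_le (rhoBar_set_bddBelow _ _) hmem) hcost'
  have hrb_nonneg : 0 ≤ rhoBar (⇑T) (μ m) (νP : Measure X) := by
    rw [rhoBar_def]
    refine le_csInf (rhoBar_set_nonempty hTm _ _ (hinv m) hinvν) ?_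
    rintro r ⟨lam, hlam, rfl⟩
    exact integral_nonneg fun p => dist_nonneg
  rw [dist_zero_right, Real.norm_eq_abs, abs_of_nonneg hrb_nonneg]
  linarith
end Aux
end

section
/- Let (X,T) and (Y,S) be topological dynamical systems, μ ∈ M_T(X) and ν ∈ M_S(Y) ergodic, and F: X×Y → ℝ continuous. Let λ be an ergodic joining of μ and ν achieving F̄(μ,ν) = ∫ F dλ, and let X' ⊆ X, Y' ⊆ Y be Borel sets with μ(X') = ν(Y') = 1. Then there exist Borel sets X'' ⊆ X' and Y'' ⊆ Y' with μ(X'') = ν(Y'') = 1 such that for every x'' ∈ X'' there exists y'' ∈ Y'' with lim_n (1/n) ∑_{j=0}^{n−1} F(T^j x'', S^j y'') = F̄(μ,ν). -/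
open MeasureTheory Filter

/-- A joining of `μ ∈ M_T(X)` and `ν ∈ M_S(Y)`. -/
def IsJoining2 {X Y : Type*} [MeasurableSpace X] [MeasurableSpace Y] (T : X → X) (S : Y → Y)
    (μ : Measure X) (ν : Measure Y) (lam : Measure (X × Y)) : Prop :=
  IsProbabilityMeasure lam ∧ Measure.map (Prod.map T S) lam = lam ∧
    Measure.map Prod.fst lam = μ ∧ Measure.map Prod.snd lam = ν

/-- `F̄(μ,ν)`: infimum of `∫ F` over joinings of `μ` and `ν`. -/
noncomputable def Fbar {X Y : Type*} [MeasurableSpace X] [MeasurableSpace Y]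
    (T : X → X) (S : Y → Y) (F : X × Y → ℝ) (μ : Measure X) (ν : Measure Y) : ℝ :=
  sInf {r : ℝ | ∃ lam : Measure (X × Y), IsJoining2 T S μ ν lam ∧ r = ∫ p, F p ∂lam}

namespace Stmt15Aux

variable {Ω : Type*}

/-- Birkhoff sums. -/
noncomputable def bS (f : Ω → Ω) (g : Ω → ℝ) (n : ℕ) (ω : Ω) : ℝ :=
  ∑ j ∈ Finset.range n, g (f^[j] ω)

/-- Running maxima of Birkhoff sums (including the empty sum `0`). -/
noncomputable def bM (f : Ω → Ω) (g : Ω → ℝ) : ℕ → Ω → ℝ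
  | 0 => fun _ => 0
  | (n+1) => fun ω => max (bM f g n ω) (bS f g (n+1) ω)

theorem bS_succ' (f : Ω → Ω) (g : Ω → ℝ) (n : ℕ) (ω : Ω) :
    bS f g (n+1) ω = g ω + bS f g n (f ω) := by
  unfold bS
  rw [Finset.sum_range_succ']
  simp only [Function.iterate_succ_apply, Function.iterate_zero_apply]
  ring

theorem bS_neg (f : Ω → Ω) (g : Ω → ℝ) (n : ℕ) (ω : Ω) :
    bS f (fun x => -g x) n ω = -(bS f g n ω) := by
  simp [bS]

theorem measurable_bS [MeasurableSpace Ω] {f : Ω → Ω} {g : Ω → ℝ}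
    (hf : Measurable f) (hg : Measurable g) (n : ℕ) : Measurable (bS f g n) :=
  Finset.measurable_sum _ fun j _ => hg.comp (hf.iterate j)

theorem measurable_bM [MeasurableSpace Ω] {f : Ω → Ω} {g : Ω → ℝ}
    (hf : Measurable f) (hg : Measurable g) (n : ℕ) : Measurable (bM f g n) := by
  induction n with
  | zero => exact measurable_const
  | succ n ih => exact ih.max (measurable_bS hf hg (n+1))

theorem bM_nonneg (f : Ω → Ω) (g : Ω → ℝ) (n : ℕ) (ω : Ω) : 0 ≤ bM f g n ω := by
  induction n with
  | zero => exact le_refl 0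
  | succ n ih => exact le_max_of_le_left ih

theorem bM_mono (f : Ω → Ω) (g : Ω → ℝ) (ω : Ω) : Monotone (fun n => bM f g n ω) :=
  monotone_nat_of_le_succ fun n => le_max_left _ _

theorem bS_le_bM (f : Ω → Ω) (g : Ω → ℝ) {k n : ℕ} (hk : k ≤ n) (ω : Ω) :
    bS f g k ω ≤ bM f g n ω := by
  induction n with
  | zero =>
    interval_cases k
    simp [bS, bM]
  | succ n ih =>
    rcases Nat.lt_or_ge k (n+1) with h | h
    · exact le_trans (ih (Nat.lt_succ_iff.1 h)) (le_max_left _ _)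
    · have : k = n + 1 := le_antisymm hk h
      subst this
      exact le_max_right _ _

theorem bM_key (f : Ω → Ω) (g : Ω → ℝ) (n : ℕ) (ω : Ω) :
    bM f g n ω ≤ max 0 (g ω + bM f g n (f ω)) := by
  induction n with
  | zero => simp [bM]
  | succ n ih =>
    refine max_le ?_ ?_
    · exact le_trans ih (max_le_max (le_refl 0)
        (add_le_add (le_refl _) (bM_mono f g (f ω) (Nat.le_succ n))))
    · refine le_trans ?_ (le_max_right 0 _)
      rw [bS_succ']
      exact add_le_add (le_refl _) (bS_le_bM f g (Nat.le_succ n) (f ω))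

theorem abs_bS_le (f : Ω → Ω) {g : Ω → ℝ} {C : ℝ} (hbd : ∀ ω, |g ω| ≤ C) (n : ℕ) (ω : Ω) :
    |bS f g n ω| ≤ n * C := by
  calc |bS f g n ω| ≤ ∑ j ∈ Finset.range n, |g (f^[j] ω)| := Finset.abs_sum_le_sum_abs _ _
    _ ≤ ∑ _j ∈ Finset.range n, C := Finset.sum_le_sum fun j _ => hbd _
    _ = n * C := by simp [mul_comm]

theorem bM_le (f : Ω → Ω) {g : Ω → ℝ} {C : ℝ} (hC : 0 ≤ C) (hbd : ∀ ω, |g ω| ≤ C)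
    (n : ℕ) (ω : Ω) : bM f g n ω ≤ n * C := by
  induction n with
  | zero => simp [bM]
  | succ n ih =>
    refine max_le (le_trans ih ?_) ?_
    · have : (n : ℝ) ≤ (n+1 : ℕ) := by push_cast; linarith
      nlinarith
    · exact le_trans (le_abs_self _) (abs_bS_le f hbd (n+1) ω)

theorem abs_bM_le (f : Ω → Ω) {g : Ω → ℝ} {C : ℝ} (hC : 0 ≤ C) (hbd : ∀ ω, |g ω| ≤ C)
    (n : ℕ) (ω : Ω) : |bM f g n ω| ≤ n * C := by
  rw [abs_of_nonneg (bM_nonneg f g n ω)]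
  exact bM_le f hC hbd n ω

theorem integrable_of_bdd [MeasurableSpace Ω] {m : Measure Ω} [IsFiniteMeasure m]
    {u : Ω → ℝ} (hu : Measurable u) {C : ℝ} (hbd : ∀ ω, |u ω| ≤ C) : Integrable u m :=
  (integrable_const C).mono' hu.aestronglyMeasurable
    (Filter.Eventually.of_forall fun ω => by simpa [Real.norm_eq_abs] using hbd ω)

/-- Maximal ergodic theorem (Garsia's proof), one step. -/
theorem maximal_step [MeasurableSpace Ω] {m : Measure Ω} [IsProbabilityMeasure m]
    {f : Ω → Ω} (hf : MeasurePreserving f m m) {g : Ω → ℝ} (hg : Measurable g)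
    {C : ℝ} (hC : 0 ≤ C) (hbd : ∀ ω, |g ω| ≤ C) (n : ℕ) :
    0 ≤ ∫ ω in {ω | 0 < bM f g n ω}, g ω ∂m := by
  set M := bM f g n with hM
  set E := {ω | 0 < M ω} with hEdef
  have hMmeas : Measurable M := measurable_bM hf.measurable hg n
  have hE : MeasurableSet E := measurableSet_lt measurable_const hMmeas
  have intM : Integrable M m := integrable_of_bdd hMmeas (abs_bM_le f hC hbd n)
  have intMf : Integrable (fun ω => M (f ω)) m :=
    integrable_of_bdd (hMmeas.comp hf.measurable) (fun ω => abs_bM_le f hC hbd n (f ω))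
  have intg : Integrable g m := integrable_of_bdd hg hbd
  have step1 : ∫ ω, M (f ω) ∂m = ∫ ω, M ω ∂m := by
    rw [← integral_map hf.measurable.aemeasurable
      (hf.map_eq ▸ hMmeas.aestronglyMeasurable), hf.map_eq]
  have step2 : ∫ ω in E, M ω ∂m = ∫ ω, M ω ∂m := by
    rw [← integral_add_compl hE intM]
    have : ∫ ω in Eᶜ, M ω ∂m = 0 := by
      apply setIntegral_eq_zero_of_forall_eq_zero
      intro ω hω
      have h1 : ¬ (0 < M ω) := hω
      exact le_antisymm (not_lt.1 h1) (bM_nonneg f g n ω)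
    rw [this, add_zero]
  have step3 : ∫ ω in E, M (f ω) ∂m ≤ ∫ ω, M (f ω) ∂m :=
    setIntegral_le_integral intMf (Filter.Eventually.of_forall fun ω => bM_nonneg f g n (f ω))
  have step4 : ∀ ω ∈ E, M ω - M (f ω) ≤ g ω := by
    intro ω hω
    have hpos : 0 < M ω := hω
    have := bM_key f g n ω
    rcases le_max_iff.1 this with h | h
    · linarith
    · linarith
  calc (0:ℝ) = ∫ ω, M ω ∂m - ∫ ω, M (f ω) ∂m := by rw [step1]; ring
    _ ≤ ∫ ω in E, M ω ∂m - ∫ ω in E, M (f ω) ∂m := by rw [step2]; linarith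
    _ = ∫ ω in E, (M ω - M (f ω)) ∂m :=
        (integral_sub intM.integrableOn intMf.integrableOn).symm
    _ ≤ ∫ ω in E, g ω ∂m :=
        setIntegral_mono_on (intM.integrableOn.sub intMf.integrableOn) intg.integrableOn hE step4

theorem pos_bS_of_pos_bM (f : Ω → Ω) (g : Ω → ℝ) {n : ℕ} {ω : Ω}
    (h : 0 < bM f g n ω) : ∃ k, 0 < bS f g (k+1) ω := by
  induction n with
  | zero => simp [bM] at h
  | succ n ih =>
    rcases lt_max_iff.1 h with h | h
    · exact ih h
    · exact ⟨n, h⟩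

/-- Maximal ergodic theorem: full-measure version. -/
theorem maximal_full [MeasurableSpace Ω] {m : Measure Ω} [IsProbabilityMeasure m]
    {f : Ω → Ω} (hf : MeasurePreserving f m m) {g : Ω → ℝ} (hg : Measurable g)
    {C : ℝ} (hC : 0 ≤ C) (hbd : ∀ ω, |g ω| ≤ C)
    (hfull : m {ω | ∃ n, 0 < bS f g (n+1) ω} = 1) :
    0 ≤ ∫ ω, g ω ∂m := by
  set E : ℕ → Set Ω := fun n => {ω | 0 < bM f g n ω} with hEdef
  have hEmeas : ∀ n, MeasurableSet (E n) := fun n =>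
    measurableSet_lt measurable_const (measurable_bM hf.measurable hg n)
  have hEmono : Monotone E := fun a b hab ω hω =>
    lt_of_lt_of_le hω (bM_mono f g ω hab)
  have hUnion : (⋃ n, E n) = {ω | ∃ n, 0 < bS f g (n+1) ω} := by
    ext ω
    simp only [Set.mem_iUnion, Set.mem_setOf_eq, hEdef]
    constructor
    · rintro ⟨n, hn⟩; exact pos_bS_of_pos_bM f g hn
    · rintro ⟨k, hk⟩
      exact ⟨k+1, lt_of_lt_of_le hk (bS_le_bM f g (le_refl (k+1)) ω)⟩
  have intg : Integrable g m := integrable_of_bdd hg hbd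
  -- the complements tend to measure zero
  have hInter : (⋂ n, (E n)ᶜ) = {ω | ∃ n, 0 < bS f g (n+1) ω}ᶜ := by
    rw [← hUnion, Set.compl_iUnion]
  have hcompl_zero : m ({ω | ∃ n, 0 < bS f g (n+1) ω}ᶜ) = 0 := by
    have hms : MeasurableSet {ω | ∃ n, 0 < bS f g (n+1) ω} := by
      rw [← hUnion]; exact MeasurableSet.iUnion hEmeas
    rw [prob_compl_eq_one_sub hms, hfull, tsub_self]
  have htend : Tendsto (fun n => m ((E n)ᶜ)) atTop (nhds 0) := by
    have := MeasureTheory.tendsto_measure_iInter_atTop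
      (μ := m) (s := fun n => (E n)ᶜ)
      (fun n => ((hEmeas n).compl).nullMeasurableSet)
      (fun a b hab => Set.compl_subset_compl.2 (hEmono hab))
      ⟨0, measure_ne_top _ _⟩
    rw [hInter, hcompl_zero] at this
    exact this
  set r : ℕ → ℝ := fun n => (m ((E n)ᶜ)).toReal with hr
  have htendr : Tendsto r atTop (nhds 0) := by
    have h0 : ((0:ENNReal)).toReal = 0 := by simp
    have := (ENNReal.tendsto_toReal (a := 0) (by simp)).comp htend
    simpa [hr, Function.comp_def] using this
  have hlow : ∀ n, -(C * r n) ≤ ∫ ω, g ω ∂m := by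
    intro n
    have hsplit : ∫ ω, g ω ∂m = (∫ ω in E n, g ω ∂m) + ∫ ω in (E n)ᶜ, g ω ∂m :=
      (integral_add_compl (hEmeas n) intg).symm
    have h1 : 0 ≤ ∫ ω in E n, g ω ∂m := maximal_step hf hg hC hbd n
    have h2 : ‖∫ ω in (E n)ᶜ, g ω ∂m‖ ≤ C * r n := by
      exact norm_setIntegral_le_of_norm_le_const (measure_lt_top _ _)
        (fun x _ => by simpa [Real.norm_eq_abs] using hbd x)
    rw [Real.norm_eq_abs, abs_le] at h2
    linarith [h2.1]
  have hlim : Tendsto (fun n => -(C * r n)) atTop (nhds 0) := by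
    have := (htendr.const_mul C).neg
    simpa using this
  exact le_of_tendsto' hlim hlow

/-- The set where Birkhoff averages frequently exceed the mean by more than `ε` is null. -/
theorem freq_null [MeasurableSpace Ω] {m : Measure Ω} [IsProbabilityMeasure m]
    {f : Ω → Ω} (hf : Ergodic f m) {g : Ω → ℝ} (hg : Measurable g)
    {C : ℝ} (hC : 0 ≤ C) (hbd : ∀ ω, |g ω| ≤ C) {ε : ℝ} (hε : 0 < ε) :
    m {ω | ∃ q : ℚ, (∫ x, g x ∂m) + ε < (q:ℝ) ∧
        ∃ᶠ n in atTop, (q:ℝ) * n < bS f g n ω} = 0 := by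
  set c := ∫ x, g x ∂m with hc
  set A := {ω | ∃ q : ℚ, c + ε < (q:ℝ) ∧ ∃ᶠ n in atTop, (q:ℝ) * n < bS f g n ω} with hA
  have hArepr : A = ⋃ (q : ℚ), ⋃ (_ : c + ε < (q:ℝ)),
      ⋂ (N : ℕ), ⋃ (n : ℕ), ⋃ (_ : N ≤ n), {ω | (q:ℝ) * n < bS f g n ω} := by
    ext ω
    simp only [hA, Set.mem_setOf_eq, Set.mem_iUnion, Set.mem_iInter, frequently_atTop]
    constructor
    · rintro ⟨q, hq, hfreq⟩
      exact ⟨q, hq, fun N => by obtain ⟨n, hn, h⟩ := hfreq N; exact ⟨n, hn, h⟩⟩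
    · rintro ⟨q, hq, h⟩
      exact ⟨q, hq, fun N => by obtain ⟨n, hn, hh⟩ := h N; exact ⟨n, hn, hh⟩⟩
  have hAmeas : MeasurableSet A := by
    rw [hArepr]
    refine MeasurableSet.iUnion fun q => MeasurableSet.iUnion fun _ =>
      MeasurableSet.iInter fun N => MeasurableSet.iUnion fun n => MeasurableSet.iUnion fun _ => ?_
    exact measurableSet_lt measurable_const (measurable_bS hf.toMeasurePreserving.measurable hg n)
  -- invariance
  have hinv : f ⁻¹' A = A := by
    ext ω
    simp only [Set.mem_preimage, hA, Set.mem_setOf_eq]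
    constructor
    · rintro ⟨q, hq, hfreq⟩
      obtain ⟨q', hq'1, hq'2⟩ := exists_rat_btwn hq
      refine ⟨q', hq'1, ?_⟩
      rw [frequently_atTop] at hfreq ⊢
      intro N
      -- find a threshold beyond which `q' * (n+1) ≤ q * n - C`
      obtain ⟨N₁, hN₁⟩ : ∃ N₁ : ℕ, ∀ n : ℕ, N₁ ≤ n → (q':ℝ) * (n+1) ≤ (q:ℝ) * n - C := by
        obtain ⟨N₁, hN₁⟩ := exists_nat_ge ((C + q') / ((q:ℝ) - q'))
        refine ⟨N₁, fun n hn => ?_⟩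
        have hqq : (0:ℝ) < (q:ℝ) - q' := by exact_mod_cast sub_pos.2 hq'2
        have h1 : (C + (q':ℝ)) / ((q:ℝ) - q') ≤ n := le_trans hN₁ (by exact_mod_cast hn)
        have h2 : C + (q':ℝ) ≤ n * ((q:ℝ) - q') := by
          rw [div_le_iff₀ hqq] at h1; linarith
        nlinarith
      obtain ⟨n, hn, hlt⟩ := hfreq (max N N₁)
      refine ⟨n + 1, le_trans (le_max_left N N₁) hn |>.trans (Nat.le_succ n), ?_⟩
      have hbs : bS f g (n+1) ω = g ω + bS f g n (f ω) := bS_succ' f g n ω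
      have hgC : -C ≤ g ω := neg_le_of_abs_le (hbd ω)
      have hN₁n : (q':ℝ) * (n+1) ≤ (q:ℝ) * n - C := hN₁ n (le_trans (le_max_right N N₁) hn)
      push_cast
      push_cast at hN₁n
      linarith
    · rintro ⟨q, hq, hfreq⟩
      obtain ⟨q', hq'1, hq'2⟩ := exists_rat_btwn hq
      refine ⟨q', hq'1, ?_⟩
      rw [frequently_atTop] at hfreq ⊢
      intro N
      obtain ⟨N₁, hN₁⟩ : ∃ N₁ : ℕ, ∀ n : ℕ, N₁ ≤ n → (q':ℝ) * n ≤ (q:ℝ) * (n+1) - C := by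
        obtain ⟨N₁, hN₁⟩ := exists_nat_ge ((C - (q:ℝ)) / ((q:ℝ) - q'))
        refine ⟨N₁, fun n hn => ?_⟩
        have hqq : (0:ℝ) < (q:ℝ) - q' := by exact_mod_cast sub_pos.2 hq'2
        have h1 : (C - (q:ℝ)) / ((q:ℝ) - q') ≤ n := le_trans hN₁ (by exact_mod_cast hn)
        have h2 : C - (q:ℝ) ≤ n * ((q:ℝ) - q') := by
          rw [div_le_iff₀ hqq] at h1; linarith
        nlinarith
      obtain ⟨n, hn, hlt⟩ := hfreq (max (N+1) (N₁+1))
      obtain ⟨k, rfl⟩ : ∃ k, n = k + 1 := by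
        rcases n with _ | k
        · exfalso; omega
        · exact ⟨k, rfl⟩
      refine ⟨k, by omega, ?_⟩
      have hbs : bS f g (k+1) ω = g ω + bS f g k (f ω) := bS_succ' f g k ω
      have hgC : g ω ≤ C := le_of_abs_le (hbd ω)
      have hN₁k : (q':ℝ) * k ≤ (q:ℝ) * (k+1) - C := hN₁ k (by omega)
      push_cast
      push_cast at hN₁k hlt
      linarith
  rcases hf.ae_empty_or_univ hAmeas hinv with h0 | h1
  · simpa using measure_congr h0
  · exfalso
    have hAfull : m A = 1 := by
      have := measure_congr h1
      simpa [measure_univ] using this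
    set h : Ω → ℝ := fun ω => g ω - (c + ε) with hh
    have hsub : A ⊆ {ω | ∃ n, 0 < bS f h (n+1) ω} := by
      rintro ω ⟨q, hq, hfreq⟩
      obtain ⟨n, hn1, hlt⟩ := frequently_atTop.1 hfreq 1
      obtain ⟨k, rfl⟩ : ∃ k, n = k + 1 := ⟨n - 1, by omega⟩
      refine ⟨k, ?_⟩
      have hbSh : bS f h (k+1) ω = bS f g (k+1) ω - (k+1) * (c + ε) := by
        simp only [hh, bS, Finset.sum_sub_distrib, Finset.sum_const, Finset.card_range,
          nsmul_eq_mul]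
        push_cast
        ring
      have hk1 : (0:ℝ) < (k:ℝ) + 1 := by positivity
      have : ((c + ε)) * ((k:ℝ)+1) < (q:ℝ) * ((k:ℝ)+1) := by
        apply mul_lt_mul_of_pos_right hq hk1
      push_cast at hlt
      rw [hbSh]
      push_cast
      nlinarith
    have hfull2 : m {ω | ∃ n, 0 < bS f h (n+1) ω} = 1 := by
      refine le_antisymm prob_le_one ?_
      calc (1:ENNReal) = m A := hAfull.symm
        _ ≤ _ := measure_mono hsub
    have hhmeas : Measurable h := hg.sub measurable_const
    have hhbd : ∀ ω, |h ω| ≤ C + |c + ε| := by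
      intro ω
      calc |h ω| = |g ω - (c + ε)| := rfl
        _ ≤ |g ω| + |c + ε| := abs_sub _ _
        _ ≤ C + |c + ε| := by linarith [hbd ω]
    have hC' : (0:ℝ) ≤ C + |c + ε| := by positivity
    have hge := maximal_full hf.toMeasurePreserving hhmeas hC' hhbd hfull2
    have hinth : ∫ ω, h ω ∂m = -ε := by
      rw [hh]
      rw [integral_sub (integrable_of_bdd hg hbd) (integrable_const _)]
      simp [measure_univ, ← hc]
    rw [hinth] at hge
    linarith

/-- Birkhoff's pointwise ergodic theorem for ergodic maps and bounded measurable functions. -/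
theorem birkhoff [MeasurableSpace Ω] {m : Measure Ω} [IsProbabilityMeasure m]
    {f : Ω → Ω} (hf : Ergodic f m) {g : Ω → ℝ} (hg : Measurable g)
    {C : ℝ} (hC : 0 ≤ C) (hbd : ∀ ω, |g ω| ≤ C) :
    ∀ᵐ ω ∂m, Tendsto (fun n : ℕ => (n:ℝ)⁻¹ * bS f g n ω) atTop (nhds (∫ x, g x ∂m)) := by
  set c := ∫ x, g x ∂m with hc
  have hnegint : ∫ x, -g x ∂m = -c := by rw [integral_neg]
  have hbd' : ∀ ω, |(-g) ω| ≤ C := fun ω => by simpa [abs_neg] using hbd ω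
  have keyP : ∀ᵐ ω ∂m, ∀ k : ℕ, ¬ ∃ q : ℚ, c + 1/((k:ℝ)+1) < (q:ℝ) ∧
      ∃ᶠ n in atTop, (q:ℝ) * n < bS f g n ω := by
    rw [MeasureTheory.ae_all_iff]
    intro k
    have hεk : (0:ℝ) < 1/((k:ℝ)+1) := by positivity
    have := freq_null hf hg hC hbd hεk
    rw [← hc] at this
    rw [MeasureTheory.ae_iff]
    simp only [not_not]
    exact this
  have keyN : ∀ᵐ ω ∂m, ∀ k : ℕ, ¬ ∃ q : ℚ, -c + 1/((k:ℝ)+1) < (q:ℝ) ∧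
      ∃ᶠ n in atTop, (q:ℝ) * n < bS f (fun x => -g x) n ω := by
    rw [MeasureTheory.ae_all_iff]
    intro k
    have hεk : (0:ℝ) < 1/((k:ℝ)+1) := by positivity
    have := freq_null hf hg.neg hC hbd' hεk
    rw [show ∫ x, (-g) x ∂m = -c from hnegint] at this
    rw [MeasureTheory.ae_iff]
    simp only [not_not]
    exact this
  filter_upwards [keyP, keyN] with ω hP hN
  rw [Metric.tendsto_atTop]
  intro δ hδ
  obtain ⟨k, hk⟩ := exists_nat_one_div_lt (half_pos hδ)
  -- upper bound
  have h1 : c + 1/((k:ℝ)+1) < c + δ := by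
    have : 1/((k:ℝ)+1) < δ/2 := hk
    linarith
  obtain ⟨q, hq1, hq2⟩ := exists_rat_btwn h1
  have hup : ∀ᶠ n in atTop, bS f g n ω ≤ (q:ℝ) * n := by
    have := hP k
    push_neg at this
    have h2 := this q hq1
    filter_upwards [h2] with n hn
    exact hn
  -- lower bound
  have h1' : -c + 1/((k:ℝ)+1) < -c + δ := by
    have : 1/((k:ℝ)+1) < δ/2 := hk
    linarith
  obtain ⟨q', hq'1, hq'2⟩ := exists_rat_btwn h1'
  have hlow : ∀ᶠ n in atTop, -(bS f g n ω) ≤ (q':ℝ) * n := by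
    have := hN k
    push_neg at this
    have h2 := this q' hq'1
    filter_upwards [h2] with n hn
    have := hn
    rwa [bS_neg] at this
  obtain ⟨N, hNall⟩ := eventually_atTop.1 ((hup.and hlow).and (eventually_ge_atTop 1))
  refine ⟨N, fun n hn => ?_⟩
  obtain ⟨⟨hn1, hn2⟩, hn3⟩ := hNall n hn
  have hnpos : (0:ℝ) < n := by exact_mod_cast hn3
  have havg1 : (n:ℝ)⁻¹ * bS f g n ω ≤ (q:ℝ) := by
    rw [inv_mul_eq_div, div_le_iff₀ hnpos]
    linarith [hn1]
  have havg2 : -((q':ℝ)) ≤ (n:ℝ)⁻¹ * bS f g n ω := by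
    rw [inv_mul_eq_div, le_div_iff₀ hnpos]
    nlinarith [hn2]
  rw [Real.dist_eq, abs_lt]
  constructor
  · -- c - avg: need avg > c - δ, i.e. -(q') ≥ ... q' < -c + δ so -q' > c - δ
    have : (q':ℝ) < -c + δ := hq'2
    linarith
  · have : (q:ℝ) < c + δ := hq2
    linarith

theorem inter_full [MeasurableSpace Ω] {m : Measure Ω} [IsProbabilityMeasure m]
    {s u : Set Ω} (hs : MeasurableSet s) (hu : MeasurableSet u)
    (h1 : m s = 1) (h2 : m u = 1) : m (s ∩ u) = 1 := by
  have hs0 : m sᶜ = 0 := by rw [prob_compl_eq_one_sub hs, h1, tsub_self]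
  have hu0 : m uᶜ = 0 := by rw [prob_compl_eq_one_sub hu, h2, tsub_self]
  have : m ((s ∩ u)ᶜ) = 0 := by
    rw [Set.compl_inter]
    exact measure_union_null hs0 hu0
  rw [prob_compl_eq_one_sub (hs.inter hu)] at this
  have hle : m (s ∩ u) ≤ 1 := prob_le_one
  rcases eq_or_lt_of_le hle with h | h
  · exact h
  · exfalso
    rw [tsub_eq_zero_iff_le] at this
    exact absurd this (not_le.2 h)

theorem full_union {Ω' : Type*} [MeasurableSpace Ω'] (ρ : Measure Ω') [IsProbabilityMeasure ρ]
    (a : ℕ → ENNReal) (u : ℕ → Set Ω')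
    (hlb : ∀ n, 1 < a n + ((n:ENNReal)+1)⁻¹) (hu : ∀ n, a n ≤ ρ (u n)) :
    ρ (⋃ n, u n) = 1 := by
  refine le_antisymm prob_le_one ?_
  refine ENNReal.le_of_forall_pos_le_add fun ε hε hlt => ?_
  obtain ⟨n, hn⟩ := ENNReal.exists_inv_nat_lt (show (ε:ENNReal) ≠ 0 by
    simpa using (ENNReal.coe_ne_zero.2 (ne_of_gt hε)))
  have hstep : ((n:ENNReal)+1)⁻¹ ≤ (ε:ENNReal) := by
    refine le_trans ?_ (le_of_lt hn)
    apply ENNReal.inv_le_inv.2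
    exact_mod_cast Nat.le_succ n
  calc (1:ENNReal) ≤ a n + ((n:ENNReal)+1)⁻¹ := le_of_lt (hlb n)
    _ ≤ ρ (u n) + (ε:ENNReal) := add_le_add (hu n) hstep
    _ ≤ ρ (⋃ k, u k) + ε := add_le_add_left (measure_mono (Set.subset_iUnion u n)) _

end Stmt15Aux

open Stmt15Aux in
/-- for ergodic `μ`, `ν` and an ergodic joining `λ` achieving
`F̄(μ,ν)`, and full-measure Borel sets `X'`, `Y'`, there are full-measure Borel
subsets `X'' ⊆ X'`, `Y'' ⊆ Y'` such that every point of `X''` is matched by a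
point of `Y''` along which the averages of `F` converge to `F̄(μ,ν)`. -/
theorem stmt15 {X Y : Type*}
    [MetricSpace X] [CompactSpace X] [MeasurableSpace X] [BorelSpace X]
    [MetricSpace Y] [CompactSpace Y] [MeasurableSpace Y] [BorelSpace Y]
    (T : X → X) (hT : Continuous T) (S : Y → Y) (hS : Continuous S)
    (F : X × Y → ℝ) (hF : Continuous F)
    (μ : Measure X) [IsProbabilityMeasure μ] (hμerg : Ergodic T μ)
    (ν : Measure Y) [IsProbabilityMeasure ν] (hνerg : Ergodic S ν)
    (lam : Measure (X × Y)) (hlam : IsJoining2 T S μ ν lam)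
    (hlamerg : Ergodic (Prod.map T S) lam)
    (hopt : ∫ p, F p ∂lam = Fbar T S F μ ν)
    (X' : Set X) (Y' : Set Y) (hX' : MeasurableSet X') (hY' : MeasurableSet Y')
    (hX'full : μ X' = 1) (hY'full : ν Y' = 1) :
    ∃ X'' : Set X, ∃ Y'' : Set Y, X'' ⊆ X' ∧ Y'' ⊆ Y' ∧
      MeasurableSet X'' ∧ MeasurableSet Y'' ∧ μ X'' = 1 ∧ ν Y'' = 1 ∧
      ∀ x ∈ X'', ∃ y ∈ Y'',
        Tendsto (fun n : ℕ => (n : ℝ)⁻¹ * ∑ j ∈ Finset.range n, F (T^[j] x, S^[j] y)) atTop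
          (nhds (Fbar T S F μ ν)) := by
  haveI hlamprob : IsProbabilityMeasure lam := hlam.1
  -- a bound for F
  obtain ⟨C₀, hC₀⟩ : ∃ C₀, ∀ p, |F p| ≤ C₀ := by
    obtain ⟨C₀, hC₀⟩ := (isCompact_range hF.norm).bddAbove
    exact ⟨C₀, fun p => by simpa [Real.norm_eq_abs] using hC₀ ⟨p, rfl⟩⟩
  set C := max C₀ 0 with hCdef
  have hC : 0 ≤ C := le_max_right _ _
  have hbd : ∀ p, |F p| ≤ C := fun p => le_trans (hC₀ p) (le_max_left _ _)
  have hFmeas : Measurable F := hF.measurable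
  -- Birkhoff
  have hbirk := birkhoff hlamerg hFmeas hC hbd
  rw [hopt] at hbirk
  set P : X × Y → Prop := fun p =>
    Tendsto (fun n : ℕ => (n:ℝ)⁻¹ * bS (Prod.map T S) F n p) atTop (nhds (Fbar T S F μ ν))
    with hPdef
  have hnull : lam {p | ¬ P p} = 0 := by
    rw [← MeasureTheory.ae_iff]
    exact hbirk
  obtain ⟨t, hsub, htmeas, ht0⟩ := exists_measurable_superset_of_null hnull
  set G := tᶜ with hGdef
  have hGmeas : MeasurableSet G := htmeas.compl
  have hGfull : lam G = 1 := by rw [hGdef, prob_compl_eq_one_sub htmeas, ht0, tsub_zero]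
  have hGP : ∀ p ∈ G, P p := by
    intro p hp
    by_contra h
    exact hp (hsub h)
  -- the product set has full measure
  have hfst : Measurable (Prod.fst : X × Y → X) := measurable_fst
  have hsnd : Measurable (Prod.snd : X × Y → Y) := measurable_snd
  have hprodfull : lam (X' ×ˢ Y') = 1 := by
    have h1 : lam (Prod.fst ⁻¹' X') = 1 := by
      rw [← Measure.map_apply hfst hX', hlam.2.2.1]; exact hX'full
    have h2 : lam (Prod.snd ⁻¹' Y') = 1 := by
      rw [← Measure.map_apply hsnd hY', hlam.2.2.2]; exact hY'full
    rw [Set.prod_eq]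
    exact inter_full (hfst hX') (hsnd hY') h1 h2
  set W := G ∩ (X' ×ˢ Y') with hWdef
  have hWmeas : MeasurableSet W := hGmeas.inter (hX'.prod hY')
  have hWfull : lam W = 1 := inter_full hGmeas (hX'.prod hY') hGfull hprodfull
  -- inner regularity: compact exhaustion of W
  have hK : ∀ n : ℕ, ∃ K ⊆ W, IsCompact K ∧ lam W < lam K + ((n:ENNReal)+1)⁻¹ := by
    intro n
    refine hWmeas.exists_isCompact_lt_add (measure_ne_top _ _) ?_
    simp [ENNReal.inv_ne_zero]
  choose K hKW hKcomp hKlt using hK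
  set X'' := X' ∩ ⋃ n, Prod.fst '' K n with hX''def
  set Y'' := Y' ∩ ⋃ n, Prod.snd '' K n with hY''def
  have hXproj : ∀ n, MeasurableSet (Prod.fst '' K n) := fun n =>
    (((hKcomp n).image continuous_fst).isClosed).measurableSet
  have hYproj : ∀ n, MeasurableSet (Prod.snd '' K n) := fun n =>
    (((hKcomp n).image continuous_snd).isClosed).measurableSet
  have hX''meas : MeasurableSet X'' := hX'.inter (MeasurableSet.iUnion hXproj)
  have hY''meas : MeasurableSet Y'' := hY'.inter (MeasurableSet.iUnion hYproj)
  -- measure lower bounds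
  have hKmeas_lb : ∀ n, 1 < lam (K n) + ((n:ENNReal)+1)⁻¹ := fun n => hWfull ▸ hKlt n
  have hμunion : μ (⋃ n, Prod.fst '' K n) = 1 := by
    refine full_union μ (fun n => lam (K n)) _ hKmeas_lb fun n => ?_
    calc lam (K n) ≤ lam (Prod.fst ⁻¹' (Prod.fst '' K n)) :=
          measure_mono (Set.subset_preimage_image _ _)
      _ = μ (Prod.fst '' K n) := by
          rw [← Measure.map_apply hfst (hXproj n), hlam.2.2.1]
  have hνunion : ν (⋃ n, Prod.snd '' K n) = 1 := by
    refine full_union ν (fun n => lam (K n)) _ hKmeas_lb fun n => ?_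
    calc lam (K n) ≤ lam (Prod.snd ⁻¹' (Prod.snd '' K n)) :=
          measure_mono (Set.subset_preimage_image _ _)
      _ = ν (Prod.snd '' K n) := by
          rw [← Measure.map_apply hsnd (hYproj n), hlam.2.2.2]
  have hX''full : μ X'' = 1 := inter_full hX' (MeasurableSet.iUnion hXproj) hX'full hμunion
  have hY''full : ν Y'' = 1 := inter_full hY' (MeasurableSet.iUnion hYproj) hY'full hνunion
  refine ⟨X'', Y'', Set.inter_subset_left, Set.inter_subset_left,
    hX''meas, hY''meas, hX''full, hY''full, ?_⟩
  intro x hx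
  obtain ⟨hxX', hxU⟩ := hx
  rw [Set.mem_iUnion] at hxU
  obtain ⟨n, ⟨⟨a, b⟩, hpK, hpx⟩⟩ := hxU
  have hax : x = a := hpx.symm
  subst hax
  have hpW : (x, b) ∈ W := hKW n hpK
  obtain ⟨hpG, hpProd⟩ := hpW
  have hbY' : b ∈ Y' := hpProd.2
  have hbU : b ∈ ⋃ k, Prod.snd '' K k := Set.mem_iUnion.2 ⟨n, ⟨(x, b), hpK, rfl⟩⟩
  refine ⟨b, ⟨hbY', hbU⟩, ?_⟩
  have hPxy : P (x, b) := hGP _ hpG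
  rw [hPdef] at hPxy
  have heq : ∀ m : ℕ, bS (Prod.map T S) F m (x, b)
      = ∑ j ∈ Finset.range m, F (T^[j] x, S^[j] b) := by
    intro m
    unfold bS
    refine Finset.sum_congr rfl fun j _ => ?_
    rw [Prod.map_iterate]
    rfl
  simpa [heq] using hPxy
end

section
/- Let (X,T) be a topological dynamical system, (μ_m) a sequence of ergodic T-invariant measures, and μ a T-invariant measure with ρ̄(μ_m, μ) → 0 as m → ∞, where ρ̄ is the joining infimum metric. Then μ is ergodic. -/
open MeasureTheory Filter

section Aux

open ProbabilityTheory Set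
open scoped ENNReal NNReal Topology

lemma aux_lip {X : Type*} [MetricSpace X] (δ : ℝ) (F : Set X) (x y : X) :
    thickenedIndicatorAux δ F x ≤ thickenedIndicatorAux δ F y + edist x y / ENNReal.ofReal δ := by
  unfold thickenedIndicatorAux
  rw [tsub_le_iff_right]
  have h1 : EMetric.infEdist y F / ENNReal.ofReal δ ≤
      edist x y / ENNReal.ofReal δ + EMetric.infEdist x F / ENNReal.ofReal δ := by
    rw [← ENNReal.add_div]
    refine ENNReal.div_le_div_right ?_ _
    rw [add_comm, edist_comm]
    exact EMetric.infEdist_le_infEdist_add_edist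
  calc (1 : ℝ≥0∞) ≤ (1 - EMetric.infEdist y F / ENNReal.ofReal δ) +
        EMetric.infEdist y F / ENNReal.ofReal δ := le_tsub_add
    _ ≤ (1 - EMetric.infEdist y F / ENNReal.ofReal δ) +
        (edist x y / ENNReal.ofReal δ + EMetric.infEdist x F / ENNReal.ofReal δ) :=
      add_le_add le_rfl h1
    _ = 1 - EMetric.infEdist y F / ENNReal.ofReal δ + edist x y / ENNReal.ofReal δ +
        EMetric.infEdist x F / ENNReal.ofReal δ := by ring


variable {X : Type*} [MetricSpace X] [CompactSpace X] [MeasurableSpace X] [BorelSpace X]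

/-- An invariant measure dominated by an ergodic probability measure is proportional to it. -/
lemma invariant_le_ergodic (T : X ≃ₜ X) {κ ν : Measure X} [IsProbabilityMeasure κ]
    (hκ : Ergodic (⇑T) κ) (hν : ν ≤ κ) (hνinv : Measure.map (⇑T) ν = ν) :
    ν = ν Set.univ • κ := by
  haveI : IsFiniteMeasure ν :=
    ⟨lt_of_le_of_lt (hν Set.univ) (by simp [measure_univ])⟩
  have hac : ν ≪ κ := hν.absolutelyContinuous
  set g := ν.rnDeriv κ with hgdef
  have hg : Measurable g := Measure.measurable_rnDeriv ν κ
  have hwd : κ.withDensity g = ν := Measure.withDensity_rnDeriv_eq ν κ hac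
  have hTmeas : Measurable (⇑T) := T.continuous.measurable
  have hTemb : MeasurableEmbedding (⇑T) := T.toMeasurableEquiv.measurableEmbedding
  have hcomp : g ∘ ⇑T =ᵐ[κ] g := by
    apply ae_eq_of_forall_setLIntegral_eq_of_sigmaFinite (hg.comp hTmeas) hg
    intro A hA _
    set t : Set X := ⇑T.symm ⁻¹' A with htdef
    have ht : MeasurableSet t := T.symm.continuous.measurable hA
    have hpre : ⇑T ⁻¹' t = A := by
      ext x; simp [htdef]
    have h1 : ∫⁻ x in A, (g ∘ ⇑T) x ∂κ = ∫⁻ x in t, g x ∂κ := by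
      rw [← hpre]
      exact hκ.toMeasurePreserving.setLIntegral_comp_preimage_emb hTemb g t
    have h2 : ∫⁻ x in t, g x ∂κ = ν t := by
      rw [← hwd, withDensity_apply g ht]
    have h3 : ν t = ν A := by
      conv_lhs => rw [← hνinv]
      rw [Measure.map_apply hTmeas ht, hpre]
    have h4 : ν A = ∫⁻ x in A, g x ∂κ := by
      rw [← hwd, withDensity_apply g hA]
    rw [h1, h2, h3, h4]
  obtain ⟨c, hc⟩ := hκ.ae_eq_const_of_ae_eq_comp₀ hg.nullMeasurable hcomp
  have : ν = c • κ := by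
    rw [← hwd, withDensity_congr_ae hc]
    exact withDensity_const c
  rw [this]
  congr 1
  simp [measure_univ]


lemma restrict_joining (T : X ≃ₜ X) {κ μ : Measure X} [IsProbabilityMeasure κ]
    [IsProbabilityMeasure μ] (hκerg : Ergodic (⇑T) κ) {lam : Measure (X × X)}
    (hj : IsJoining (⇑T) κ μ lam) {t : Set X} (ht : MeasurableSet t) (hTt : ⇑T ⁻¹' t = t)
    (h0 : μ t ≠ 0) :
    Measure.map Prod.fst ((μ t)⁻¹ • lam.restrict (Prod.snd ⁻¹' t)) = κ ∧
      Measure.map Prod.snd ((μ t)⁻¹ • lam.restrict (Prod.snd ⁻¹' t)) = (μ t)⁻¹ • μ.restrict t ∧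
      IsProbabilityMeasure ((μ t)⁻¹ • lam.restrict (Prod.snd ⁻¹' t)) := by
  obtain ⟨hlp, hlinv, hlf, hls⟩ := hj
  haveI := hlp
  have hTmeas : Measurable (⇑T) := T.continuous.measurable
  have hTT : Measurable (Prod.map (⇑T) (⇑T)) := (hTmeas.comp measurable_fst).prodMk
    (hTmeas.comp measurable_snd)
  set B : Set (X × X) := Prod.snd ⁻¹' t with hBdef
  have hB : MeasurableSet B := measurable_snd ht
  have hlamB : lam B = μ t := by
    rw [← hls, Measure.map_apply measurable_snd ht]
  have htop : μ t ≠ ∞ := measure_ne_top μ t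
  -- second marginal
  have hsnd : Measure.map Prod.snd (lam.restrict B) = μ.restrict t := by
    rw [← hls, Measure.restrict_map measurable_snd ht]
  -- invariance of the restriction
  have hresinv : Measure.map (Prod.map (⇑T) (⇑T)) (lam.restrict B) = lam.restrict B := by
    have hpre : Prod.map (⇑T) (⇑T) ⁻¹' B = B := by
      ext p
      simpa [hBdef] using Set.ext_iff.mp hTt p.2
    conv_lhs => rw [← hpre]
    rw [← Measure.restrict_map hTT hB, hlinv]
  -- first marginal of the restriction
  set ν : Measure X := Measure.map Prod.fst (lam.restrict B) with hνdef
  have hν_le : ν ≤ κ := by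
    rw [Measure.le_iff]
    intro u hu
    rw [hνdef, Measure.map_apply measurable_fst hu, ← hlf,
      Measure.map_apply measurable_fst hu]
    exact Measure.restrict_le_self _
  have hν_inv : Measure.map (⇑T) ν = ν := by
    have hco : (⇑T ∘ Prod.fst : X × X → X) = Prod.fst ∘ Prod.map (⇑T) (⇑T) := rfl
    rw [hνdef, Measure.map_map hTmeas measurable_fst, hco,
      ← Measure.map_map measurable_fst hTT, hresinv]
  have hν_univ : ν Set.univ = μ t := by
    rw [hνdef, Measure.map_apply measurable_fst MeasurableSet.univ]
    simpa using hlamB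
  have hν : ν = (μ t) • κ := by
    rw [invariant_le_ergodic T hκerg hν_le hν_inv, hν_univ]
  refine ⟨?_, ?_, ?_⟩
  · rw [Measure.map_smul, ← hνdef, hν, smul_smul, ENNReal.inv_mul_cancel h0 htop, one_smul]
  · rw [Measure.map_smul, hsnd]
  · constructor
    rw [Measure.smul_apply, Measure.restrict_apply MeasurableSet.univ, Set.univ_inter, hlamB,
      smul_eq_mul, ENNReal.inv_mul_cancel h0 htop]


lemma coupling_exists (T : X ≃ₜ X) {κ μ : Measure X} [IsProbabilityMeasure κ]
    [IsProbabilityMeasure μ] (hκerg : Ergodic (⇑T) κ) {lam : Measure (X × X)}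
    (hj : IsJoining (⇑T) κ μ lam) {s : Set X} (hs : MeasurableSet s) (hTs : ⇑T ⁻¹' s = s)
    (h0 : μ s ≠ 0) (h1 : μ s ≠ 1) :
    ∃ π : Measure (X × X),
      Measure.map Prod.fst π = (μ s)⁻¹ • μ.restrict s ∧
      Measure.map Prod.snd π = (μ sᶜ)⁻¹ • μ.restrict sᶜ ∧
      ∫⁻ p, edist p.1 p.2 ∂π ≤ ((μ s)⁻¹ + (μ sᶜ)⁻¹) * ∫⁻ p, edist p.1 p.2 ∂lam := by
  haveI : Nonempty X := by
    by_contra h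
    rw [not_nonempty_iff] at h
    have h2 : μ Set.univ = 1 := measure_univ
    rw [Set.univ_eq_empty_iff.mpr h, measure_empty] at h2
    exact zero_ne_one h2
  have hsc : MeasurableSet sᶜ := hs.compl
  have hTsc : ⇑T ⁻¹' sᶜ = sᶜ := by rw [Set.preimage_compl, hTs]
  have h0c : μ sᶜ ≠ 0 := by
    rw [prob_compl_eq_one_sub hs]
    simpa [tsub_eq_zero_iff_le] using fun hle => h1 (le_antisymm prob_le_one hle)
  set a := μ s
  set b := μ sᶜ
  set lam₁ : Measure (X × X) := a⁻¹ • lam.restrict (Prod.snd ⁻¹' s) with hl1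
  set lam₂ : Measure (X × X) := b⁻¹ • lam.restrict (Prod.snd ⁻¹' sᶜ) with hl2
  obtain ⟨h1f, h1s, h1p⟩ := restrict_joining T hκerg hj hs hTs h0
  obtain ⟨h2f, h2s, h2p⟩ := restrict_joining T hκerg hj hsc hTsc h0c
  haveI := h1p; haveI := h2p
  set κ₁ := lam₁.condKernel
  set κ₂ := lam₂.condKernel
  set K : Kernel X (X × X) := κ₁ ×ₖ κ₂ with hK
  have hfst₁ : lam₁.fst = κ := h1f
  have hfst₂ : lam₂.fst = κ := h2f
  have hdis₁ : lam₁.fst ⊗ₘ κ₁ = lam₁ := lam₁.disintegrate κ₁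
  have hdis₂ : lam₂.fst ⊗ₘ κ₂ = lam₂ := lam₂.disintegrate κ₂
  refine ⟨κ.bind K, ?_, ?_, ?_⟩
  · ext u hu
    rw [Measure.map_apply measurable_fst hu, Measure.bind_apply (measurable_fst hu) K.measurable.aemeasurable]
    have : ∀ x, K x (Prod.fst ⁻¹' u) = κ₁ x u := by
      intro x
      rw [hK, Kernel.prod_apply, ← Set.prod_univ, Measure.prod_prod, measure_univ, mul_one]
    simp_rw [this]
    have h := Measure.compProd_apply_prod (μ := lam₁.fst) (κ := κ₁) MeasurableSet.univ hu
    rw [hdis₁, hfst₁, Measure.restrict_univ] at h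
    rw [← h, Set.univ_prod, ← Measure.map_apply measurable_snd hu, h1s]
  · ext u hu
    rw [Measure.map_apply measurable_snd hu, Measure.bind_apply (measurable_snd hu) K.measurable.aemeasurable]
    have : ∀ x, K x (Prod.snd ⁻¹' u) = κ₂ x u := by
      intro x
      rw [hK, Kernel.prod_apply, ← Set.univ_prod, Measure.prod_prod, measure_univ, one_mul]
    simp_rw [this]
    have h := Measure.compProd_apply_prod (μ := lam₂.fst) (κ := κ₂) MeasurableSet.univ hu
    rw [hdis₂, hfst₂, Measure.restrict_univ] at h
    rw [← h, Set.univ_prod, ← Measure.map_apply measurable_snd hu, h2s]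
  · have hedist : Measurable fun p : X × X => edist p.1 p.2 :=
      measurable_fst.edist measurable_snd
    rw [Measure.lintegral_bind K.measurable.aemeasurable hedist.aemeasurable]
    have hbound : ∀ x, ∫⁻ p, edist p.1 p.2 ∂(K x) ≤
        (∫⁻ y, edist x y ∂(κ₁ x)) + ∫⁻ z, edist x z ∂(κ₂ x) := by
      intro x
      rw [hK, Kernel.prod_apply, lintegral_prod _ hedist.aemeasurable]
      calc ∫⁻ y, ∫⁻ z, edist y z ∂(κ₂ x) ∂(κ₁ x)
          ≤ ∫⁻ y, ∫⁻ z, edist x y + edist x z ∂(κ₂ x) ∂(κ₁ x) := by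
            refine lintegral_mono fun y => lintegral_mono fun z => ?_
            rw [edist_comm x y]; exact edist_triangle _ _ _
        _ = ∫⁻ y, (edist x y + ∫⁻ z, edist x z ∂(κ₂ x)) ∂(κ₁ x) := by
            congr 1; ext y
            rw [lintegral_add_left measurable_const, lintegral_const, measure_univ, mul_one]
        _ = (∫⁻ y, edist x y ∂(κ₁ x)) + ∫⁻ z, edist x z ∂(κ₂ x) := by
            rw [lintegral_add_right _ measurable_const, lintegral_const, measure_univ, mul_one]
    calc ∫⁻ x, ∫⁻ p, edist p.1 p.2 ∂(K x) ∂κ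
        ≤ ∫⁻ x, ((∫⁻ y, edist x y ∂(κ₁ x)) + ∫⁻ z, edist x z ∂(κ₂ x)) ∂κ :=
          lintegral_mono hbound
      _ = (∫⁻ x, ∫⁻ y, edist x y ∂(κ₁ x) ∂κ) + ∫⁻ x, ∫⁻ z, edist x z ∂(κ₂ x) ∂κ := by
          rw [lintegral_add_left]
          exact Measurable.lintegral_kernel_prod_right
            ((measurable_fst.edist measurable_snd) : Measurable (Function.uncurry edist))
      _ = (∫⁻ p, edist p.1 p.2 ∂lam₁) + ∫⁻ p, edist p.1 p.2 ∂lam₂ := by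
          have e1 : ∫⁻ x, ∫⁻ y, edist x y ∂(κ₁ x) ∂κ = ∫⁻ p, edist p.1 p.2 ∂lam₁ := by
            conv_lhs => rw [← hfst₁]
            rw [← Measure.lintegral_compProd hedist, hdis₁]
          have e2 : ∫⁻ x, ∫⁻ z, edist x z ∂(κ₂ x) ∂κ = ∫⁻ p, edist p.1 p.2 ∂lam₂ := by
            conv_lhs => rw [← hfst₂]
            rw [← Measure.lintegral_compProd hedist, hdis₂]
          rw [e1, e2]
      _ ≤ a⁻¹ * (∫⁻ p, edist p.1 p.2 ∂lam) + b⁻¹ * ∫⁻ p, edist p.1 p.2 ∂lam := by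
          gcongr
          · rw [hl1, lintegral_smul_measure, smul_eq_mul]
            gcongr
            exact Measure.restrict_le_self
          · rw [hl2, lintegral_smul_measure, smul_eq_mul]
            gcongr
            exact Measure.restrict_le_self
      _ = (a⁻¹ + b⁻¹) * ∫⁻ p, edist p.1 p.2 ∂lam := by ring

end Aux

section Main
open ProbabilityTheory Set
open scoped ENNReal NNReal Topology

/-- a `ρ̄`-limit of ergodic measures is ergodic. -/
theorem stmt16 {X : Type*} [MetricSpace X] [CompactSpace X]
    [MeasurableSpace X] [BorelSpace X] (T : X ≃ₜ X)
    (μm : ℕ → Measure X) (hprob : ∀ m, IsProbabilityMeasure (μm m))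
    (herg : ∀ m, Ergodic (⇑T) (μm m))
    (μ : Measure X) [IsProbabilityMeasure μ] (hinv : Measure.map (⇑T) μ = μ)
    (hconv : Tendsto (fun m => rhoBar (⇑T) (μm m) μ) atTop (nhds 0)) :
    Ergodic (⇑T) μ := by
  have hTmeas : Measurable (⇑T) := T.continuous.measurable
  have hmp : MeasurePreserving (⇑T) μ μ := ⟨hTmeas, hinv⟩
  refine ⟨hmp, ⟨fun s hs hTs => ?_⟩⟩
  rw [Filter.eventuallyConst_set']
  by_cases h0 : μ s = 0
  · left; exact ae_eq_empty.2 h0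
  by_cases h1 : μ s = 1
  · right
    rw [ae_eq_univ]
    have : μ sᶜ = 0 := by rw [prob_compl_eq_one_sub hs, h1, tsub_self]
    exact this
  exfalso
  have hatop : μ s ≠ ∞ := measure_ne_top μ s
  have hbtop : μ sᶜ ≠ ∞ := measure_ne_top μ sᶜ
  have h0c : μ sᶜ ≠ 0 := by
    rw [prob_compl_eq_one_sub hs]
    intro h
    rw [tsub_eq_zero_iff_le] at h
    exact h1 (le_antisymm prob_le_one h)
  set a := μ s with ha
  set b := μ sᶜ with hb
  set νs : Measure X := a⁻¹ • μ.restrict s with hνs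
  set νc : Measure X := b⁻¹ • μ.restrict sᶜ with hνc
  haveI : IsProbabilityMeasure νs := by
    constructor
    rw [hνs, Measure.smul_apply, Measure.restrict_apply MeasurableSet.univ, Set.univ_inter,
      smul_eq_mul, ENNReal.inv_mul_cancel h0 hatop]
  haveI : IsProbabilityMeasure νc := by
    constructor
    rw [hνc, Measure.smul_apply, Measure.restrict_apply MeasurableSet.univ, Set.univ_inter,
      smul_eq_mul, ENNReal.inv_mul_cancel h0c hbtop]
  -- a sequence of couplings of νs and νc with small transport cost
  have key : ∀ n : ℕ, ∃ π : Measure (X × X),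
      Measure.map Prod.fst π = νs ∧ Measure.map Prod.snd π = νc ∧
      ∫⁻ p, edist p.1 p.2 ∂π ≤ (a⁻¹ + b⁻¹) * ENNReal.ofReal ((n : ℝ) + 1)⁻¹ := by
    intro n
    have hε : (0 : ℝ) < ((n : ℝ) + 1)⁻¹ := by positivity
    have hev : ∀ᶠ m in atTop, rhoBar (⇑T) (μm m) μ < ((n : ℝ) + 1)⁻¹ :=
      hconv.eventually (gt_mem_nhds hε)
    obtain ⟨m, hm⟩ := hev.exists
    haveI := hprob m
    simp only [rhoBar] at hm
    have hSne : {r : ℝ | ∃ lam : Measure (X × X),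
        IsJoining (⇑T) (μm m) μ lam ∧ r = ∫ p, dist p.1 p.2 ∂lam}.Nonempty := by
      refine ⟨_, (μm m).prod μ, ⟨inferInstance, ?_, ?_, ?_⟩, rfl⟩
      · rw [← Measure.map_prod_map _ _ hTmeas hTmeas, (herg m).toMeasurePreserving.map_eq, hinv]
      · have := Measure.fst_prod (μ := μm m) (ν := μ)
        simpa [Measure.fst] using this
      · have := Measure.snd_prod (μ := μm m) (ν := μ)
        simpa [Measure.snd] using this
    have hbdd : BddBelow {r : ℝ | ∃ lam : Measure (X × X),
        IsJoining (⇑T) (μm m) μ lam ∧ r = ∫ p, dist p.1 p.2 ∂lam} := by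
      refine ⟨0, fun r hr => ?_⟩
      obtain ⟨lam, hlam, rfl⟩ := hr
      exact integral_nonneg fun p => dist_nonneg
    obtain ⟨r, ⟨lam, hlam, hreq⟩, hrlt⟩ := (csInf_lt_iff hbdd hSne).mp hm
    haveI := hlam.1
    have hint : Integrable (fun p : X × X => dist p.1 p.2) lam := by
      have := (continuous_dist.continuousOn :
        ContinuousOn (fun p : X × X => dist p.1 p.2) univ).integrableOn_compact' (μ := lam)
          isCompact_univ MeasurableSet.univ
      rwa [integrableOn_univ] at this
    have hE : ∫⁻ p, edist p.1 p.2 ∂lam ≤ ENNReal.ofReal ((n : ℝ) + 1)⁻¹ := by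
      have heq : ∫⁻ p, edist p.1 p.2 ∂lam = ENNReal.ofReal (∫ p, dist p.1 p.2 ∂lam) := by
        rw [ofReal_integral_eq_lintegral_ofReal hint (Eventually.of_forall fun p => dist_nonneg)]
        simp_rw [edist_dist]
      rw [heq]
      exact ENNReal.ofReal_le_ofReal (le_of_lt (hreq ▸ hrlt))
    obtain ⟨π, hπ1, hπ2, hπ3⟩ := coupling_exists T (herg m) hlam hs hTs h0 h1
    exact ⟨π, hπ1, hπ2, le_trans hπ3 (mul_le_mul_right hE _)⟩
  choose Lam hLf hLs hLe using key
  have hedistm : Measurable fun p : X × X => edist p.1 p.2 :=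
    measurable_fst.edist measurable_snd
  -- equality on closed sets
  have hFeq : ∀ F : Set X, IsClosed F → νs F = νc F := by
    intro F hF
    have hδeq : ∀ δ : ℝ, 0 < δ →
        ∫⁻ x, thickenedIndicatorAux δ F x ∂νs = ∫⁻ x, thickenedIndicatorAux δ F x ∂νc := by
      intro δ hδ
      have hauxm : Measurable (thickenedIndicatorAux δ F) :=
        (continuous_thickenedIndicatorAux hδ F).measurable
      set C : ℝ≥0∞ := (a⁻¹ + b⁻¹) / ENNReal.ofReal δ with hC
      have hCtop : C ≠ ∞ := by
        rw [hC, div_eq_mul_inv]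
        exact ENNReal.mul_ne_top
          (ENNReal.add_ne_top.mpr ⟨ENNReal.inv_ne_top.mpr h0, ENNReal.inv_ne_top.mpr h0c⟩)
          (ENNReal.inv_ne_top.mpr (by simpa [ENNReal.ofReal_eq_zero, not_le] using hδ))
      have hgen : ∀ n : ℕ, ∀ π : Measure (X × X), ∀ m1 m2 : Measure X,
          Measure.map Prod.fst π = m1 →
          Measure.map Prod.snd π = m2 →
          ∫⁻ p, edist p.1 p.2 ∂π ≤ (a⁻¹ + b⁻¹) * ENNReal.ofReal ((n : ℝ) + 1)⁻¹ →
          ∫⁻ x, thickenedIndicatorAux δ F x ∂(Measure.map Prod.fst π) ≤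
            ∫⁻ x, thickenedIndicatorAux δ F x ∂(Measure.map Prod.snd π) +
              C * ENNReal.ofReal ((n : ℝ) + 1)⁻¹ := by
        intro n π m1 m2 hf' hs' he'
        rw [lintegral_map hauxm measurable_fst, lintegral_map hauxm measurable_snd]
        calc ∫⁻ p, thickenedIndicatorAux δ F p.1 ∂π
            ≤ ∫⁻ p, (thickenedIndicatorAux δ F p.2 + edist p.1 p.2 / ENNReal.ofReal δ) ∂π :=
              lintegral_mono fun p => aux_lip δ F p.1 p.2
          _ = (∫⁻ p, thickenedIndicatorAux δ F p.2 ∂π) +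
              (∫⁻ p, edist p.1 p.2 ∂π) / ENNReal.ofReal δ := by
              rw [lintegral_add_left (f := fun p : X × X => thickenedIndicatorAux δ F p.2)
                (hauxm.comp measurable_snd)]
              congr 1
              simp_rw [div_eq_mul_inv]
              exact lintegral_mul_const _ hedistm
          _ ≤ (∫⁻ p, thickenedIndicatorAux δ F p.2 ∂π) + C * ENNReal.ofReal ((n : ℝ) + 1)⁻¹ := by
              gcongr
              rw [hC, ENNReal.div_eq_inv_mul, ENNReal.div_eq_inv_mul, mul_assoc]
              exact mul_le_mul_right he' _
      have h12 : ∀ n : ℕ, ∫⁻ x, thickenedIndicatorAux δ F x ∂νs ≤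
          ∫⁻ x, thickenedIndicatorAux δ F x ∂νc + C * ENNReal.ofReal ((n : ℝ) + 1)⁻¹ := by
        intro n
        have := hgen n (Lam n) νs νc (hLf n) (hLs n) (hLe n)
        rwa [hLf n, hLs n] at this
      have h21 : ∀ n : ℕ, ∫⁻ x, thickenedIndicatorAux δ F x ∂νc ≤
          ∫⁻ x, thickenedIndicatorAux δ F x ∂νs + C * ENNReal.ofReal ((n : ℝ) + 1)⁻¹ := by
        intro n
        -- use the swapped coupling
        set π' : Measure (X × X) := Measure.map Prod.swap (Lam n) with hπ'
        have hf' : Measure.map Prod.fst π' = νc := by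
          rw [hπ', Measure.map_map measurable_fst measurable_swap]
          exact hLs n
        have hs' : Measure.map Prod.snd π' = νs := by
          rw [hπ', Measure.map_map measurable_snd measurable_swap]
          exact hLf n
        have he' : ∫⁻ p, edist p.1 p.2 ∂π' ≤ (a⁻¹ + b⁻¹) * ENNReal.ofReal ((n : ℝ) + 1)⁻¹ := by
          rw [hπ', lintegral_map hedistm measurable_swap]
          simp_rw [Prod.fst_swap, Prod.snd_swap, edist_comm]
          exact hLe n
        have := hgen n π' νc νs hf' hs' he'
        rwa [hf', hs'] at this
      have hlim : Tendsto (fun n : ℕ => C * ENNReal.ofReal ((n : ℝ) + 1)⁻¹) atTop (𝓝 0) := by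
        have h1 : Tendsto (fun n : ℕ => ((n : ℝ) + 1)⁻¹) atTop (𝓝 0) := by
          simpa only [one_div] using tendsto_one_div_add_atTop_nhds_zero_nat (𝕜 := ℝ)
        have h2 : Tendsto (fun n : ℕ => ENNReal.ofReal ((n : ℝ) + 1)⁻¹) atTop (𝓝 0) := by
          have h2' := (ENNReal.continuous_ofReal.tendsto 0).comp h1
          rw [ENNReal.ofReal_zero] at h2'
          exact h2'
        simpa using ENNReal.Tendsto.const_mul h2 (Or.inr hCtop)
      refine le_antisymm ?_ ?_
      · refine ge_of_tendsto' ((Tendsto.const_add _ hlim).mono_right (by rw [add_zero])) h12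
      · refine ge_of_tendsto' ((Tendsto.const_add _ hlim).mono_right (by rw [add_zero])) h21
    -- pass δ → 0
    have δpos : ∀ k : ℕ, (0 : ℝ) < ((k : ℝ) + 1)⁻¹ := fun k => by positivity
    have δlim : Tendsto (fun k : ℕ => ((k : ℝ) + 1)⁻¹) atTop (𝓝 0) := by
      simpa only [one_div] using tendsto_one_div_add_atTop_nhds_zero_nat (𝕜 := ℝ)
    have t1 := tendsto_lintegral_thickenedIndicator_of_isClosed (μ := νs) hF δpos δlim
    have t2 := tendsto_lintegral_thickenedIndicator_of_isClosed (μ := νc) hF δpos δlim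
    have hcoe : ∀ (k : ℕ) (x : X),
        ((thickenedIndicator (δpos k) F x : ℝ≥0) : ℝ≥0∞) =
          thickenedIndicatorAux ((k : ℝ) + 1)⁻¹ F x := by
      intro k x
      rw [thickenedIndicator.coeFn_eq_comp]
      exact ENNReal.coe_toNNReal thickenedIndicatorAux_lt_top.ne
    have hseq : ∀ k : ℕ, (fun k : ℕ => ∫⁻ x, ((thickenedIndicator (δpos k) F x : ℝ≥0) : ℝ≥0∞) ∂νs) k
        = (fun k : ℕ => ∫⁻ x, ((thickenedIndicator (δpos k) F x : ℝ≥0) : ℝ≥0∞) ∂νc) k := by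
      intro k
      simp only []
      rw [lintegral_congr (hcoe k), lintegral_congr (hcoe k)]
      exact hδeq _ (δpos k)
    exact tendsto_nhds_unique ((funext hseq : _) ▸ t1) t2
  -- conclude
  have hext : νs = νc := by
    apply MeasureTheory.ext_of_generate_finite _ ?_ isPiSystem_isClosed
      (fun u hu => hFeq u hu) (hFeq univ isClosed_univ)
    rw [BorelSpace.measurable_eq (α := X), borel_eq_generateFrom_isClosed]
  have hνss : νs s = 1 := by
    rw [hνs, Measure.smul_apply, Measure.restrict_apply_self, smul_eq_mul,
      ENNReal.inv_mul_cancel h0 hatop]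
  have hνcs : νc s = 0 := by
    rw [hνc, Measure.smul_apply, Measure.restrict_apply hs, Set.inter_compl_self,
      measure_empty, smul_eq_mul, mul_zero]
  rw [hext, hνcs] at hνss
  exact zero_ne_one hνss

end Main
end

section
/- Let A be a finite alphabet, σ the shift on A^ℤ, d₀(x,y) = 1 if x₀ ≠ y₀ and 0 otherwise, and let ρ be any metric on A^ℤ compatible with the product topology. Then Ornstein's metric d̄_M(μ,ν) = inf_{λ ∈ J(μ,ν)} ∫ d₀ dλ and the metric ρ̄(μ,ν) = inf_{λ ∈ J(μ,ν)} ∫ ρ dλ are uniformly equivalent on M_σ(A^ℤ). -/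
open MeasureTheory Filter

/-- The left shift on `A^ℤ`. -/
def shift {A : Type*} (x : ℤ → A) : ℤ → A := fun i => x (i + 1)

/-- A joining of two shift-invariant measures on `A^ℤ`. -/
def IsShiftJoining {A : Type*} [MeasurableSpace A] (μ ν : Measure (ℤ → A))
    (lam : Measure ((ℤ → A) × (ℤ → A))) : Prop :=
  IsProbabilityMeasure lam ∧ Measure.map (Prod.map shift shift) lam = lam ∧
    Measure.map Prod.fst lam = μ ∧ Measure.map Prod.snd lam = ν

/-- Infimum of the integral of a cost function over shift joinings. -/
noncomputable def costInf {A : Type*} [MeasurableSpace A]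
    (c : (ℤ → A) → (ℤ → A) → ℝ) (μ ν : Measure (ℤ → A)) : ℝ :=
  sInf {r : ℝ | ∃ lam, IsShiftJoining μ ν lam ∧ r = ∫ p, c p.1 p.2 ∂lam}

/-- The Hamming cost at coordinate `0`. -/
noncomputable def dZero {A : Type*} [DecidableEq A] (x y : ℤ → A) : ℝ :=
  if x 0 = y 0 then 0 else 1

section Aux
set_option linter.unusedSectionVars false

variable {A : Type*} [Fintype A] [DecidableEq A] [MeasurableSpace A]
  [MeasurableSingletonClass A]

/-- coordinate cost -/
noncomputable def ccost (i : ℤ) (p : (ℤ → A) × (ℤ → A)) : ℝ :=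
  if p.1 i = p.2 i then 0 else 1

lemma ccost_nonneg (i : ℤ) (p : (ℤ → A) × (ℤ → A)) : 0 ≤ ccost i p := by
  unfold ccost; split <;> norm_num

lemma ccost_le_one (i : ℤ) (p : (ℤ → A) × (ℤ → A)) : ccost i p ≤ 1 := by
  unfold ccost; split <;> norm_num

lemma measurable_shift : Measurable (shift (A := A)) :=
  measurable_pi_lambda _ fun i => measurable_pi_apply (i + 1)

lemma shift_iterate (k : ℕ) (x : ℤ → A) (i : ℤ) : (shift^[k] x) i = x (i + k) := by
  induction k generalizing x i with
  | zero => simp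
  | succ n ih =>
      rw [Function.iterate_succ_apply, ih]
      show x ((i + n) + 1) = x (i + (n + 1 : ℕ))
      congr 1
      push_cast
      ring

lemma ccost_measurable (i : ℤ) : Measurable (ccost (A := A) i) := by
  have h1 : Measurable fun p : (ℤ → A) × (ℤ → A) => p.1 i :=
    (measurable_pi_apply i).comp measurable_fst
  have h2 : Measurable fun p : (ℤ → A) × (ℤ → A) => p.2 i :=
    (measurable_pi_apply i).comp measurable_snd
  exact Measurable.ite (measurableSet_eq_fun h1 h2) measurable_const
    measurable_const

lemma ccost_integrable (i : ℤ) (lam : Measure ((ℤ → A) × (ℤ → A)))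
    [IsProbabilityMeasure lam] : Integrable (ccost i) lam := by
  refine (integrable_const (1 : ℝ)).mono' (ccost_measurable i).aestronglyMeasurable ?_
  filter_upwards with p
  rw [Real.norm_eq_abs, abs_of_nonneg (ccost_nonneg i p)]
  exact ccost_le_one i p

lemma integral_ccost_shift {μ ν : Measure (ℤ → A)} {lam : Measure ((ℤ → A) × (ℤ → A))}
    (h : IsShiftJoining μ ν lam) (i : ℤ) :
    ∫ p, ccost i p ∂lam = ∫ p, ccost 0 p ∂lam := by
  obtain ⟨hp, hinv, -, -⟩ := h
  set T : ((ℤ → A) × (ℤ → A)) → (ℤ → A) × (ℤ → A) := Prod.map shift shift with hTdef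
  have hT : Measurable T := (measurable_shift (A := A)).prodMap (measurable_shift (A := A))
  have hiter : ∀ k : ℕ, Measure.map T^[k] lam = lam := by
    intro k
    induction k with
    | zero => simp
    | succ n ih =>
        have hstep : T^[n + 1] = T ∘ T^[n] := Function.iterate_succ' _ n
        rw [hstep, ← Measure.map_map hT (hT.iterate n), ih, hinv]
  have key : ∀ (j : ℤ) (k : ℕ), ∫ p, ccost (j + k) p ∂lam = ∫ p, ccost j p ∂lam := by
    intro j k
    have e1 : ∫ p, ccost j p ∂lam = ∫ p, ccost j (T^[k] p) ∂lam := by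
      conv_lhs => rw [← hiter k]
      exact integral_map (hT.iterate k).aemeasurable
        (ccost_measurable j).aestronglyMeasurable
    rw [e1]
    refine integral_congr_ae (Filter.Eventually.of_forall fun p => ?_)
    simp [ccost, hTdef, Prod.map_iterate, shift_iterate]
  rcases le_or_gt 0 i with hi | hi
  · have h0 : ((i.toNat : ℤ)) = i := Int.toNat_of_nonneg hi
    have := key 0 i.toNat
    rw [h0, zero_add] at this
    exact this
  · have h0 : (((-i).toNat : ℤ)) = -i := Int.toNat_of_nonneg (by omega)
    have := key i (-i).toNat
    rw [show i + (((-i).toNat : ℤ)) = 0 by rw [h0]; ring] at this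
    exact this.symm

lemma prod_joining {μ ν : Measure (ℤ → A)} (hμ : IsProbabilityMeasure μ)
    (hν : IsProbabilityMeasure ν) (hμs : Measure.map shift μ = μ)
    (hνs : Measure.map shift ν = ν) : IsShiftJoining μ ν (μ.prod ν) := by
  refine ⟨inferInstance, ?_, ?_, ?_⟩
  · rw [← Measure.map_prod_map _ _ measurable_shift measurable_shift, hμs, hνs]
  · rw [show Measure.map Prod.fst (μ.prod ν) = (μ.prod ν).fst from rfl, Measure.fst_prod]
  · rw [show Measure.map Prod.snd (μ.prod ν) = (μ.prod ν).snd from rfl, Measure.snd_prod]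

lemma rho_pair_measurable (ρ : (ℤ → A) → (ℤ → A) → ℝ)
    (hρ_nonneg : ∀ x y, 0 ≤ ρ x y)
    (hρ_symm : ∀ x y, ρ x y = ρ y x)
    (hρ_tri : ∀ x y z, ρ x z ≤ ρ x y + ρ y z)
    (hcompat₁ : ∀ ε > (0 : ℝ), ∃ N : ℕ, ∀ x y : ℤ → A,
      (∀ i : ℤ, |i| ≤ (N : ℤ) → x i = y i) → ρ x y < ε)
    (a0 : A) :
    Measurable fun p : (ℤ → A) × (ℤ → A) => ρ p.1 p.2 := by
  have quad : ∀ a b c d : ℤ → A, |ρ a b - ρ c d| ≤ ρ a c + ρ b d := by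
    intro a b c d
    rw [abs_sub_le_iff]
    constructor
    · have t1 := hρ_tri a c b
      have t2 := hρ_tri c d b
      have t3 := hρ_symm d b
      linarith
    · have t1 := hρ_tri c a d
      have t2 := hρ_tri a b d
      have t3 := hρ_symm c a
      linarith
  choose N hN using fun n : ℕ => hcompat₁ (1 / ((n : ℝ) + 1)) (by positivity)
  set trunc : ℕ → (ℤ → A) → (ℤ → A) :=
    fun n x i => if i ∈ Finset.Icc (-(N n : ℤ)) (N n) then x i else a0 with htrunc
  have hclose : ∀ n x, ρ x (trunc n x) < 1 / ((n : ℝ) + 1) := by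
    intro n x
    refine hN n x (trunc n x) fun i hi => ?_
    obtain ⟨h1, h2⟩ := abs_le.mp hi
    simp [htrunc, h1, h2]
  have hg : ∀ n, Measurable fun p : (ℤ → A) × (ℤ → A) =>
      ρ (trunc n p.1) (trunc n p.2) := by
    intro n
    set W : Finset ℤ := Finset.Icc (-(N n : ℤ)) (N n) with hW
    have heq : (fun p : (ℤ → A) × (ℤ → A) => ρ (trunc n p.1) (trunc n p.2)) =
        (fun q : (W → A) × (W → A) =>
          ρ (fun i => if h : i ∈ W then q.1 ⟨i, h⟩ else a0)
            (fun i => if h : i ∈ W then q.2 ⟨i, h⟩ else a0)) ∘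
        (fun p : (ℤ → A) × (ℤ → A) =>
          ((fun i : W => p.1 i), (fun i : W => p.2 i))) := by
      funext p
      simp only [Function.comp_apply]
      congr 1 <;> funext i <;> by_cases h : i ∈ W <;> simp [htrunc, hW, h]
    rw [heq]
    have hπ1 : Measurable fun p : (ℤ → A) × (ℤ → A) => (fun i : W => p.1 (i : ℤ)) :=
      measurable_pi_lambda _ fun i => (measurable_pi_apply (i : ℤ)).comp measurable_fst
    have hπ2 : Measurable fun p : (ℤ → A) × (ℤ → A) => (fun i : W => p.2 (i : ℤ)) :=
      measurable_pi_lambda _ fun i => (measurable_pi_apply (i : ℤ)).comp measurable_snd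
    exact (measurable_of_countable _).comp (hπ1.prodMk hπ2)
  apply measurable_of_tendsto_metrizable hg
  rw [tendsto_pi_nhds]
  intro p
  have h2 : Tendsto (fun n : ℕ => 2 / ((n : ℝ) + 1)) atTop (nhds 0) := by
    have := tendsto_one_div_add_atTop_nhds_zero_nat.const_mul (2 : ℝ)
    simpa [mul_one_div, div_eq_mul_inv] using this
  have hest : ∀ n : ℕ,
      ‖ρ (trunc n p.1) (trunc n p.2) - ρ p.1 p.2‖ ≤ 2 / ((n : ℝ) + 1) := by
    intro n
    rw [Real.norm_eq_abs]
    have q := quad (trunc n p.1) (trunc n p.2) p.1 p.2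
    have c1 := hclose n p.1
    have c2 := hclose n p.2
    have s1 := hρ_symm (trunc n p.1) p.1
    have s2 := hρ_symm (trunc n p.2) p.2
    have : (2 : ℝ) / ((n : ℝ) + 1) = 1 / ((n : ℝ) + 1) + 1 / ((n : ℝ) + 1) := by ring
    rw [this]
    linarith
  have hz : Tendsto (fun n => ρ (trunc n p.1) (trunc n p.2) - ρ p.1 p.2) atTop
      (nhds 0) := squeeze_zero_norm hest h2
  have := hz.add (tendsto_const_nhds (x := ρ p.1 p.2) (f := atTop))
  simpa using this

end Aux


set_option maxHeartbeats 1000000 in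
/-- Ornstein's metric `d̄_M = inf ∫ d₀` and `ρ̄ = inf ∫ ρ` (for any
metric `ρ` compatible with the product topology, expressed by `hcompat₁`,
`hcompat₂`) are uniformly equivalent on shift-invariant measures on `A^ℤ`. -/
theorem stmt17 {A : Type*} [Fintype A] [DecidableEq A]
    [MeasurableSpace A] [MeasurableSingletonClass A]
    (ρ : (ℤ → A) → (ℤ → A) → ℝ)
    (hρ_nonneg : ∀ x y, 0 ≤ ρ x y)
    (hρ_eq : ∀ x y, ρ x y = 0 ↔ x = y)
    (hρ_symm : ∀ x y, ρ x y = ρ y x)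
    (hρ_tri : ∀ x y z, ρ x z ≤ ρ x y + ρ y z)
    (hcompat₁ : ∀ ε > (0 : ℝ), ∃ N : ℕ, ∀ x y : ℤ → A,
      (∀ i : ℤ, |i| ≤ (N : ℤ) → x i = y i) → ρ x y < ε)
    (hcompat₂ : ∀ N : ℕ, ∃ ε > (0 : ℝ), ∀ x y : ℤ → A,
      ρ x y < ε → ∀ i : ℤ, |i| ≤ (N : ℤ) → x i = y i) :
    ∀ ε > (0 : ℝ), ∃ δ > (0 : ℝ), ∀ μ ν : Measure (ℤ → A),
      IsProbabilityMeasure μ → IsProbabilityMeasure ν →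
      Measure.map shift μ = μ → Measure.map shift ν = ν →
      (costInf dZero μ ν < δ → costInf ρ μ ν < ε) ∧
      (costInf ρ μ ν < δ → costInf dZero μ ν < ε) := by
  intro ε hε
  rcases isEmpty_or_nonempty A with hA | hA
  · refine ⟨1, one_pos, fun μ ν hμ hν _ _ => ?_⟩
    exfalso
    haveI : IsEmpty (ℤ → A) := ⟨fun f => hA.false (f 0)⟩
    have h1 : μ Set.univ = 1 := hμ.measure_univ
    rw [Set.univ_eq_empty_iff.mpr inferInstance, measure_empty] at h1
    exact zero_ne_one h1
  · obtain ⟨a0⟩ := hA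
    obtain ⟨N, hN⟩ := hcompat₁ (ε / 2) (by positivity)
    obtain ⟨ε₀, hε₀, hε₀'⟩ := hcompat₂ 0
    set W : Finset ℤ := Finset.Icc (-(N : ℤ)) (N : ℤ) with hW
    have hWmem : ∀ i : ℤ, |i| ≤ (N : ℤ) ↔ i ∈ W := fun i => by
      rw [hW, Finset.mem_Icc]; exact abs_le
    haveI : Nonempty (W → A) := ⟨fun _ => a0⟩
    set e : (W → A) → (ℤ → A) := fun u i => if h : i ∈ W then u ⟨i, h⟩ else a0 with he
    have hagree : ∀ x : ℤ → A, ρ x (e (fun i : W => x i)) < ε / 2 := by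
      intro x
      refine hN x _ fun i hi => ?_
      rw [he]; simp [(hWmem i).mp hi]
    set S : ℝ := Finset.univ.sup' Finset.univ_nonempty
        (fun q : (W → A) × (W → A) => ρ (e q.1) (e q.2)) with hS
    have hS0 : 0 ≤ S := by
      have h00 : ρ (e (fun _ => a0)) (e (fun _ => a0)) = 0 := (hρ_eq _ _).mpr rfl
      have hle := Finset.le_sup' (f := fun q : (W → A) × (W → A) => ρ (e q.1) (e q.2))
        (Finset.mem_univ ((fun _ => a0), (fun _ => a0)))
      rw [← hS] at hle
      simp only at hle
      linarith [hle, h00]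
    set C : ℝ := ε + S with hC
    have hCpos : 0 < C := by rw [hC]; linarith
    have hCb : ∀ x y, ρ x y ≤ C := by
      intro x y
      have h1 := hagree x
      have h2 := hagree y
      have h3 := Finset.le_sup' (f := fun q : (W → A) × (W → A) => ρ (e q.1) (e q.2))
        (Finset.mem_univ ((fun i : W => x i), (fun i : W => y i)))
      rw [← hS] at h3
      simp only at h3
      have t1 := hρ_tri x (e fun i : W => x i) y
      have t2 := hρ_tri (e fun i : W => x i) (e fun i : W => y i) y
      have s2 := hρ_symm (e fun i : W => y i) y
      rw [hC]; linarith
    have h0W : (0 : ℤ) ∈ W := by rw [hW, Finset.mem_Icc]; constructor <;> omega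
    set K : ℝ := (W.card : ℝ) with hK
    have hKpos : 0 < K := by
      rw [hK]
      exact_mod_cast Finset.card_pos.mpr ⟨0, h0W⟩
    have hden : 0 < 2 * K * C := mul_pos (mul_pos two_pos hKpos) hCpos
    clear_value e S C K
    refine ⟨min (ε / (2 * K * C)) (ε * ε₀ / 2),
      lt_min (div_pos hε hden) (div_pos (mul_pos hε hε₀) two_pos), ?_⟩
    intro μ ν hμ hν hμs hνs
    haveI := hμ; haveI := hν
    have hprod := prod_joining hμ hν hμs hνs
    have hbdd : ∀ c : (ℤ → A) → (ℤ → A) → ℝ, (∀ x y, 0 ≤ c x y) →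
        BddBelow {r : ℝ | ∃ lam, IsShiftJoining μ ν lam ∧ r = ∫ p, c p.1 p.2 ∂lam} := by
      intro c hc
      refine ⟨0, fun r hr => ?_⟩
      obtain ⟨lam, hlam, rfl⟩ := hr
      exact integral_nonneg fun p => hc _ _
    have hnonempty : ∀ c : (ℤ → A) → (ℤ → A) → ℝ,
        Set.Nonempty {r : ℝ | ∃ lam, IsShiftJoining μ ν lam ∧ r = ∫ p, c p.1 p.2 ∂lam} :=
      fun c => ⟨_, ⟨μ.prod ν, hprod, rfl⟩⟩
    constructor
    · intro h1
      obtain ⟨r, hrmem, hr⟩ := exists_lt_of_csInf_lt (hnonempty dZero) h1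
      obtain ⟨lam, hlam, rfl⟩ := hrmem
      haveI := hlam.1
      have hint0 : ∫ p, dZero p.1 p.2 ∂lam = ∫ p, ccost 0 p ∂lam := rfl
      have hcc0 : ∫ p, ccost (0 : ℤ) p ∂lam < min (ε / (2 * K * C)) (ε * ε₀ / 2) := by
        rw [← hint0]; exact hr
      have hpt : ∀ p : (ℤ → A) × (ℤ → A), ρ p.1 p.2 ≤ ε / 2 + C * ∑ i ∈ W, ccost i p := by
        intro p
        have hsum0 : 0 ≤ ∑ i ∈ W, ccost i p := Finset.sum_nonneg fun i _ => ccost_nonneg i p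
        have hmulnn : 0 ≤ C * ∑ i ∈ W, ccost i p := mul_nonneg hCpos.le hsum0
        by_cases hall : ∀ i ∈ W, p.1 i = p.2 i
        · have : ρ p.1 p.2 < ε / 2 := hN _ _ fun i hi => hall i ((hWmem i).mp hi)
          linarith
        · push_neg at hall
          obtain ⟨i, hiW, hine⟩ := hall
          have h1sum : (1 : ℝ) ≤ ∑ i ∈ W, ccost i p := by
            have hs := Finset.single_le_sum (f := fun i => ccost i p)
              (fun j _ => ccost_nonneg j p) hiW
            have hcc : ccost i p = 1 := by simp [ccost, hine]
            linarith
          have hρC : ρ p.1 p.2 ≤ C := hCb _ _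
          have := mul_le_mul_of_nonneg_left h1sum hCpos.le
          linarith
      have hint_cc : ∀ i : ℤ, Integrable (ccost i) lam := fun i => ccost_integrable i lam
      have hsum_int : Integrable (fun p => ∑ i ∈ W, ccost i p) lam :=
        integrable_finset_sum W fun i _ => hint_cc i
      have hg_int : Integrable (fun p => ε / 2 + C * ∑ i ∈ W, ccost i p) lam :=
        (integrable_const _).add (hsum_int.const_mul C)
      have hmono : ∫ p, ρ p.1 p.2 ∂lam ≤ ∫ p, (ε / 2 + C * ∑ i ∈ W, ccost i p) ∂lam :=
        integral_mono_of_nonneg (Filter.Eventually.of_forall fun p => hρ_nonneg _ _)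
          hg_int (Filter.Eventually.of_forall hpt)
      have hcalc : ∫ p, (ε / 2 + C * ∑ i ∈ W, ccost i p) ∂lam
          = ε / 2 + C * (K * ∫ p, ccost (0 : ℤ) p ∂lam) := by
        rw [integral_add (integrable_const _) (hsum_int.const_mul C), integral_const_mul,
          integral_finset_sum W fun i _ => hint_cc i,
          Finset.sum_congr rfl fun i _ => integral_ccost_shift hlam i,
          Finset.sum_const, nsmul_eq_mul, integral_const]
        simp [measure_univ, hK]
      have hfin : ∫ p, ρ p.1 p.2 ∂lam < ε := by
        have hlt : ∫ p, ccost (0 : ℤ) p ∂lam < ε / (2 * K * C) :=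
          lt_of_lt_of_le hcc0 (min_le_left _ _)
        have hmul : C * (K * ∫ p, ccost (0 : ℤ) p ∂lam) < C * (K * (ε / (2 * K * C))) :=
          mul_lt_mul_of_pos_left (mul_lt_mul_of_pos_left hlt hKpos) hCpos
        have heqq : C * (K * (ε / (2 * K * C))) = ε / 2 := by
          field_simp
        rw [hcalc] at hmono
        linarith
      exact lt_of_le_of_lt (csInf_le (hbdd ρ hρ_nonneg) ⟨lam, hlam, rfl⟩) hfin
    · intro h2
      obtain ⟨r, hrmem, hr⟩ := exists_lt_of_csInf_lt (hnonempty ρ) h2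
      obtain ⟨lam, hlam, rfl⟩ := hrmem
      haveI := hlam.1
      have hρ_meas := rho_pair_measurable ρ hρ_nonneg hρ_symm hρ_tri hcompat₁ a0
      have hρ_int : Integrable (fun p : (ℤ → A) × (ℤ → A) => ρ p.1 p.2) lam := by
        refine (integrable_const C).mono' hρ_meas.aestronglyMeasurable ?_
        filter_upwards with p
        rw [Real.norm_eq_abs, abs_of_nonneg (hρ_nonneg _ _)]
        exact hCb _ _
      have hpt2 : ∀ p : (ℤ → A) × (ℤ → A), ε₀ * ccost 0 p ≤ ρ p.1 p.2 := by
        intro p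
        by_cases h : p.1 0 = p.2 0
        · simp only [ccost, if_pos h, mul_zero]
          exact hρ_nonneg _ _
        · have hge : ε₀ ≤ ρ p.1 p.2 := by
            by_contra hlt
            push_neg at hlt
            exact h (hε₀' _ _ hlt 0 (by simp))
          simp only [ccost, if_neg h, mul_one]
          exact hge
      have hmono2 : ε₀ * ∫ p, ccost (0 : ℤ) p ∂lam ≤ ∫ p, ρ p.1 p.2 ∂lam := by
        rw [← integral_const_mul]
        exact integral_mono ((ccost_integrable 0 lam).const_mul ε₀) hρ_int hpt2
      have hfin2 : ∫ p, ccost (0 : ℤ) p ∂lam < ε := by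
        have hδ : ∫ p, ρ p.1 p.2 ∂lam < ε * ε₀ / 2 := lt_of_lt_of_le hr (min_le_right _ _)
        have hchain := lt_of_le_of_lt hmono2 hδ
        nlinarith [mul_pos hε hε₀, hε₀,
          integral_nonneg (μ := lam) (f := fun p => ccost (A := A) 0 p) fun p => ccost_nonneg (A := A) 0 p]
      have hd0 : (∫ p, dZero p.1 p.2 ∂lam) = ∫ p, ccost (0 : ℤ) p ∂lam := rfl
      refine lt_of_le_of_lt (csInf_le (hbdd dZero fun x y => ?_) ⟨lam, hlam, rfl⟩) ?_
      · unfold dZero; split <;> norm_num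
      · rw [hd0]; exact hfin2
end

section
/- Let (X,T) be a topological dynamical system and let 𝒞 be a class of measure-preserving systems. Suppose (μ_m) is a sequence of ergodic T-invariant measures each of which is disjoint from every ergodic member of 𝒞 (i.e., the product measure is the only joining), and ρ̄(μ_m, μ) → 0 for some μ ∈ M_T(X). Then μ is also disjoint from every ergodic member of 𝒞: for every strictly ergodic system (Y,S) with unique invariant measure ν isomorphic to a member of 𝒞, every ergodic joining λ of μ and ν equals μ × ν. -/
open MeasureTheory Filter
open ProbabilityTheory Set Metric
open scoped ENNReal

lemma nonempty_of_prob {α : Type*} [MeasurableSpace α] (μ : Measure α)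
    [IsProbabilityMeasure μ] : Nonempty α := by
  by_contra h
  rw [not_nonempty_iff] at h
  have h1 : μ Set.univ = 1 := measure_univ
  rw [Set.univ_eq_empty_iff.mpr h, measure_empty] at h1
  exact zero_ne_one h1

lemma ext_prod_rect {α β : Type*} [MeasurableSpace α] [MeasurableSpace β]
    {m1 m2 : Measure (α × β)} [IsFiniteMeasure m1] [IsFiniteMeasure m2]
    (h : ∀ s t, MeasurableSet s → MeasurableSet t → m1 (s ×ˢ t) = m2 (s ×ˢ t)) : m1 = m2 := by
  refine MeasureTheory.ext_of_generate_finite _ generateFrom_prod.symm isPiSystem_prod ?_ ?_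
  · rintro u ⟨s, hs, t, ht, rfl⟩
    exact h s t hs ht
  · simpa [← Set.univ_prod_univ] using h univ univ MeasurableSet.univ MeasurableSet.univ

lemma ext_closed {α : Type*} [MetricSpace α] [MeasurableSpace α] [BorelSpace α]
    {m1 m2 : Measure α} [IsFiniteMeasure m1]
    (h : ∀ s, IsClosed s → m1 s = m2 s) (huniv : m1 univ = m2 univ) : m1 = m2 :=
  MeasureTheory.ext_of_generate_finite {s | IsClosed s}
    (BorelSpace.measurable_eq.trans borel_eq_generateFrom_isClosed)
    (fun s hs t ht _ => hs.inter ht) (fun s hs => h s hs) huniv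

lemma integrable_of_bounded' {α : Type*} [MeasurableSpace α] {μ : Measure α} [IsFiniteMeasure μ]
    {f : α → ℝ} {C : ℝ} (hm : Measurable f) (hb : ∀ a, |f a| ≤ C) : Integrable f μ :=
  (integrable_const C).mono' hm.aestronglyMeasurable
    (ae_of_all _ fun a => by simpa [Real.norm_eq_abs] using hb a)

lemma theta_bound {X Y : Type*}
    [MetricSpace X] [CompactSpace X] [MeasurableSpace X] [BorelSpace X]
    [MetricSpace Y] [CompactSpace Y] [MeasurableSpace Y] [BorelSpace Y]
    (T : X ≃ₜ X) (S : Y ≃ₜ Y)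
    (ν : Measure Y) [IsProbabilityMeasure ν]
    (μ' : Measure X) [IsProbabilityMeasure μ']
    (hdisj' : ∀ lam : Measure (X × Y), IsJoining2 (⇑T) (⇑S) μ' ν lam → lam = μ'.prod ν)
    (μ : Measure X) [IsProbabilityMeasure μ] (hμinv : Measure.map (⇑T) μ = μ)
    (lam : Measure (X × Y)) (hprob : IsProbabilityMeasure lam)
    (hinv : Measure.map (Prod.map (⇑T) (⇑S)) lam = lam)
    (hfst : Measure.map Prod.fst lam = μ) (hsnd : Measure.map Prod.snd lam = ν)
    (σ0 : Measure (X × X)) (hσ0 : IsJoining (⇑T) μ' μ σ0)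
    (f : X → ℝ) (K : ℝ) (hK : 0 ≤ K) (hfc : Continuous f) (hfb : ∀ a, |f a| ≤ 1)
    (hfl : ∀ a b, |f a - f b| ≤ K * dist a b)
    (g : Y → ℝ) (hgm : Measurable g) (hgb : ∀ y, |g y| ≤ 1) :
    |(∫ p, f p.1 * g p.2 ∂lam) - (∫ x, f x ∂μ) * ∫ y, g y ∂ν|
      ≤ 2 * K * ∫ p, dist p.1 p.2 ∂σ0 := by
  classical
  haveI : Nonempty X := nonempty_of_prob μ
  haveI : Nonempty Y := nonempty_of_prob ν
  haveI := hprob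
  obtain ⟨hσP, hσinv0, hσfst0, hσsnd0⟩ := hσ0
  haveI := hσP
  have hT : Measurable (⇑T) := T.continuous.measurable
  have hT' : Measurable (⇑T.symm) := T.symm.continuous.measurable
  have hS : Measurable (⇑S) := S.continuous.measurable
  have hG : Measurable (Prod.map (⇑T) (⇑S)) := hT.prodMap hS
  have hTT : Measurable (Prod.map (⇑T) (⇑T)) := hT.prodMap hT
  -- the swapped joining `σ`, with coordinates `(x, x')`, `x ~ μ`, `x' ~ μ'`
  set σ : Measure (X × X) := Measure.map Prod.swap σ0 with hσdef
  haveI : IsProbabilityMeasure σ := Measure.isProbabilityMeasure_map measurable_swap.aemeasurable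
  have hσfst : Measure.map Prod.fst σ = μ := by
    rw [hσdef, Measure.map_map measurable_fst measurable_swap]; exact hσsnd0
  have hσsnd : Measure.map Prod.snd σ = μ' := by
    rw [hσdef, Measure.map_map measurable_snd measurable_swap]; exact hσfst0
  have hσinv : Measure.map (Prod.map (⇑T) (⇑T)) σ = σ := by
    rw [hσdef, Measure.map_map hTT measurable_swap,
      show (Prod.map (⇑T) (⇑T)) ∘ Prod.swap = Prod.swap ∘ (Prod.map (⇑T) (⇑T)) from
        funext fun p => rfl,
      ← Measure.map_map measurable_swap hTT, hσinv0]
  have hfstσ : σ.fst = μ := hσfst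
  have hfstlam : lam.fst = μ := hfst
  set κ : Kernel X X := σ.condKernel with hκdef
  set ζ : Kernel X Y := lam.condKernel with hζdef
  have hσdis : μ ⊗ₘ κ = σ := by rw [hκdef, ← hfstσ]; exact σ.disintegrate _
  have hlamdis : μ ⊗ₘ ζ = lam := by rw [hζdef, ← hfstlam]; exact lam.disintegrate _
  set θ : Measure (X × (X × Y)) := μ ⊗ₘ (κ ×ₖ ζ) with hθdef
  haveI : IsProbabilityMeasure θ := by rw [hθdef]; infer_instance
  have hπ12 : Measurable (fun p : X × (X × Y) => (p.1, p.2.1)) :=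
    measurable_fst.prodMk (measurable_fst.comp measurable_snd)
  have hπ13 : Measurable (fun p : X × (X × Y) => (p.1, p.2.2)) :=
    measurable_fst.prodMk (measurable_snd.comp measurable_snd)
  -- marginals of θ
  have hA1 : Measure.map (fun p : X × (X × Y) => (p.1, p.2.1)) θ = σ := by
    rw [← hσdis]
    haveI : IsProbabilityMeasure (Measure.map (fun p : X × (X × Y) => (p.1, p.2.1)) θ) :=
      Measure.isProbabilityMeasure_map hπ12.aemeasurable
    refine ext_prod_rect fun s t hs ht => ?_
    rw [Measure.map_apply hπ12 (hs.prod ht)]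
    have hpre : (fun p : X × (X × Y) => (p.1, p.2.1)) ⁻¹' (s ×ˢ t) = s ×ˢ (t ×ˢ univ) := by
      ext p; simp [Set.mem_prod]
    rw [hpre, hθdef, Measure.compProd_apply_prod hs (ht.prod MeasurableSet.univ),
      Measure.compProd_apply_prod hs ht]
    refine setLIntegral_congr_fun hs (fun x _ => ?_)
    rw [Kernel.prod_apply, Measure.prod_prod, measure_univ, mul_one]
  have hA2 : Measure.map (fun p : X × (X × Y) => (p.1, p.2.2)) θ = lam := by
    rw [← hlamdis]
    haveI : IsProbabilityMeasure (Measure.map (fun p : X × (X × Y) => (p.1, p.2.2)) θ) :=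
      Measure.isProbabilityMeasure_map hπ13.aemeasurable
    refine ext_prod_rect fun s t hs ht => ?_
    rw [Measure.map_apply hπ13 (hs.prod ht)]
    have hpre : (fun p : X × (X × Y) => (p.1, p.2.2)) ⁻¹' (s ×ˢ t) = s ×ˢ (univ ×ˢ t) := by
      ext p; simp [Set.mem_prod]
    rw [hpre, hθdef, Measure.compProd_apply_prod hs (MeasurableSet.univ.prod ht),
      Measure.compProd_apply_prod hs ht]
    refine setLIntegral_congr_fun hs (fun x _ => ?_)
    rw [Kernel.prod_apply, Measure.prod_prod, measure_univ, one_mul]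
  -- invariance of θ
  set F : X × (X × Y) → X × (X × Y) := Prod.map (⇑T) (Prod.map (⇑T) (⇑S)) with hFdef
  have hF : Measurable F := hT.prodMap hG
  haveI hmk : IsMarkovKernel (κ.map (⇑T)) := Kernel.IsMarkovKernel.map κ hT
  haveI hmz : IsMarkovKernel (ζ.map (⇑S)) := Kernel.IsMarkovKernel.map ζ hS
  set κ' : Kernel X X := (κ.map (⇑T)).comap (⇑T.symm) hT' with hκ'def
  set ζ' : Kernel X Y := (ζ.map (⇑S)).comap (⇑T.symm) hT' with hζ'def
  haveI : IsMarkovKernel κ' := by rw [hκ'def]; infer_instance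
  haveI : IsMarkovKernel ζ' := by rw [hζ'def]; infer_instance
  have transfer : ∀ (h : X → ℝ≥0∞), Measurable h → ∀ s : Set X, MeasurableSet s →
      ∫⁻ x in s, h (T.symm x) ∂μ = ∫⁻ x in (⇑T) ⁻¹' s, h x ∂μ := by
    intro h hh s hs
    have h1 : ∫⁻ x in s, h (T.symm x) ∂μ = ∫⁻ x in s, h (T.symm x) ∂(Measure.map (⇑T) μ) := by
      rw [hμinv]
    rw [h1, setLIntegral_map (f := fun x => h (T.symm x)) hs (hh.comp hT') hT]
    refine setLIntegral_congr_fun (hs.preimage hT) (fun x _ => ?_)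
    rw [Homeomorph.symm_apply_apply]
  have hθinv : Measure.map F θ = θ := by
    haveI : IsProbabilityMeasure (Measure.map F θ) := Measure.isProbabilityMeasure_map hF.aemeasurable
    have step2 : μ ⊗ₘ κ' = σ := by
      refine ext_prod_rect fun s t hs ht => ?_
      rw [Measure.compProd_apply_prod hs ht]
      have e1 : ∀ x, κ' x t = κ (T.symm x) ((⇑T) ⁻¹' t) := fun x => by
        rw [hκ'def, Kernel.comap_apply, Kernel.map_apply _ hT, Measure.map_apply hT ht]
      calc ∫⁻ x in s, κ' x t ∂μ
          = ∫⁻ x in s, κ (T.symm x) ((⇑T) ⁻¹' t) ∂μ :=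
            setLIntegral_congr_fun hs (fun x _ => e1 x)
        _ = ∫⁻ x in (⇑T) ⁻¹' s, κ x ((⇑T) ⁻¹' t) ∂μ :=
            transfer _ (Kernel.measurable_coe _ (ht.preimage hT)) s hs
        _ = (μ ⊗ₘ κ) (((⇑T) ⁻¹' s) ×ˢ ((⇑T) ⁻¹' t)) :=
            (Measure.compProd_apply_prod (hs.preimage hT) (ht.preimage hT)).symm
        _ = σ ((Prod.map (⇑T) (⇑T)) ⁻¹' (s ×ˢ t)) := by
            rw [hσdis, Set.preimage_prod_map_prod]
        _ = (Measure.map (Prod.map (⇑T) (⇑T)) σ) (s ×ˢ t) :=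
            (Measure.map_apply hTT (hs.prod ht)).symm
        _ = σ (s ×ˢ t) := by rw [hσinv]
    have step3 : μ ⊗ₘ ζ' = lam := by
      refine ext_prod_rect fun s t hs ht => ?_
      rw [Measure.compProd_apply_prod hs ht]
      have e1 : ∀ x, ζ' x t = ζ (T.symm x) ((⇑S) ⁻¹' t) := fun x => by
        rw [hζ'def, Kernel.comap_apply, Kernel.map_apply _ hS, Measure.map_apply hS ht]
      calc ∫⁻ x in s, ζ' x t ∂μ
          = ∫⁻ x in s, ζ (T.symm x) ((⇑S) ⁻¹' t) ∂μ :=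
            setLIntegral_congr_fun hs (fun x _ => e1 x)
        _ = ∫⁻ x in (⇑T) ⁻¹' s, ζ x ((⇑S) ⁻¹' t) ∂μ :=
            transfer _ (Kernel.measurable_coe _ (ht.preimage hS)) s hs
        _ = (μ ⊗ₘ ζ) (((⇑T) ⁻¹' s) ×ˢ ((⇑S) ⁻¹' t)) :=
            (Measure.compProd_apply_prod (hs.preimage hT) (ht.preimage hS)).symm
        _ = lam ((Prod.map (⇑T) (⇑S)) ⁻¹' (s ×ˢ t)) := by
            rw [hlamdis, Set.preimage_prod_map_prod]
        _ = (Measure.map (Prod.map (⇑T) (⇑S)) lam) (s ×ˢ t) :=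
            (Measure.map_apply hG (hs.prod ht)).symm
        _ = lam (s ×ˢ t) := by rw [hinv]
    have step1 : Measure.map F θ = μ ⊗ₘ (κ' ×ₖ ζ') := by
      refine ext_prod_rect fun s u hs hu => ?_
      rw [Measure.map_apply hF (hs.prod hu), hFdef, Set.preimage_prod_map_prod,
        hθdef, Measure.compProd_apply_prod (hs.preimage hT) (hu.preimage hG),
        Measure.compProd_apply_prod hs hu]
      have e2 : ∀ x, (κ' ×ₖ ζ') x u = (κ ×ₖ ζ) (T.symm x) ((Prod.map (⇑T) (⇑S)) ⁻¹' u) := by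
        intro x
        rw [Kernel.prod_apply, Kernel.prod_apply, hκ'def, hζ'def,
          Kernel.comap_apply, Kernel.comap_apply, Kernel.map_apply _ hT, Kernel.map_apply _ hS,
          Measure.map_prod_map _ _ hT hS, Measure.map_apply hG hu]
      calc ∫⁻ x in (⇑T) ⁻¹' s, (κ ×ₖ ζ) x ((Prod.map (⇑T) (⇑S)) ⁻¹' u) ∂μ
          = ∫⁻ x in s, (κ ×ₖ ζ) (T.symm x) ((Prod.map (⇑T) (⇑S)) ⁻¹' u) ∂μ :=
            (transfer _ (Kernel.measurable_coe _ (hu.preimage hG)) s hs).symm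
        _ = ∫⁻ x in s, (κ' ×ₖ ζ') x u ∂μ :=
            setLIntegral_congr_fun hs (fun x _ => (e2 x).symm)
    have hκae : ∀ᵐ x ∂μ, κ' x = κ x := by
      have huniq := eq_condKernel_of_measure_eq_compProd (ρ := σ) κ'
        (by rw [hfstσ, step2])
      rw [hfstσ] at huniq
      filter_upwards [huniq] with x hx
      rw [hx, hκdef]
    have hζae : ∀ᵐ x ∂μ, ζ' x = ζ x := by
      have huniq := eq_condKernel_of_measure_eq_compProd (ρ := lam) ζ'
        (by rw [hfstlam, step3])
      rw [hfstlam] at huniq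
      filter_upwards [huniq] with x hx
      rw [hx, hζdef]
    rw [step1, hθdef]
    refine (Measure.compProd_congr ?_).symm
    filter_upwards [hκae, hζae] with x h1 h2
    rw [Kernel.prod_apply, Kernel.prod_apply, h1, h2]
  -- the transported joining of μ' and ν
  set lm : Measure (X × Y) := Measure.map Prod.snd θ with hlmdef
  haveI : IsProbabilityMeasure lm := Measure.isProbabilityMeasure_map measurable_snd.aemeasurable
  have hlm : lm = μ'.prod ν := by
    refine hdisj' lm ⟨inferInstance, ?_, ?_, ?_⟩
    · rw [hlmdef, Measure.map_map hG measurable_snd,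
        show (Prod.map (⇑T) (⇑S)) ∘ (Prod.snd : X × (X × Y) → X × Y) = Prod.snd ∘ F from
          funext fun p => rfl,
        ← Measure.map_map measurable_snd hF, hθinv]
    · rw [hlmdef, Measure.map_map measurable_fst measurable_snd,
        show (Prod.fst ∘ (Prod.snd : X × (X × Y) → X × Y))
            = Prod.snd ∘ (fun p : X × (X × Y) => (p.1, p.2.1)) from funext fun p => rfl,
        ← Measure.map_map measurable_snd hπ12, hA1, hσsnd]
    · rw [hlmdef, Measure.map_map measurable_snd measurable_snd,
        show ((Prod.snd : X × Y → Y) ∘ (Prod.snd : X × (X × Y) → X × Y))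
            = Prod.snd ∘ (fun p : X × (X × Y) => (p.1, p.2.2)) from funext fun p => rfl,
        ← Measure.map_map measurable_snd hπ13, hA2, hsnd]
  -- integrability facts
  have hfm : Measurable f := hfc.measurable
  have hbnd : ∀ (a : X) (y : Y), |f a * g y| ≤ 1 := fun a y => by
    rw [abs_mul]
    exact mul_le_one₀ (hfb a) (abs_nonneg _) (hgb y)
  have intθ1 : Integrable (fun p : X × (X × Y) => f p.1 * g p.2.2) θ :=
    integrable_of_bounded' ((hfm.comp measurable_fst).mul
      (hgm.comp (measurable_snd.comp measurable_snd))) (fun p => hbnd _ _)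
  have intθ2 : Integrable (fun p : X × (X × Y) => f p.2.1 * g p.2.2) θ :=
    integrable_of_bounded' ((hfm.comp (measurable_fst.comp measurable_snd)).mul
      (hgm.comp (measurable_snd.comp measurable_snd))) (fun p => hbnd _ _)
  set C : ℝ := Metric.diam (univ : Set X) with hCdef
  have hdistle : ∀ a b : X, dist a b ≤ C := fun a b =>
    Metric.dist_le_diam_of_mem isBounded_of_compactSpace (mem_univ a) (mem_univ b)
  have intθd : Integrable (fun p : X × (X × Y) => K * dist p.1 p.2.1) θ :=
    integrable_of_bounded' ((measurable_fst.dist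
      (measurable_fst.comp measurable_snd)).const_mul K) (C := K * C) (fun p => by
      rw [abs_mul, abs_of_nonneg hK, abs_of_nonneg dist_nonneg]
      exact mul_le_mul_of_nonneg_left (hdistle _ _) hK)
  have intσ1 : Integrable (fun p : X × X => f p.1) σ :=
    integrable_of_bounded' (hfm.comp measurable_fst) (fun p => hfb _)
  have intσ2 : Integrable (fun p : X × X => f p.2) σ :=
    integrable_of_bounded' (hfm.comp measurable_snd) (fun p => hfb _)
  have intσd : Integrable (fun p : X × X => K * dist p.1 p.2) σ :=
    integrable_of_bounded' ((measurable_fst.dist measurable_snd).const_mul K)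
      (C := K * C) (fun p => by
      rw [abs_mul, abs_of_nonneg hK, abs_of_nonneg dist_nonneg]
      exact mul_le_mul_of_nonneg_left (hdistle _ _) hK)
  have intg : Integrable g ν := integrable_of_bounded' hgm hgb
  -- transport of integrals
  have E1 : (∫ p, f p.1 * g p.2 ∂lam) = ∫ p, f p.1 * g p.2.2 ∂θ := by
    rw [← hA2, integral_map hπ13.aemeasurable (show Measurable fun q : X × Y => f q.1 * g q.2 from (hfm.comp measurable_fst).mul (hgm.comp measurable_snd)).aestronglyMeasurable]
  have E2 : (∫ p, f p.2.1 * g p.2.2 ∂θ) = (∫ x, f x ∂μ') * ∫ y, g y ∂ν := by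
    have h2 : (∫ p, f p.1 * g p.2 ∂lm) = (∫ x, f x ∂μ') * ∫ y, g y ∂ν := by
      rw [hlm, integral_prod_mul]
    rw [← h2, hlmdef, integral_map measurable_snd.aemeasurable (show Measurable fun q : X × Y => f q.1 * g q.2 from (hfm.comp measurable_fst).mul (hgm.comp measurable_snd)).aestronglyMeasurable]
  have E3 : (∫ x, f x ∂μ) = ∫ p, f p.1 ∂σ := by
    rw [← hσfst, integral_map measurable_fst.aemeasurable hfm.aestronglyMeasurable]
  have E4 : (∫ x, f x ∂μ') = ∫ p, f p.2 ∂σ := by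
    rw [← hσsnd, integral_map measurable_snd.aemeasurable hfm.aestronglyMeasurable]
  have E5 : (∫ p, dist p.1 p.2 ∂σ) = ∫ p, dist p.1 p.2.1 ∂θ := by
    rw [← hA1, integral_map hπ12.aemeasurable
      (show Measurable fun q : X × X => dist q.1 q.2 from
        measurable_fst.dist measurable_snd).aestronglyMeasurable]
  have E6 : (∫ p, dist p.1 p.2 ∂σ) = ∫ p, dist p.1 p.2 ∂σ0 := by
    rw [hσdef, integral_map measurable_swap.aemeasurable
      (show Measurable fun q : X × X => dist q.1 q.2 from
        measurable_fst.dist measurable_snd).aestronglyMeasurable]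
    exact integral_congr_ae (ae_of_all _ fun p => dist_comm _ _)
  have hdist0 : (0:ℝ) ≤ ∫ p, dist p.1 p.2 ∂σ0 := integral_nonneg fun p => dist_nonneg
  -- bound 1
  have B1 : |(∫ p, f p.1 * g p.2.2 ∂θ) - ∫ p, f p.2.1 * g p.2.2 ∂θ|
      ≤ K * ∫ p, dist p.1 p.2 ∂σ0 := by
    rw [← integral_sub intθ1 intθ2]
    have hb : ∀ p : X × (X × Y), |f p.1 * g p.2.2 - f p.2.1 * g p.2.2|
        ≤ K * dist p.1 p.2.1 := fun p => by
      rw [← sub_mul, abs_mul]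
      calc |f p.1 - f p.2.1| * |g p.2.2| ≤ (K * dist p.1 p.2.1) * 1 :=
            mul_le_mul (hfl _ _) (hgb _) (abs_nonneg _)
              (mul_nonneg hK dist_nonneg)
        _ = K * dist p.1 p.2.1 := mul_one _
    calc |∫ p, (f p.1 * g p.2.2 - f p.2.1 * g p.2.2) ∂θ|
        ≤ ∫ p, |f p.1 * g p.2.2 - f p.2.1 * g p.2.2| ∂θ := by
          simpa [Real.norm_eq_abs] using
            norm_integral_le_integral_norm (fun p : X × (X × Y) =>
              f p.1 * g p.2.2 - f p.2.1 * g p.2.2) (μ := θ)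
      _ ≤ ∫ p, K * dist p.1 p.2.1 ∂θ :=
          integral_mono (intθ1.sub intθ2).abs intθd hb
      _ = K * ∫ p, dist p.1 p.2.1 ∂θ := integral_const_mul _ _
      _ = K * ∫ p, dist p.1 p.2 ∂σ0 := by rw [← E5, E6]
  -- bound 2
  have B2 : |(∫ x, f x ∂μ') - ∫ x, f x ∂μ| ≤ K * ∫ p, dist p.1 p.2 ∂σ0 := by
    rw [E3, E4, ← integral_sub intσ2 intσ1]
    have hb : ∀ p : X × X, |f p.2 - f p.1| ≤ K * dist p.1 p.2 := fun p => by
      calc |f p.2 - f p.1| ≤ K * dist p.2 p.1 := hfl _ _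
        _ = K * dist p.1 p.2 := by rw [dist_comm]
    calc |∫ p, (f p.2 - f p.1) ∂σ| ≤ ∫ p, |f p.2 - f p.1| ∂σ := by
          simpa [Real.norm_eq_abs] using
            norm_integral_le_integral_norm (fun p : X × X => f p.2 - f p.1) (μ := σ)
      _ ≤ ∫ p, K * dist p.1 p.2 ∂σ := integral_mono (intσ2.sub intσ1).abs intσd hb
      _ = K * ∫ p, dist p.1 p.2 ∂σ := integral_const_mul _ _
      _ = K * ∫ p, dist p.1 p.2 ∂σ0 := by rw [E6]
  have hIν : |∫ y, g y ∂ν| ≤ 1 := by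
    calc |∫ y, g y ∂ν| ≤ ∫ y, |g y| ∂ν := by
          simpa [Real.norm_eq_abs] using norm_integral_le_integral_norm g (μ := ν)
      _ ≤ ∫ _, (1:ℝ) ∂ν := integral_mono intg.abs (integrable_const 1) (fun y => hgb y)
      _ = 1 := by simp
  -- assemble
  have hsplit : (∫ p, f p.1 * g p.2 ∂lam) - (∫ x, f x ∂μ) * ∫ y, g y ∂ν
      = ((∫ p, f p.1 * g p.2.2 ∂θ) - ∫ p, f p.2.1 * g p.2.2 ∂θ)
        + ((∫ x, f x ∂μ') - ∫ x, f x ∂μ) * ∫ y, g y ∂ν := by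
    rw [E1, E2]; ring
  rw [hsplit]
  calc |((∫ p, f p.1 * g p.2.2 ∂θ) - ∫ p, f p.2.1 * g p.2.2 ∂θ)
        + ((∫ x, f x ∂μ') - ∫ x, f x ∂μ) * ∫ y, g y ∂ν|
      ≤ |(∫ p, f p.1 * g p.2.2 ∂θ) - ∫ p, f p.2.1 * g p.2.2 ∂θ|
        + |(∫ x, f x ∂μ') - ∫ x, f x ∂μ| * |∫ y, g y ∂ν| := by
        rw [← abs_mul]; exact abs_add_le _ _
    _ ≤ K * (∫ p, dist p.1 p.2 ∂σ0) + (K * ∫ p, dist p.1 p.2 ∂σ0) * 1 := by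
        refine add_le_add B1 (mul_le_mul B2 hIν (abs_nonneg _) ?_)
        exact mul_nonneg hK hdist0
    _ = 2 * K * ∫ p, dist p.1 p.2 ∂σ0 := by ring

lemma key_integral {X Y : Type*}
    [MetricSpace X] [CompactSpace X] [MeasurableSpace X] [BorelSpace X]
    [MetricSpace Y] [CompactSpace Y] [MeasurableSpace Y] [BorelSpace Y]
    (T : X ≃ₜ X) (S : Y ≃ₜ Y)
    (ν : Measure Y) [IsProbabilityMeasure ν]
    (μm : ℕ → Measure X) (hm : ∀ m, IsProbabilityMeasure (μm m))
    (herg : ∀ m, Ergodic (⇑T) (μm m))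
    (hdisj : ∀ m, ∀ lam : Measure (X × Y),
      IsJoining2 (⇑T) (⇑S) (μm m) ν lam → lam = (μm m).prod ν)
    (μ : Measure X) [IsProbabilityMeasure μ] (hμinv : Measure.map (⇑T) μ = μ)
    (hconv : Tendsto (fun m => rhoBar (⇑T) (μm m) μ) atTop (nhds 0))
    (lam : Measure (X × Y)) (hprob : IsProbabilityMeasure lam)
    (hinv : Measure.map (Prod.map (⇑T) (⇑S)) lam = lam)
    (hfst : Measure.map Prod.fst lam = μ) (hsnd : Measure.map Prod.snd lam = ν)
    (f : X → ℝ) (K : ℝ) (hK : 0 ≤ K) (hfc : Continuous f) (hfb : ∀ a, |f a| ≤ 1)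
    (hfl : ∀ a b, |f a - f b| ≤ K * dist a b)
    (g : Y → ℝ) (hgm : Measurable g) (hgb : ∀ y, |g y| ≤ 1) :
    (∫ p, f p.1 * g p.2 ∂lam) = (∫ x, f x ∂μ) * ∫ y, g y ∂ν := by
  have hT : Measurable (⇑T) := T.continuous.measurable
  set D : ℝ := (∫ p, f p.1 * g p.2 ∂lam) - (∫ x, f x ∂μ) * ∫ y, g y ∂ν with hDdef
  have hD : ∀ ε > 0, |D| ≤ ε := by
    intro ε hε
    set ε' : ℝ := ε / (2 * K + 1) with hε'def
    have hε' : 0 < ε' := div_pos hε (by linarith)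
    obtain ⟨m, hm2⟩ := (hconv.eventually_lt_const hε').exists
    haveI := hm m
    have hprodJ : IsJoining (⇑T) (μm m) μ ((μm m).prod μ) := by
      refine ⟨inferInstance, ?_, ?_, ?_⟩
      · rw [← Measure.map_prod_map _ _ hT hT, (herg m).toMeasurePreserving.map_eq, hμinv]
      · rw [Measure.map_fst_prod]; simp
      · rw [Measure.map_snd_prod]; simp
    have hne : {r : ℝ | ∃ σ' : Measure (X × X),
        IsJoining (⇑T) (μm m) μ σ' ∧ r = ∫ p, dist p.1 p.2 ∂σ'}.Nonempty :=
      ⟨_, ⟨_, hprodJ, rfl⟩⟩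
    have hbdd : BddBelow {r : ℝ | ∃ σ' : Measure (X × X),
        IsJoining (⇑T) (μm m) μ σ' ∧ r = ∫ p, dist p.1 p.2 ∂σ'} := by
      refine ⟨0, ?_⟩
      rintro r ⟨σ', _, rfl⟩
      exact integral_nonneg fun p => dist_nonneg
    rw [rhoBar] at hm2
    obtain ⟨r, ⟨σ0, hσ0, rfl⟩, hrlt⟩ := (csInf_lt_iff hbdd hne).mp hm2
    have hbound := theta_bound T S ν (μm m) (hdisj m) μ hμinv lam hprob hinv hfst hsnd
      σ0 hσ0 f K hK hfc hfb hfl g hgm hgb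
    calc |D| ≤ 2 * K * ∫ p, dist p.1 p.2 ∂σ0 := hbound
      _ ≤ 2 * K * ε' := by
          refine mul_le_mul_of_nonneg_left (le_of_lt hrlt) (by linarith)
      _ ≤ ε := by
          rw [hε'def]
          have h1 : (0:ℝ) < 2 * K + 1 := by linarith
          rw [mul_div_assoc', div_le_iff₀ h1]
          nlinarith
  have hD0 : D = 0 := by
    by_contra h
    have habs : 0 < |D| := abs_pos.mpr h
    have := hD (|D| / 2) (by linarith)
    linarith
  have := sub_eq_zero.mp hD0
  linarith [this]

/-- disjointness from (strictly ergodic models of) ergodic members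
of a class is preserved under `ρ̄`-limits: if each `μ_m` is disjoint from `ν`,
the unique invariant measure of a strictly ergodic system `(Y,S)`, and
`ρ̄(μ_m,μ) → 0`, then every ergodic joining of `μ` and `ν` is the product. -/
theorem stmt19 {X Y : Type*}
    [MetricSpace X] [CompactSpace X] [MeasurableSpace X] [BorelSpace X]
    [MetricSpace Y] [CompactSpace Y] [MeasurableSpace Y] [BorelSpace Y]
    (T : X ≃ₜ X) (S : Y ≃ₜ Y)
    (ν : Measure Y) [IsProbabilityMeasure ν] (hνinv : Measure.map (⇑S) ν = ν)
    (hνerg : Ergodic (⇑S) ν)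
    (hstrict : ∀ ν' : Measure Y, IsProbabilityMeasure ν' → Measure.map (⇑S) ν' = ν' → ν' = ν)
    (μm : ℕ → Measure X) (hm : ∀ m, IsProbabilityMeasure (μm m))
    (herg : ∀ m, Ergodic (⇑T) (μm m))
    (hdisj : ∀ m, ∀ lam : Measure (X × Y),
      IsJoining2 (⇑T) (⇑S) (μm m) ν lam → lam = (μm m).prod ν)
    (μ : Measure X) [IsProbabilityMeasure μ] (hμinv : Measure.map (⇑T) μ = μ)
    (hconv : Tendsto (fun m => rhoBar (⇑T) (μm m) μ) atTop (nhds 0)) :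
    ∀ lam : Measure (X × Y), IsJoining2 (⇑T) (⇑S) μ ν lam →
      Ergodic (Prod.map (⇑T) (⇑S)) lam → lam = μ.prod ν := by

  intro lam hlam _
  obtain ⟨hprob, hinv, hfstl, hsndl⟩ := hlam
  haveI := hprob
  -- step 1: `lam (A ×ˢ B) = μ A * ν B` for closed `A` and measurable `B`
  have key : ∀ (A : Set X) (B : Set Y), IsClosed A → MeasurableSet B →
      lam (A ×ˢ B) = μ A * ν B := by
    intro A B hA hB
    rcases A.eq_empty_or_nonempty with rfl | hAne
    · simp
    set fn : ℕ → X → ℝ := fun n x => max 0 (1 - ((n:ℝ)+1) * infDist x A) with hfndef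
    have hfc : ∀ n, Continuous (fn n) := fun n =>
      continuous_const.max (continuous_const.sub
        (continuous_const.mul (continuous_infDist_pt A)))
    have hfnn : ∀ n a, 0 ≤ fn n a := fun n a => le_max_left _ _
    have hfb : ∀ n a, |fn n a| ≤ 1 := by
      intro n a
      rw [abs_le]
      refine ⟨by linarith [hfnn n a], ?_⟩
      refine max_le (by norm_num) ?_
      have : (0:ℝ) ≤ ((n:ℝ)+1) * infDist a A :=
        mul_nonneg (by positivity) infDist_nonneg
      linarith
    have hfl : ∀ n a b, |fn n a - fn n b| ≤ ((n:ℝ)+1) * dist a b := by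
      intro n a b
      have h1 : |fn n a - fn n b|
          ≤ |(1 - ((n:ℝ)+1) * infDist a A) - (1 - ((n:ℝ)+1) * infDist b A)| := by
        have h := abs_max_sub_max_le_abs
          (1 - ((n:ℝ)+1) * infDist a A) (1 - ((n:ℝ)+1) * infDist b A) 0
        simpa [hfndef, max_comm] using h
      refine h1.trans ?_
      have h2 : (1 - ((n:ℝ)+1) * infDist a A) - (1 - ((n:ℝ)+1) * infDist b A)
          = ((n:ℝ)+1) * (infDist b A - infDist a A) := by ring
      rw [h2, abs_mul, abs_of_nonneg (by positivity : (0:ℝ) ≤ (n:ℝ)+1)]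
      refine mul_le_mul_of_nonneg_left ?_ (by positivity)
      have h3 := (lipschitz_infDist_pt A).dist_le_mul b a
      rw [Real.dist_eq] at h3
      simpa [dist_comm] using h3
    have hptX : ∀ x, Tendsto (fun n => fn n x) atTop
        (nhds (A.indicator (fun _ => (1:ℝ)) x)) := by
      intro x
      by_cases hx : x ∈ A
      · have h0 : infDist x A = 0 := infDist_zero_of_mem hx
        have hone : ∀ n, fn n x = 1 := fun n => by
          simp [hfndef, h0]
        rw [Set.indicator_of_mem hx]
        simp only [hone]
        exact tendsto_const_nhds
      · have hd : 0 < infDist x A := by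
          rcases lt_or_eq_of_le (infDist_nonneg : (0:ℝ) ≤ infDist x A) with h | h
          · exact h
          · exact absurd ((hA.mem_iff_infDist_zero hAne).mpr h.symm) hx
        rw [Set.indicator_of_notMem hx]
        obtain ⟨N, hN⟩ := exists_nat_gt (1 / infDist x A)
        refine Tendsto.congr' ?_ (tendsto_const_nhds (x := (0:ℝ)))
        filter_upwards [eventually_ge_atTop N] with n hn
        have hcast : (N:ℝ) ≤ (n:ℝ) := Nat.cast_le.mpr hn
        rw [div_lt_iff₀ hd] at hN
        have hge : (1:ℝ) ≤ ((n:ℝ)+1) * infDist x A := by nlinarith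
        show (0:ℝ) = fn n x
        rw [hfndef]
        exact (max_eq_left (by linarith)).symm
    set g : Y → ℝ := B.indicator (fun _ => (1:ℝ)) with hgdef
    have hgm : Measurable g := measurable_const.indicator hB
    have hgb : ∀ y, |g y| ≤ 1 := by
      intro y
      by_cases hy : y ∈ B <;> simp [hgdef, hy]
    -- apply the key integral identity to each `fn n`
    have Hn : ∀ n, (∫ p, fn n p.1 * g p.2 ∂lam) = (∫ x, fn n x ∂μ) * ∫ y, g y ∂ν :=
      fun n => key_integral T S ν μm hm herg hdisj μ hμinv hconv lam hprob hinv hfstl hsndl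
        (fn n) ((n:ℝ)+1) (by positivity) (hfc n) (hfb n) (hfl n) g hgm hgb
    have hgν : (∫ y, g y ∂ν) = (ν B).toReal := by
      rw [hgdef, integral_indicator_const (1:ℝ) hB]; simp [Measure.real]
    -- dominated convergence on both sides
    have Lc1 : Tendsto (fun n => ∫ p, fn n p.1 * g p.2 ∂lam) atTop
        (nhds (∫ p : X × Y, A.indicator (fun _ => (1:ℝ)) p.1 * g p.2 ∂lam)) := by
      refine tendsto_integral_of_dominated_convergence (fun _ => (1:ℝ))
        (fun n => (((hfc n).measurable.comp measurable_fst).mul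
          (hgm.comp measurable_snd)).aestronglyMeasurable)
        (integrable_const 1) (fun n => ae_of_all _ fun p => ?_)
        (ae_of_all _ fun p => (hptX p.1).mul_const (g p.2))
      rw [Real.norm_eq_abs, abs_mul]
      exact mul_le_one₀ (hfb n p.1) (abs_nonneg _) (hgb p.2)
    have Lc3 : Tendsto (fun n => ∫ x, fn n x ∂μ) atTop
        (nhds (∫ x, A.indicator (fun _ => (1:ℝ)) x ∂μ)) := by
      refine tendsto_integral_of_dominated_convergence (fun _ => (1:ℝ))
        (fun n => (hfc n).measurable.aestronglyMeasurable)
        (integrable_const 1) (fun n => ae_of_all _ fun x => ?_)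
        (ae_of_all _ fun x => hptX x)
      rw [Real.norm_eq_abs]; exact hfb n x
    have hindμ : (∫ x, A.indicator (fun _ => (1:ℝ)) x ∂μ) = (μ A).toReal := by
      rw [integral_indicator_const (1:ℝ) hA.measurableSet]; simp [Measure.real]
    have hindlam : (∫ p : X × Y, A.indicator (fun _ => (1:ℝ)) p.1 * g p.2 ∂lam)
        = (lam (A ×ˢ B)).toReal := by
      have hfun : (fun p : X × Y => A.indicator (fun _ => (1:ℝ)) p.1 * g p.2)
          = (A ×ˢ B).indicator (fun _ => (1:ℝ)) := by
        funext p
        by_cases h1 : p.1 ∈ A <;> by_cases h2 : p.2 ∈ B <;>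
          simp [hgdef, Set.indicator, h1, h2, Set.mem_prod]
      rw [hfun, integral_indicator_const (1:ℝ) (hA.measurableSet.prod hB)]; simp [Measure.real]
    -- pass to the limit
    have Lc1' : Tendsto (fun n => ∫ p, fn n p.1 * g p.2 ∂lam) atTop
        (nhds ((μ A).toReal * (ν B).toReal)) := by
      have := (Lc3.mul_const ((ν B).toReal))
      rw [hindμ] at this
      refine Tendsto.congr (fun n => ?_) this
      rw [Hn n, hgν]
    have heq : (lam (A ×ˢ B)).toReal = (μ A).toReal * (ν B).toReal := by
      rw [← hindlam]
      exact tendsto_nhds_unique Lc1 Lc1'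
    have h1 : lam (A ×ˢ B) ≠ ⊤ := measure_ne_top _ _
    have h2 : μ A * ν B ≠ ⊤ := ENNReal.mul_ne_top (measure_ne_top _ _) (measure_ne_top _ _)
    rw [← ENNReal.toReal_eq_toReal_iff' h1 h2, heq, ENNReal.toReal_mul]
  -- step 2: extend to all measurable rectangles and conclude
  refine (Measure.prod_eq fun s t hs ht => ?_).symm
  set m1 : Measure X := Measure.map Prod.fst (lam.restrict (univ ×ˢ t)) with hm1
  set m2 : Measure X := (ν t) • μ with hm2
  have hm1app : ∀ A : Set X, MeasurableSet A → m1 A = lam (A ×ˢ t) := by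
    intro A hA
    rw [hm1, Measure.map_apply measurable_fst hA,
      Measure.restrict_apply (hA.preimage measurable_fst)]
    congr 1
    ext p
    simp [Set.mem_prod]
  haveI : IsFiniteMeasure m1 := by
    constructor
    rw [hm1app univ MeasurableSet.univ]
    exact lt_of_le_of_lt (measure_mono (Set.subset_univ _)) (measure_lt_top lam univ)
  have hlamtop : lam (univ ×ˢ t) = ν t := by
    have h := Measure.map_apply (μ := lam) measurable_snd ht
    rw [hsndl] at h
    rw [h]
    congr 1
    ext p
    simp [Set.mem_prod]
  have hm1m2 : m1 = m2 := by
    refine ext_closed (fun A hA => ?_) ?_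
    · rw [hm1app A hA.measurableSet, key A t hA ht, hm2, Measure.smul_apply,
        smul_eq_mul, mul_comm]
    · rw [hm1app univ MeasurableSet.univ, hlamtop, hm2, Measure.smul_apply,
        smul_eq_mul, measure_univ, mul_one]
  have hfin : m1 s = m2 s := by rw [hm1m2]
  rw [hm1app s hs, hm2, Measure.smul_apply, smul_eq_mul] at hfin
  rw [hfin, mul_comm]
end
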